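/- arXiv:2006.02429 — 13 statements merged into one kernel-verified Lean document; each statement's English description precedes it below -/
import Mathlib

section
/- Let G be an abelian group and let S, T be nonempty subsets of G with S + T = G. If S is countable and every element of G can be written as s + t with s ∈ S, t ∈ T in only finitely many ways, then some nonempty subset of S is a minimal complement to T (i.e., there is a nonempty S₀ ⊆ S with S₀ + T = G and (S₀ \ {s}) + T ≠ G for every s ∈ S₀). -/
open Pointwise

open Classical in
noncomputable def stmt0Chain {G : Type*} [AddCommGroup G] (T : Set G) (f : ℕ → G)
    (S : Set G) : ℕ → Set G
  | 0 => S
  | n + 1 =>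
      if (stmt0Chain T f S n \ {f n}) + T = Set.univ then stmt0Chain T f S n \ {f n}
      else stmt0Chain T f S n

theorem stmt0 {G : Type*} [AddCommGroup G] (S T : Set G) (hS : S.Nonempty) (hT : T.Nonempty)
    (hST : S + T = Set.univ) (hcount : S.Countable)
    (hfin : ∀ g : G, {p : G × G | p.1 ∈ S ∧ p.2 ∈ T ∧ p.1 + p.2 = g}.Finite) :
    ∃ S₀ : Set G, S₀ ⊆ S ∧ S₀.Nonempty ∧ S₀ + T = Set.univ ∧
      ∀ s ∈ S₀, (S₀ \ {s}) + T ≠ Set.univ := by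
  classical
  obtain ⟨f, hf⟩ := hcount.exists_eq_range hS
  set A : ℕ → Set G := stmt0Chain T f S with hA
  have hstep : ∀ n, A (n + 1) ⊆ A n := by
    intro n
    show stmt0Chain T f S (n + 1) ⊆ stmt0Chain T f S n
    rw [stmt0Chain]
    split
    · exact Set.diff_subset
    · exact subset_rfl
  have hanti : ∀ m n, m ≤ n → A n ⊆ A m := by
    intro m n h
    induction n with
    | zero => simp_all
    | succ k ih =>
      rcases Nat.lt_or_ge m (k + 1) with h' | h'
      · exact (hstep k).trans (ih (Nat.lt_succ_iff.mp h'))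
      · have : m = k + 1 := le_antisymm h h'
        subst this; exact subset_rfl
  have hsub : ∀ n, A n ⊆ S := fun n => hanti 0 n (Nat.zero_le n)
  have hcov : ∀ n, A n + T = Set.univ := by
    intro n
    induction n with
    | zero => exact hST
    | succ k ih =>
      show stmt0Chain T f S (k + 1) + T = Set.univ
      rw [stmt0Chain]
      split
      · assumption
      · exact ih
  set S₀ : Set G := ⋂ n, A n with hS₀
  have hS₀sub : S₀ ⊆ S := (Set.iInter_subset A 0).trans (hsub 0)
  have hcov0 : S₀ + T = Set.univ := by
    ext g
    simp only [Set.mem_univ, iff_true]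
    by_contra hg
    have hF : {s : G | s ∈ S ∧ g - s ∈ T}.Finite := by
      apply ((hfin g).image Prod.fst).subset
      intro s hs
      exact ⟨(s, g - s), ⟨hs.1, hs.2, by rw [add_comm, sub_add_cancel]⟩, rfl⟩
    have hexn : ∀ s ∈ {s : G | s ∈ S ∧ g - s ∈ T}, ∃ n, s ∉ A n := by
      intro s hs
      by_contra hcon
      push_neg at hcon
      have hsS₀ : s ∈ S₀ := Set.mem_iInter.mpr hcon
      exact hg ⟨s, hsS₀, g - s, hs.2, by show s + (g - s) = g; rw [add_comm, sub_add_cancel]⟩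
    set nf : G → ℕ := fun s => if h : ∃ n, s ∉ A n then Nat.find h else 0 with hnf
    set N : ℕ := hF.toFinset.sup nf with hN
    have hempty : ∀ s ∈ {s : G | s ∈ S ∧ g - s ∈ T}, s ∉ A N := by
      intro s hs hsAN
      have hex := hexn s hs
      have h1 : s ∉ A (nf s) := by
        simp only [hnf, dif_pos hex]
        exact Nat.find_spec hex
      have h2 : nf s ≤ N := Finset.le_sup (hF.mem_toFinset.mpr hs)
      exact h1 (hanti (nf s) N h2 hsAN)
    have : g ∈ A N + T := (hcov N).symm ▸ Set.mem_univ g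
    obtain ⟨s, hsA, t, htT, hst⟩ := this
    exact hempty s ⟨hsub N hsA, by rw [show g - s = t by rw [← hst]; rw [add_sub_cancel_left]]; exact htT⟩ hsA
  refine ⟨S₀, hS₀sub, ?_, hcov0, ?_⟩
  · have : (0 : G) ∈ S₀ + T := hcov0.symm ▸ Set.mem_univ 0
    obtain ⟨s, hs, -⟩ := this
    exact ⟨s, hs⟩
  · intro s hsS₀ hcontra
    obtain ⟨k, hk⟩ : ∃ k, f k = s := by
      have : s ∈ Set.range f := hf ▸ hS₀sub hsS₀
      exact this
    have hsk : s ∈ A (k + 1) := Set.mem_iInter.mp hsS₀ (k + 1)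
    have hnot : ¬ ((A k \ {f k}) + T = Set.univ) := by
      intro h
      have : A (k + 1) = A k \ {f k} := by
        show stmt0Chain T f S (k + 1) = _
        rw [stmt0Chain, if_pos h]
      rw [this] at hsk
      exact hsk.2 (by simp [hk])
    apply hnot
    have hmono : S₀ \ {s} ⊆ A k \ {f k} := by
      intro x hx
      exact ⟨Set.mem_iInter.mp hx.1 k, by simpa [hk] using hx.2⟩
    have := Set.add_subset_add_right (t := T) hmono
    rw [hcontra] at this
    exact Set.eq_univ_of_univ_subset this
end

section
/- Let t_0 < t_1 < t_2 < ⋯ be elements of ℤ^d (in lexicographic order) with t_0 > 0, t_n ≥ 2t_{n-1} for all n ≥ 1, and such that some t_n has all coordinates positive. Set t_{-1} = t_{-2} = 0, I_n = X_{-t_n, -t_{n-1}} and J_n = X_{-t_n, -t_{n-1}-t_{n-2}}. Then J_n ⊆ I_n for all n ≥ 0, and ⋃_{n≥0} I_n = ℤ^d \ ℤ^d_{≥0}. -/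
open Pointwise

/-- `ℤ^d` equipped with the lexicographic order. -/
abbrev Zd (d : ℕ) := Lex (Fin d → ℤ)

/-- the value `t (n-1)` with the convention `t_{-1} = 0`. -/
def tprev {d : ℕ} (t : ℕ → Zd d) : ℕ → Zd d := fun n => if n = 0 then 0 else t (n - 1)

/-- `I_n = X_{-t_n, -t_{n-1}}`. -/
def Iset {d : ℕ} (t : ℕ → Zd d) (n : ℕ) : Set (Zd d) :=
  {x | -(t n) ≤ x} \ {x | -(tprev t n) ≤ x}

/-- `J_n = X_{-t_n, -t_{n-1} - t_{n-2}}`. -/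
def Jset {d : ℕ} (t : ℕ → Zd d) (n : ℕ) : Set (Zd d) :=
  {x | -(t n) ≤ x} \ {x | -(tprev t n + tprev t (n - 1)) ≤ x}

/-- `W = {t_n : n ≥ 0} ∪ {0} ∪ {-t_n : n ≥ 0}`. -/
def Wset {d : ℕ} (t : ℕ → Zd d) : Set (Zd d) :=
  Set.range t ∪ {0} ∪ -(Set.range t)

/-- `V = {t_n : n ≥ 0} ∪ {-t_n : n ≥ 0}`. -/
def Vset {d : ℕ} (t : ℕ → Zd d) : Set (Zd d) :=
  Set.range t ∪ -(Set.range t)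

/-- `(A, B)` is a co-minimal pair: `A + B = G` and removing any single element of
`A` or of `B` destroys the complement property. -/
def IsCoMinimalPair {G : Type*} [AddCommGroup G] (A B : Set G) : Prop :=
  A + B = Set.univ ∧
  (∀ a ∈ A, (A \ {a}) + B ≠ Set.univ) ∧
  (∀ b ∈ B, A + (B \ {b}) ≠ Set.univ)

theorem stmt2 {d : ℕ} (hd : 0 < d) (t : ℕ → Zd d) (hmono : StrictMono t)
    (hpos : 0 < t 0) (hgrow : ∀ n : ℕ, 2 • t n ≤ t (n + 1))
    (hcoord : ∃ n : ℕ, ∀ i : Fin d, 0 < ofLex (t n) i) :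
    (∀ n : ℕ, Jset t n ⊆ Iset t n) ∧
      (⋃ n : ℕ, Iset t n) = {x : Zd d | ¬ (0 : Zd d) ≤ x} := by
  have htpos : ∀ n, 0 < t n := fun n => lt_of_lt_of_le hpos (hmono.monotone (Nat.zero_le n))
  have htprev : ∀ n, 0 ≤ tprev t n := by
    intro n
    unfold tprev
    split
    · exact le_refl 0
    · exact (htpos _).le
  constructor
  · intro n x hx
    refine ⟨hx.1, fun h => hx.2 ?_⟩
    calc -(tprev t n + tprev t (n - 1)) ≤ -(tprev t n) :=
          neg_le_neg (le_add_of_nonneg_right (htprev (n - 1)))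
      _ ≤ x := h
  · obtain ⟨N, hN⟩ := hcoord
    -- growth : 2^k • t N ≤ t (N + k)
    have hgrowth : ∀ k : ℕ, (2 ^ k : ℕ) • t N ≤ t (N + k) := by
      intro k
      induction k with
      | zero => simp
      | succ k ih =>
        have h1 : (2 ^ (k+1) : ℕ) • t N = 2 • ((2 ^ k : ℕ) • t N) := by
          rw [← smul_assoc]; norm_num [pow_succ, mul_comm]
        calc (2 ^ (k+1) : ℕ) • t N = 2 • ((2 ^ k : ℕ) • t N) := h1
          _ ≤ 2 • t (N + k) := nsmul_le_nsmul_right ih 2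
          _ ≤ t (N + k + 1) := hgrow _
    -- cofinality: for every x there is n with -t n ≤ x
    have hcof : ∀ x : Zd d, ∃ n : ℕ, -(t n) ≤ x := by
      intro x
      set i0 : Fin d := ⟨0, hd⟩
      set M : ℤ := -(ofLex x i0)
      obtain ⟨k, hk⟩ : ∃ k : ℕ, M < 2 ^ k := by
        rcases le_or_gt M 0 with h | h
        · exact ⟨0, by simpa using h.trans_lt one_pos⟩
        · refine ⟨M.toNat, ?_⟩
          have : (M.toNat : ℤ) < 2 ^ M.toNat := by
            exact_mod_cast Nat.lt_two_pow_self (n := M.toNat)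
          rwa [Int.toNat_of_nonneg h.le] at this
      refine ⟨N + k, le_trans (neg_le_neg (hgrowth k)) ?_⟩
      have hlt : -((2 ^ k : ℕ) • t N) < x := by
        refine ⟨i0, fun j hj => absurd hj (by simp [i0, Fin.lt_def]), ?_⟩
        show -((2 ^ k : ℕ) • ofLex (t N) i0) < ofLex x i0
        have h1 : (1 : ℤ) ≤ ofLex (t N) i0 := hN i0
        have h2 : (2 ^ k : ℤ) ≤ (2 ^ k : ℕ) • ofLex (t N) i0 := by
          rw [nsmul_eq_mul]
          push_cast
          nlinarith [pow_pos (by norm_num : (0:ℤ) < 2) k]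
        have : -(ofLex x i0) < (2 ^ k : ℤ) := hk
        linarith
      exact hlt.le
    ext x
    simp only [Set.mem_iUnion, Set.mem_setOf_eq]
    constructor
    · rintro ⟨n, hx1, hx2⟩
      intro h0
      exact hx2 (le_trans (by simpa using neg_nonpos_of_nonneg (htprev n)) h0)
    · intro hx
      have hex : ∃ n, -(t n) ≤ x := hcof x
      classical
      refine ⟨Nat.find hex, Nat.find_spec hex, ?_⟩
      intro habs
      cases hn : Nat.find hex with
      | zero =>
        rw [hn] at habs
        exact hx (by simpa [tprev] using habs)
      | succ m =>
        have hmin : ¬ -(t m) ≤ x := Nat.find_min hex (by omega)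
        rw [hn] at habs
        simp only [tprev, Nat.succ_ne_zero, if_false, Nat.succ_sub_one] at habs
        exact hmin habs
end

section
/- With the notation above (t_0 > 0, t_n ≥ 2t_{n-1}, some t_n with all coordinates positive, W = {±t_n : n ≥ 0} ∪ {0}, I_n = X_{-t_n,-t_{n-1}}, J_n = X_{-t_n,-t_{n-1}-t_{n-2}}), for every n ≥ 0 the set (⋃_{m ≥ n+2} J_m) + W contains no point of I_n, and the set J_{n+1} + (W \ {t_n}) contains no point of I_n. -/
open Pointwise

noncomputable instance ZdLinearOrder (d : ℕ) : LinearOrder (Zd d) :=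
  @Pi.Lex.linearOrder (Fin d) (fun _ => ℤ) _
    (Finite.to_wellFoundedLT) _

private lemma keylt {d : ℕ} {x y a w c e : Zd d} (hy : y < a) (hw : w ≤ c)
    (h : a + c ≤ e) (hx : e ≤ x) : y + w < x :=
  lt_of_lt_of_le (add_lt_add_of_lt_of_le hy hw) (h.trans hx)

private lemma w_cases {d : ℕ} {t : ℕ → Zd d} (htpos : ∀ m, 0 < t m) {w : Zd d}
    (hw : w ∈ Wset t) : (∃ k, w = t k) ∨ w ≤ 0 := by
  rcases hw with (⟨k, hk⟩ | h0) | hneg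
  · exact Or.inl ⟨k, hk.symm⟩
  · exact Or.inr (le_of_eq h0)
  · rw [Set.mem_neg] at hneg
    obtain ⟨k, hk⟩ := hneg
    right
    have : w = -(t k) := by rw [hk]; rw [neg_neg]
    rw [this]
    exact neg_nonpos.mpr (htpos k).le

theorem stmt3 {d : ℕ} (hd : 0 < d) (t : ℕ → Zd d) (hmono : StrictMono t)
    (hpos : 0 < t 0) (hgrow : ∀ n : ℕ, 2 • t n ≤ t (n + 1))
    (hcoord : ∃ n : ℕ, ∀ i : Fin d, 0 < ofLex (t n) i) :
    ∀ n : ℕ,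
      (∀ x ∈ Iset t n, x ∉ (⋃ m : ℕ, ⋃ (_ : n + 2 ≤ m), Jset t m) + Wset t) ∧
      (∀ x ∈ Iset t n, x ∉ Jset t (n + 1) + (Wset t \ {t n})) := by
  have htpos : ∀ m, 0 < t m := fun m => lt_of_lt_of_le hpos (hmono.monotone (Nat.zero_le m))
  have htprev : ∀ m, 0 ≤ tprev t m := by
    intro m
    unfold tprev
    split
    · exact le_refl 0
    · exact (htpos _).le
  have hmle : ∀ {a b : ℕ}, a ≤ b → t a ≤ t b := fun h => hmono.monotone h
  intro n
  have hx0 : ∀ x ∈ Iset t n, x < 0 := by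
    rintro x hx
    obtain ⟨hx1, hx2⟩ := hx
    simp only [Set.mem_setOf_eq] at hx2
    exact lt_of_lt_of_le (not_le.mp hx2) (neg_nonpos.mpr (htprev n))
  constructor
  · rintro x hx hmem
    obtain ⟨hx1, hx2⟩ := hx
    simp only [Set.mem_setOf_eq] at hx1
    rw [Set.mem_add] at hmem
    obtain ⟨y, hy, w, hw, hxyw⟩ := hmem
    simp only [Set.mem_iUnion] at hy
    obtain ⟨m, hm, hy1, hy2⟩ := hy
    simp only [Set.mem_setOf_eq] at hy1 hy2
    have hm0 : m ≠ 0 := by omega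
    have hm1 : m - 1 ≠ 0 := by omega
    have e1 : tprev t m = t (m - 1) := by unfold tprev; rw [if_neg hm0]
    have e2 : tprev t (m - 1) = t (m - 1 - 1) := by unfold tprev; rw [if_neg hm1]
    rw [e1, e2] at hy2
    have hy2' : y < -(t (m - 1) + t (m - 1 - 1)) := not_le.mp hy2
    rcases w_cases htpos hw with ⟨k, rfl⟩ | hw0
    · rcases Nat.lt_or_ge k m with hkm | hmk
      · have hc : t k ≤ t (m - 1) := hmle (by omega)
        have h : -(t (m - 1) + t (m - 1 - 1)) + t (m - 1) ≤ -(t n) := by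
          have he : -(t (m - 1) + t (m - 1 - 1)) + t (m - 1) = -(t (m - 1 - 1)) := by abel
          rw [he]
          exact neg_le_neg (hmle (by omega))
        exact absurd hxyw (ne_of_lt (keylt hy2' hc h hx1))
      · have h0 : (0 : Zd d) ≤ y + t k := by
          have := add_le_add hy1 (hmle hmk)
          rwa [neg_add_cancel] at this
        have : x < 0 := hx0 x ⟨hx1, hx2⟩
        rw [hxyw] at h0
        exact absurd h0 (not_le.mpr this)
    · have h : -(t (m - 1) + t (m - 1 - 1)) + 0 ≤ -(t n) := by
        rw [add_zero]
        refine neg_le_neg ?_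
        exact (hmle (by omega : n ≤ m - 1)).trans (le_add_of_nonneg_right (htpos _).le)
      exact absurd hxyw (ne_of_lt (keylt hy2' hw0 h hx1))
  · rintro x hx hmem
    obtain ⟨hx1, hx2⟩ := hx
    simp only [Set.mem_setOf_eq] at hx1
    rw [Set.mem_add] at hmem
    obtain ⟨y, hy, w, hw, hxyw⟩ := hmem
    obtain ⟨hy1, hy2⟩ := hy
    obtain ⟨hw, hwne⟩ := hw
    simp only [Set.mem_setOf_eq] at hy1 hy2
    have e1 : tprev t (n + 1) = t n := by unfold tprev; rw [if_neg (Nat.succ_ne_zero n), Nat.add_sub_cancel]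
    simp only [Nat.add_sub_cancel] at hy2
    rw [e1] at hy2
    have hy2' : y < -(t n + tprev t n) := not_le.mp hy2
    rcases w_cases htpos hw with ⟨k, rfl⟩ | hw0
    · have hkn : k ≠ n := fun h => hwne (by rw [h]; rfl)
      rcases Nat.lt_or_ge k n with hlt | hge
      · have hc : t k ≤ tprev t n := by
          unfold tprev
          rw [if_neg (by omega : n ≠ 0)]
          exact hmle (by omega)
        have h : -(t n + tprev t n) + tprev t n ≤ -(t n) := le_of_eq (by abel)
        exact absurd hxyw (ne_of_lt (keylt hy2' hc h hx1))
      · have hk1 : n + 1 ≤ k := by omega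
        have h0 : (0 : Zd d) ≤ y + t k := by
          have := add_le_add hy1 (hmle hk1)
          rwa [neg_add_cancel] at this
        have : x < 0 := hx0 x ⟨hx1, hx2⟩
        rw [hxyw] at h0
        exact absurd h0 (not_le.mpr this)
    · have h : -(t n + tprev t n) + 0 ≤ -(t n) := by
        rw [add_zero]
        exact neg_le_neg (le_add_of_nonneg_right (htprev n))
      exact absurd hxyw (ne_of_lt (keylt hy2' hw0 h hx1))
end

section
/- With the same notation, for every n ≥ 1 the inclusion (J_0 ∪ ⋯ ∪ J_{n-1} ∪ (J_n ∩ ℤ^d_{≥ -2t_{n-1}})) + W ⊆ (ℤ^d \ ℤ^d_{≥ -t_n}) ∪ ℤ^d_{≥ -3t_{n-1}} holds. -/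
open Pointwise

theorem stmt4 {d : ℕ} (hd : 0 < d) (t : ℕ → Zd d) (hmono : StrictMono t)
    (hpos : 0 < t 0) (hgrow : ∀ n : ℕ, 2 • t n ≤ t (n + 1))
    (hcoord : ∃ n : ℕ, ∀ i : Fin d, 0 < ofLex (t n) i) :
    ∀ n : ℕ, 1 ≤ n →
      ((⋃ m : ℕ, ⋃ (_ : m < n), Jset t m) ∪
          (Jset t n ∩ {x : Zd d | -(2 • t (n - 1)) ≤ x})) + Wset t ⊆
        {x : Zd d | ¬ -(t n) ≤ x} ∪ {x : Zd d | -(3 • t (n - 1)) ≤ x} := by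
  intro n hn
  rintro z ⟨x, hx, w, hw, rfl⟩
  have htpos : ∀ m, 0 < t m := fun m => lt_of_lt_of_le hpos (hmono.monotone (Nat.zero_le m))
  have htprev : ∀ m, 0 ≤ tprev t m := by
    intro m
    unfold tprev
    split
    · exact le_refl 0
    · exact (htpos _).le
  have hJlt : ∀ m y, y ∈ Jset t m → ¬ (0 ≤ y) := fun m y hy h =>
    hy.2 (le_trans (neg_nonpos.2 (add_nonneg (htprev m) (htprev (m - 1)))) h)
  -- key facts about x
  have h1 : -(2 • t (n - 1)) ≤ x := by
    rcases hx with hx | hx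
    · simp only [Set.mem_iUnion] at hx
      obtain ⟨m, hm, hxm⟩ := hx
      have hmn : t m ≤ t (n - 1) := hmono.monotone (Nat.le_sub_one_of_lt hm)
      have : -(2 • t (n - 1)) ≤ -(t (n - 1)) := by
        rw [two_nsmul]
        have := (htpos (n - 1)).le
        exact neg_le_neg (le_add_of_nonneg_left this)
      exact le_trans (le_trans this (neg_le_neg hmn)) hxm.1
    · exact hx.2
  have h2 : ¬ (0 ≤ x) := by
    rcases hx with hx | hx
    · simp only [Set.mem_iUnion] at hx
      obtain ⟨m, _, hxm⟩ := hx
      exact hJlt m x hxm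
    · exact hJlt n x hx.1
  have h32 : -(3 • t (n - 1)) ≤ -(2 • t (n - 1)) + -(t (n - 1)) := by
    rw [show (3 : ℕ) = 2 + 1 from rfl, succ_nsmul, neg_add]
  rcases hw with (⟨m, rfl⟩ | hw0) | hwn
  · -- w = t m
    right
    refine le_trans h32 (add_le_add h1 ?_)
    exact le_trans (neg_nonpos.2 (htpos (n - 1)).le) (htpos m).le
  · -- w = 0
    right
    rcases hw0 with rfl
    show -(3 • t (n - 1)) ≤ x + 0
    rw [add_zero]
    refine le_trans (le_trans h32 ?_) h1
    exact add_le_of_nonpos_right (neg_nonpos.2 (htpos (n - 1)).le)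
  · -- w = -t m
    rw [Set.mem_neg] at hwn
    obtain ⟨m, hm⟩ := hwn
    obtain rfl : w = -(t m) := by rw [hm, neg_neg]
    rcases le_or_gt n m with hnm | hmn
    · left
      simp only [Set.mem_setOf_eq]
      intro habs
      have hle : -(t m) ≤ x + -(t m) :=
        le_trans (neg_le_neg (hmono.monotone hnm)) habs
      exact h2 ((le_add_iff_nonneg_left _).1 hle)
    · right
      have htm : t m ≤ t (n - 1) := hmono.monotone (Nat.le_sub_one_of_lt hmn)
      exact le_trans h32 (add_le_add h1 (neg_le_neg htm))
end

section
/- With the same notation, if additionally t_n > 3t_{n-1} for all n ≥ 1, then for every n ≥ 0 the set (⋃_{m ≥ n+1} (-(J_m ∩ ℤ^d_{≥ -2t_{m-1}}))) + W contains no point of I_n. -/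
open Pointwise

theorem stmt5 {d : ℕ} (hd : 0 < d) (t : ℕ → Zd d) (hmono : StrictMono t)
    (hpos : 0 < t 0) (hgrow : ∀ n : ℕ, 3 • t n < t (n + 1))
    (hcoord : ∃ n : ℕ, ∀ i : Fin d, 0 < ofLex (t n) i) :
    ∀ n : ℕ, ∀ x ∈ Iset t n,
      x ∉ (⋃ m : ℕ, ⋃ (_ : n + 1 ≤ m),
            -(Jset t m ∩ {y : Zd d | -(2 • tprev t m) ≤ y})) + Wset t := by
  haveI : WellFoundedLT (Fin d) := inferInstance

  have hpos' : ∀ k, 0 < t k := fun k => lt_of_lt_of_le hpos (hmono.monotone (Nat.zero_le k))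
  have htprev : ∀ j, 0 ≤ tprev t j := by
    intro j
    unfold tprev
    split
    · exact le_refl 0
    · exact (hpos' _).le
  intro n x hx hmem
  rw [Set.mem_add] at hmem
  obtain ⟨z, hz, w, hw, hzw⟩ := hmem
  simp only [Set.mem_iUnion, Set.mem_neg, Set.mem_inter_iff, Set.mem_setOf_eq, Jset,
    Set.mem_diff, not_le] at hz
  obtain ⟨m, hm, ⟨⟨hz1, hz2⟩, hz3⟩⟩ := hz
  -- m ≥ n + 1, write m = m' + 1
  obtain ⟨m', rfl⟩ : ∃ m', m = m' + 1 := ⟨m - 1, by omega⟩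
  have hnm : n ≤ m' := by omega
  have htpm : tprev t (m' + 1) = t m' := by simp [tprev]
  rw [htpm] at hz2 hz3
  -- bounds on z
  have hz_lt : t m' < z := by
    have h0 : -z < -(t m' + tprev t (m' + 1 - 1)) := hz2
    have h2 : t m' ≤ t m' + tprev t (m' + 1 - 1) := le_add_of_nonneg_right (htprev _)
    have h3 : -z < -(t m') := lt_of_lt_of_le h0 (neg_le_neg h2)
    exact lt_of_neg_lt_neg h3
  have hz_le : z ≤ 2 • t m' := by
    have := neg_le_neg hz3
    simpa using this
  -- bounds on x
  simp only [Iset, Set.mem_diff, Set.mem_setOf_eq, not_le] at hx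
  obtain ⟨hx1, hx2⟩ := hx
  have hx1' : -(t n) ≤ x := hx1
  have hx2' : x < -(tprev t n) := hx2
  have hxneg : x < 0 := lt_of_lt_of_le hx2' (by simpa using htprev n)
  -- case on w
  rcases hw with (⟨k, rfl⟩ | rfl) | hw
  · -- w = t k : x = z + t k > 0
    have : (0 : Zd d) < z + t k :=
      add_pos (lt_trans (hpos' m') hz_lt) (hpos' k)
    rw [hzw] at this
    exact absurd this (not_lt.mpr hxneg.le)
  · have : (0 : Zd d) < z + 0 := by rw [add_zero]; exact lt_trans (hpos' m') hz_lt
    rw [hzw] at this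
    exact absurd this (not_lt.mpr hxneg.le)
  · rw [Set.mem_neg] at hw
    obtain ⟨k, hk⟩ := hw
    -- w = -(t k), x = z - t k
    have hw_eq : w = -(t k) := by rw [hk]; simp
    subst hw_eq
    have htk : t k = z - x := by
      have := hzw
      rw [← this]; abel
    -- lower bound: t m' < t k
    have hlow : t m' < t k := by
      rw [htk]
      calc t m' = t m' + 0 := by ring
        _ < z + (-x) := add_lt_add_of_lt_of_le hz_lt (by simpa using hxneg.le)
        _ = z - x := by ring
    have hkm : m' + 1 ≤ k := by
      by_contra h
      have : k ≤ m' := by omega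
      exact absurd (hmono.monotone this) (not_le.mpr hlow)
    have hbig : 3 • t m' < t k := lt_of_lt_of_le (hgrow m') (hmono.monotone hkm)
    -- upper bound: t k ≤ 3 • t m'
    have hup : t k ≤ 3 • t m' := by
      rw [htk]
      have h1 : -x ≤ t n := by simpa using neg_le_neg hx1'
      have h2 : z - x ≤ 2 • t m' + t n := by
        calc z - x = z + (-x) := by ring
          _ ≤ 2 • t m' + t n := add_le_add hz_le h1
      calc z - x ≤ 2 • t m' + t n := h2
        _ ≤ 2 • t m' + t m' := add_le_add_right (hmono.monotone hnm) _
        _ = 3 • t m' := (succ_nsmul _ 2).symm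
    exact absurd hup (not_le.mpr hbig)
end

section
/- With the same notation, if t_n ≥ 3t_{n-1} for all n ≥ 1, then for every n ≥ 1 the inclusion (-(J_1 ∪ ⋯ ∪ J_n)) + (W \ {-t_n}) ⊆ ℤ^d_{≤ -2t_n} ∪ (ℤ^d \ ℤ^d_{≤ -t_{n-1}}) holds. -/
open Pointwise

lemma Zd.total {d : ℕ} (x y : Zd d) : x ≤ y ∨ y ≤ x := by
  have h : IsTrichotomous (Zd d) (· < ·) :=
    Pi.isTrichotomous_lex _ _ (wellFounded_lt)
  rcases lt_trichotomy x y with h1 | h1 | h1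
  · exact Or.inl (le_of_lt h1)
  · exact Or.inl (le_of_eq h1)
  · exact Or.inr (le_of_lt h1)

lemma Zd.lt_of_not_le {d : ℕ} {x y : Zd d} (h : ¬ x ≤ y) : y < x :=
  ((Zd.total x y).resolve_left h).lt_of_ne (fun he => h (le_of_eq he.symm))

theorem stmt6 {d : ℕ} (hd : 0 < d) (t : ℕ → Zd d) (hmono : StrictMono t)
    (hpos : 0 < t 0) (hgrow : ∀ n : ℕ, 3 • t n ≤ t (n + 1))
    (hcoord : ∃ n : ℕ, ∀ i : Fin d, 0 < ofLex (t n) i) :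
    ∀ n : ℕ, 1 ≤ n →
      (-(⋃ m : ℕ, ⋃ (_ : 1 ≤ m ∧ m ≤ n), Jset t m)) + (Wset t \ {-(t n)}) ⊆
        {x : Zd d | x ≤ -(2 • t n)} ∪ {x : Zd d | ¬ x ≤ -(t (n - 1))} := by
  intro n hn y hy
  have htpos : ∀ k, 0 < t k := fun k => lt_of_lt_of_le hpos (hmono.monotone (Nat.zero_le k))
  have htprev_nonneg : ∀ k, (0 : Zd d) ≤ tprev t k := by
    intro k
    unfold tprev
    split
    · exact le_refl 0
    · exact (htpos _).le
  obtain ⟨a, ha, b, hb, rfl⟩ := hy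
  rw [Set.mem_neg, Set.mem_iUnion] at ha
  obtain ⟨m, hm⟩ := ha
  rw [Set.mem_iUnion] at hm
  obtain ⟨⟨hm1, hmn⟩, hJ1, hJ2⟩ := hm
  have ha_le : a ≤ t m := by
    have := neg_le_neg (show -(t m) ≤ -a from hJ1)
    rw [neg_neg, neg_neg] at this; exact this
  have ha_pos : 0 < a := by
    have h1 := Zd.lt_of_not_le hJ2
    have h2 : tprev t m + tprev t (m - 1) < a := by
      have := neg_lt_neg h1
      rw [neg_neg, neg_neg] at this; exact this
    exact lt_of_le_of_lt (add_nonneg (htprev_nonneg _) (htprev_nonneg _)) h2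
  obtain ⟨hbW, hbne⟩ := hb
  have hright : ∀ c : Zd d, -(t (n - 1)) < a + c →
      a + c ∈ {x : Zd d | x ≤ -(2 • t n)} ∪ {x : Zd d | ¬ x ≤ -(t (n - 1))} :=
    fun c hc => Or.inr (not_le.mpr hc)
  rcases hbW with (⟨k, rfl⟩ | hb0) | hbneg
  · exact hright _ (lt_trans (neg_neg_of_pos (htpos (n - 1))) (add_pos ha_pos (htpos k)))
  · rw [Set.mem_singleton_iff] at hb0
    subst hb0
    exact hright _ (by have h := lt_trans (neg_neg_of_pos (htpos (n - 1))) ha_pos; rw [add_zero]; exact h)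
  · rw [Set.mem_neg] at hbneg
    obtain ⟨k, hk⟩ := hbneg
    have hbval : b = -(t k) := by rw [hk, neg_neg]
    subst hbval
    have hkn : k ≠ n := by
      intro h
      exact hbne (by rw [h]; rfl)
    rcases lt_or_gt_of_ne hkn with hlt | hgt
    · have hk1 : k ≤ n - 1 := Nat.le_sub_one_of_lt hlt
      have h1 : -(t (n - 1)) ≤ -(t k) := neg_le_neg (hmono.monotone hk1)
      have h2 : -(t k) < a + -(t k) := lt_add_of_pos_left _ ha_pos
      exact hright _ (lt_of_le_of_lt h1 h2)
    · have hk1 : n + 1 ≤ k := hgt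
      have h1 : t (n + 1) ≤ t k := hmono.monotone hk1
      have h2 : a + -(t k) ≤ t n + -(3 • t n) :=
        add_le_add (ha_le.trans (hmono.monotone hmn)) (neg_le_neg ((hgrow n).trans h1))
      have heq : t n + -(3 • t n) = -(2 • t n) := by abel
      exact Or.inl (by rw [← heq] at *; exact h2)
end

section
/- Let t_0 < t_1 < ⋯ in ℤ^d (lexicographic order) with t_0 > 0, t_n ≥ 6t_{n-1} for all n ≥ 1, and some t_n with all coordinates positive. Let W = {±t_n : n ≥ 0} ∪ {0}. Then there exists a subset G of ℤ^d \ ℤ^d_{≥0} such that (W, G) is a co-minimal pair in ℤ^d. -/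
open Pointwise

namespace Stmt9Aux
variable {L : Type*} [AddCommGroup L] [LinearOrder L] [IsOrderedAddMonoid L]

def Wg (t : ℕ → L) : Set L := Set.range t ∪ {0} ∪ -(Set.range t)
lemma t_mem_Wg (t : ℕ → L) (n : ℕ) : t n ∈ Wg t := Or.inl (Or.inl ⟨n, rfl⟩)
lemma zero_mem_Wg (t : ℕ → L) : (0 : L) ∈ Wg t := Or.inl (Or.inr rfl)
lemma negt_mem_Wg (t : ℕ → L) (n : ℕ) : -t n ∈ Wg t := Or.inr (by
  simp only [Set.mem_neg, neg_neg, Set.mem_range]; exact ⟨n, rfl⟩)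
lemma Wg_cases {t : ℕ → L} {w : L} (hw : w ∈ Wg t) :
    w = 0 ∨ (∃ m, w = t m) ∨ (∃ m, w = -t m) := by
  rcases hw with (h | h) | h
  · exact Or.inr (Or.inl (by obtain ⟨m, hm⟩ := h; exact ⟨m, hm.symm⟩))
  · exact Or.inl h
  · refine Or.inr (Or.inr ?_)
    rw [Set.mem_neg, Set.mem_range] at h
    obtain ⟨m, hm⟩ := h
    exact ⟨m, by rw [hm, neg_neg]⟩
lemma neg_mem_Wg {t : ℕ → L} {w : L} (hw : w ∈ Wg t) : -w ∈ Wg t := by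
  rcases Wg_cases hw with rfl | ⟨m, rfl⟩ | ⟨m, rfl⟩
  · simpa using zero_mem_Wg t
  · exact negt_mem_Wg t m
  · simpa using t_mem_Wg t m

section Hyps
variable {t : ℕ → L} (hpos : 0 < t 0) (hmono : StrictMono t)
  (hgrow : ∀ n, 6 • t n ≤ t (n + 1)) (hcof : ∀ c : L, ∃ n, c < t n)

include hpos hmono in
lemma tpos : ∀ n, 0 < t n := fun n => hpos.trans_le (hmono.monotone (Nat.zero_le n))

include hmono hcof in
lemma hcof' : ∀ c : L, ∃ N, ∀ n, N ≤ n → c < t n := by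
  intro c
  obtain ⟨N, hN⟩ := hcof c
  exact ⟨N, fun n hn => hN.trans_le (hmono.monotone hn)⟩

include hpos hmono hgrow in
lemma tdouble : ∀ n, t n + t n ≤ t (n + 1) := by
  intro n
  have h4 : (0 : L) ≤ 4 • t n := nsmul_nonneg (tpos hpos hmono n).le _
  have h6 : (6:ℕ) • t n = t n + t n + 4 • t n := by
    have : (6 : ℕ) • t n = ((1:ℕ) + 1 + 4) • t n := by norm_num
    rw [this, add_nsmul, add_nsmul, one_nsmul]
  have : t n + t n ≤ 6 • t n := by rw [h6]; exact le_add_of_nonneg_right h4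
  exact this.trans (hgrow n)

include hpos hmono hgrow hcof in
lemma key_avoid (c : L) : ∃ N, ∀ n, N ≤ n → ∀ w ∈ Wg t, w ≠ t n → c + w ≠ t n := by
  obtain ⟨N₀, h₀⟩ := hcof' hmono hcof c
  obtain ⟨N₁, h₁⟩ := hcof' hmono hcof (-c)
  refine ⟨N₀ + N₁ + 1, fun n hn w hw hwn heq => ?_⟩
  have hn₀ : N₀ ≤ n := by omega
  have hn₁ : N₁ ≤ n := by omega
  rcases Wg_cases hw with h0 | ⟨m, rfl⟩ | ⟨m, rfl⟩
  · rw [h0, add_zero] at heq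
    exact absurd heq (h₀ n hn₀).ne
  · have hmn : m ≠ n := fun h => hwn (by rw [h])
    rcases lt_or_gt_of_ne hmn with hlt | hgt
    · have hn1 : 1 ≤ n := by omega
      have hmle : t m ≤ t (n - 1) := hmono.monotone (by omega)
      have hd : t (n - 1) + t (n - 1) ≤ t n := by
        have := tdouble hpos hmono hgrow (n - 1)
        rwa [Nat.sub_add_cancel hn1] at this
      have hclt : c < t (n - 1) := h₀ (n - 1) (by omega)
      have h2 : t (n - 1) + t m ≤ c + t m := by
        calc t (n - 1) + t m ≤ t (n - 1) + t (n - 1) := add_le_add_right hmle _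
          _ ≤ t n := hd
          _ = c + t m := heq.symm
      exact absurd (le_of_add_le_add_right h2) (not_le.mpr hclt)
    · have h2 : t n + t n ≤ t m :=
        (tdouble hpos hmono hgrow n).trans (hmono.monotone (by omega))
      have h3 : (c + t n) + t n ≤ 0 + t n := by
        calc (c + t n) + t n = c + (t n + t n) := by abel
          _ ≤ c + t m := add_le_add_right h2 _
          _ = t n := heq
          _ = 0 + t n := (zero_add _).symm
      have h4 : c + t n ≤ 0 := le_of_add_le_add_right h3
      have h5 : t n ≤ -c := by
        have h4' : t n - -c ≤ 0 := by rwa [sub_neg_eq_add, add_comm]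
        exact sub_nonpos.mp h4'
      exact absurd h5 (not_le.mpr (h₁ n hn₁))
  · have h2 : t n + t m = c := by rw [← heq]; abel
    have h3 : t n < c := by
      rw [← h2]; exact lt_add_of_pos_right _ (tpos hpos hmono m)
    exact absurd h3 (not_lt.mpr (h₀ n hn₀).le)

def Inv (t : ℕ → L) (s : Finset L × Finset (L × L)) : Prop :=
  (∀ γ ∈ s.1, γ < 0) ∧
  (∀ q ∈ s.2, q.2 ∈ Wg t ∧ q.1 - q.2 ∈ s.1) ∧
  (∀ q ∈ s.2, ∀ w' ∈ Wg t, w' ≠ q.2 → q.1 - w' ∉ s.1) ∧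
  (∀ γ ∈ s.1, ∃ q ∈ s.2, q.1 - q.2 = γ)

include hpos hmono hgrow hcof in
lemma step_cover [DecidableEq L] (s : Finset L × Finset (L × L)) (hs : Inv t s) (x : L) :
    ∃ s' : Finset L × Finset (L × L), Inv t s' ∧ s.1 ⊆ s'.1 ∧ s.2 ⊆ s'.2 ∧
      x ∈ Wg t + (↑s'.1 : Set L) := by
  by_cases hx : x ∈ Wg t + (↑s.1 : Set L)
  · exact ⟨s, hs, Finset.Subset.refl _, Finset.Subset.refl _, hx⟩
  choose NL hNL using fun c => key_avoid hpos hmono hgrow hcof c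
  choose NF hNF using hcof' hmono hcof
  set n := max (NF x) (s.2.sup fun q => NL (x - q.1)) with hn
  set γ := x - t n with hγ
  have hγneg : γ < 0 := sub_neg.mpr (hNF x n (le_max_left _ _))
  have hR2 : ∀ q ∈ s.2, ∀ w' ∈ Wg t, w' ≠ q.2 → q.1 - w' ≠ γ := by
    intro q hq w' hw' hne heq
    rw [hγ] at heq
    have h2 : q.1 + t n = x + w' := sub_eq_sub_iff_add_eq_add.mp heq
    by_cases hw : w' = t n
    · rw [hw] at h2
      have hq1 : q.1 = x := add_right_cancel h2
      refine hx (Set.mem_add.mpr ⟨q.2, (hs.2.1 q hq).1, q.1 - q.2, ?_, ?_⟩)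
      · exact_mod_cast (hs.2.1 q hq).2
      · rw [add_sub_cancel, hq1]
    · have h3 : (x - q.1) + w' = t n := by
        rw [sub_add_eq_add_sub, ← h2, add_sub_cancel_left]
      exact hNL (x - q.1) n (le_trans (Finset.le_sup (f := fun q => NL (x - q.1)) hq) (le_max_right _ _)) w' hw' hw h3
  set n' := (insert γ s.1).sup (fun v => NL (v - γ)) with hn'
  set p := γ + t n' with hp
  have hR3 : ∀ v ∈ insert γ s.1, ∀ w' ∈ Wg t, w' ≠ t n' → p - w' ≠ v := by
    intro v hv w' hw' hne heq
    have h3 : (v - γ) + w' = t n' := by rw [← heq, hp]; abel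
    exact hNL (v - γ) n' (Finset.le_sup (f := fun v => NL (v - γ)) hv) w' hw' hne h3
  refine ⟨(insert γ s.1, insert (p, t n') s.2), ⟨?_, ?_, ?_, ?_⟩,
    Finset.subset_insert _ _, Finset.subset_insert _ _, ?_⟩
  · intro a ha
    rcases Finset.mem_insert.mp ha with rfl | ha
    · exact hγneg
    · exact hs.1 a ha
  · intro q hq
    rcases Finset.mem_insert.mp hq with rfl | hq
    · refine ⟨t_mem_Wg t n', ?_⟩
      show p - t n' ∈ _
      rw [hp, add_sub_cancel_right]
      exact Finset.mem_insert_self _ _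
    · obtain ⟨h1, h2⟩ := hs.2.1 q hq
      exact ⟨h1, Finset.mem_insert_of_mem h2⟩
  · intro q hq w' hw' hne hmem
    rcases Finset.mem_insert.mp hq with rfl | hq
    · exact hR3 _ hmem w' hw' hne rfl
    · rcases Finset.mem_insert.mp hmem with h | h
      · exact hR2 q hq w' hw' hne h
      · exact hs.2.2.1 q hq w' hw' hne h
  · intro a ha
    rcases Finset.mem_insert.mp ha with rfl | ha
    · exact ⟨(p, t n'), Finset.mem_insert_self _ _, by rw [hp]; exact add_sub_cancel_right _ _⟩
    · obtain ⟨q, hq, he⟩ := hs.2.2.2 a ha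
      exact ⟨q, Finset.mem_insert_of_mem hq, he⟩
  · refine Set.mem_add.mpr ⟨t n, t_mem_Wg t n, γ, ?_, ?_⟩
    · exact_mod_cast Finset.mem_insert_self _ _
    · rw [hγ]; abel

include hpos hmono hgrow hcof in
lemma step_wit [DecidableEq L] [Infinite L] (s : Finset L × Finset (L × L)) (hs : Inv t s)
    (w₀ : L) (hw₀ : w₀ ∈ Wg t) :
    ∃ s' : Finset L × Finset (L × L), Inv t s' ∧ s.1 ⊆ s'.1 ∧ s.2 ⊆ s'.2 ∧
      ∃ p, (p, w₀) ∈ s'.2 := by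
  choose NL hNL using fun c => key_avoid hpos hmono hgrow hcof c
  choose NF hNF using hcof' hmono hcof
  obtain ⟨z, hz⟩ := Infinite.exists_notMem_finset
    (s.2.image Prod.fst ∪ s.1.image (fun v => v - w₀))
  have hzP : ∀ q ∈ s.2, z ≠ q.1 := fun q hq h =>
    hz (Finset.mem_union_left _ (Finset.mem_image.mpr ⟨q, hq, h.symm⟩))
  have hzG : ∀ v ∈ s.1, z ≠ v - w₀ := fun v hv h =>
    hz (Finset.mem_union_right _ (Finset.mem_image.mpr ⟨v, hv, h.symm⟩))
  set N := max (NF z) (max (s.2.sup fun q => NL (z - q.1)) (s.1.sup fun v => NL (z + w₀ - v)))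
    with hNdef
  set γ := z - t N with hγ
  set p := γ + w₀ with hp
  have hγneg : γ < 0 := sub_neg.mpr (hNF z N (le_max_left _ _))
  have hb : ∀ q ∈ s.2, ∀ w' ∈ Wg t, w' ≠ q.2 → q.1 - w' ≠ γ := by
    intro q hq w' hw' hne heq
    rw [hγ] at heq
    have h2 : q.1 + t N = z + w' := sub_eq_sub_iff_add_eq_add.mp heq
    by_cases hw : w' = t N
    · rw [hw] at h2
      exact hzP q hq (add_right_cancel h2).symm
    · have h3 : (z - q.1) + w' = t N := by
        rw [sub_add_eq_add_sub, ← h2, add_sub_cancel_left]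
      refine hNL (z - q.1) N ?_ w' hw' hw h3
      exact le_trans (le_trans (Finset.le_sup (f := fun q => NL (z - q.1)) hq) (le_max_left _ _)) (le_max_right _ _)
  have hc : ∀ w' ∈ Wg t, w' ≠ w₀ → p - w' ∉ insert γ s.1 := by
    intro w' hw' hne hmem
    rcases Finset.mem_insert.mp hmem with h | h
    · apply hne
      have h2 : w₀ - w' = 0 := by
        calc w₀ - w' = (p - w') - γ := by rw [hp]; abel
          _ = 0 := by rw [h, sub_self]
      exact (sub_eq_zero.mp h2).symm
    · by_cases hwn : w' = -t N
      · refine hzG _ h ?_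
        have h2 : p - w' = z + w₀ := by rw [hp, hγ, hwn]; abel
        rw [h2]; abel
      · have hne' : -w' ≠ t N := fun hh => hwn (by rw [← hh, neg_neg])
        have h3 : (z + w₀ - (p - w')) + (-w') = t N := by rw [hp, hγ]; abel
        refine hNL (z + w₀ - (p - w')) N ?_ (-w') (neg_mem_Wg hw') hne' h3
        exact le_trans (le_trans (Finset.le_sup (f := fun v => NL (z + w₀ - v)) h) (le_max_right _ _)) (le_max_right _ _)
  refine ⟨(insert γ s.1, insert (p, w₀) s.2), ⟨?_, ?_, ?_, ?_⟩,
    Finset.subset_insert _ _, Finset.subset_insert _ _, p, Finset.mem_insert_self _ _⟩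
  · intro a ha
    rcases Finset.mem_insert.mp ha with rfl | ha
    · exact hγneg
    · exact hs.1 a ha
  · intro q hq
    rcases Finset.mem_insert.mp hq with rfl | hq
    · refine ⟨hw₀, ?_⟩
      show p - w₀ ∈ _
      rw [hp, add_sub_cancel_right]
      exact Finset.mem_insert_self _ _
    · obtain ⟨h1, h2⟩ := hs.2.1 q hq
      exact ⟨h1, Finset.mem_insert_of_mem h2⟩
  · intro q hq w' hw' hne hmem
    rcases Finset.mem_insert.mp hq with rfl | hq
    · exact hc w' hw' hne hmem
    · rcases Finset.mem_insert.mp hmem with h | h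
      · exact hb q hq w' hw' hne h
      · exact hs.2.2.1 q hq w' hw' hne h
  · intro a ha
    rcases Finset.mem_insert.mp ha with rfl | ha
    · exact ⟨(p, w₀), Finset.mem_insert_self _ _, by rw [hp]; exact add_sub_cancel_right _ _⟩
    · obtain ⟨q, hq, he⟩ := hs.2.2.2 a ha
      exact ⟨q, Finset.mem_insert_of_mem hq, he⟩


include hpos hmono hgrow hcof in
theorem exists_G [DecidableEq L] [Countable L] [Infinite L] :
    ∃ G : Set L, G ⊆ {x : L | ¬ (0:L) ≤ x} ∧ Wg t + G = Set.univ ∧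
      (∀ a ∈ Wg t, (Wg t \ {a}) + G ≠ Set.univ) ∧
      (∀ b ∈ G, Wg t + (G \ {b}) ≠ Set.univ) := by
  obtain ⟨xseq, hxseq⟩ := exists_surjective_nat L
  set wfun : ℕ → L := fun k => Nat.rec (0:L)
    (fun m _ => if m % 2 = 0 then t (m / 2) else -t (m / 2)) k with hwfun
  have wfun_succ : ∀ m : ℕ, wfun (m+1) = if m % 2 = 0 then t (m / 2) else -t (m / 2) :=
    fun m => rfl
  have wfun_mem : ∀ k, wfun k ∈ Wg t := by
    intro k
    cases k with
    | zero => exact zero_mem_Wg t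
    | succ m =>
        rw [wfun_succ]
        split
        · exact t_mem_Wg t _
        · exact negt_mem_Wg t _
  have wfun_surj : ∀ w ∈ Wg t, ∃ k, wfun k = w := by
    intro w hw
    rcases Wg_cases hw with rfl | ⟨m, rfl⟩ | ⟨m, rfl⟩
    · exact ⟨0, rfl⟩
    · refine ⟨2*m+1, ?_⟩
      rw [wfun_succ]
      have h1 : (2*m) % 2 = 0 := by omega
      have h2 : (2*m) / 2 = m := by omega
      rw [h1, h2]
      simp
    · refine ⟨2*m+2, ?_⟩
      rw [wfun_succ]
      have h1 : (2*m+1) % 2 = 1 := by omega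
      have h2 : (2*m+1) / 2 = m := by omega
      rw [h1, h2]
      simp
  have step : ∀ s : Finset L × Finset (L × L), Inv t s → ∀ k : ℕ,
      ∃ s', Inv t s' ∧ s.1 ⊆ s'.1 ∧ s.2 ⊆ s'.2 ∧ xseq k ∈ Wg t + (↑s'.1 : Set L) ∧
        ∃ p, (p, wfun k) ∈ s'.2 := by
    intro s hs k
    obtain ⟨s₁, h1, h2, h3, h4⟩ := step_cover hpos hmono hgrow hcof s hs (xseq k)
    obtain ⟨s₂, k1, k2, k3, k4⟩ := step_wit hpos hmono hgrow hcof s₁ h1 (wfun k) (wfun_mem k)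
    refine ⟨s₂, k1, h2.trans k2, h3.trans k3, ?_, k4⟩
    obtain ⟨w, hw, g, hg, he⟩ := Set.mem_add.mp h4
    refine Set.mem_add.mpr ⟨w, hw, g, ?_, he⟩
    have : g ∈ s₁.1 := by exact_mod_cast hg
    exact_mod_cast k2 this
  have inv0 : Inv t ((∅, ∅) : Finset L × Finset (L × L)) := by
    refine ⟨?_, ?_, ?_, ?_⟩ <;> simp
  let C : ℕ → {s : Finset L × Finset (L × L) // Inv t s} := fun k =>
    Nat.rec ⟨(∅, ∅), inv0⟩
      (fun k ih => ⟨(step ih.1 ih.2 k).choose, (step ih.1 ih.2 k).choose_spec.1⟩) k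
  have hCs : ∀ k, (C (k+1)).1 = (step (C k).1 (C k).2 k).choose := fun k => rfl
  have spec : ∀ k, (C k).1.1 ⊆ (C (k+1)).1.1 ∧ (C k).1.2 ⊆ (C (k+1)).1.2 ∧
      xseq k ∈ Wg t + (↑(C (k+1)).1.1 : Set L) ∧ ∃ p, (p, wfun k) ∈ (C (k+1)).1.2 := by
    intro k
    have h := (step (C k).1 (C k).2 k).choose_spec
    rw [← hCs k] at h
    exact ⟨h.2.1, h.2.2.1, h.2.2.2.1, h.2.2.2.2⟩
  have mono : ∀ k m, k ≤ m → (C k).1.1 ⊆ (C m).1.1 ∧ (C k).1.2 ⊆ (C m).1.2 := by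
    intro k m hkm
    induction m, hkm using Nat.le_induction with
    | base => exact ⟨Finset.Subset.refl _, Finset.Subset.refl _⟩
    | succ m hm ih => exact ⟨ih.1.trans (spec m).1, ih.2.trans (spec m).2.1⟩
  refine ⟨{γ | ∃ k, γ ∈ (C k).1.1}, ?_, ?_, ?_, ?_⟩
  · rintro γ ⟨k, hk⟩
    exact not_le.mpr ((C k).2.1 γ hk)
  · apply Set.eq_univ_of_forall
    intro x
    obtain ⟨k, hk⟩ := hxseq x
    have h := (spec k).2.2.1
    rw [hk] at h
    obtain ⟨w, hw, g, hg, he⟩ := Set.mem_add.mp h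
    refine Set.mem_add.mpr ⟨w, hw, g, ⟨k+1, by exact_mod_cast hg⟩, he⟩
  · intro a ha heq
    obtain ⟨k, hk⟩ := wfun_surj a ha
    obtain ⟨p, hp⟩ := (spec k).2.2.2
    rw [hk] at hp
    have hpmem : p ∈ (Wg t \ {a}) + {γ | ∃ k, γ ∈ (C k).1.1} := heq.symm ▸ Set.mem_univ p
    obtain ⟨w', hw', g, hg, he⟩ := Set.mem_add.mp hpmem
    obtain ⟨m, hm⟩ := hg
    have hpM : (p, a) ∈ (C (max (k+1) m)).1.2 := (mono (k+1) _ (le_max_left _ _)).2 hp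
    have hgM : g ∈ (C (max (k+1) m)).1.1 := (mono m _ (le_max_right _ _)).1 hm
    have hw'ne : w' ≠ a := by
      have := hw'.2
      simpa using this
    have hnot := (C (max (k+1) m)).2.2.2.1 (p, a) hpM w' hw'.1 hw'ne
    apply hnot
    have hge : p - w' = g := by rw [← he]; abel
    rwa [hge]
  · intro b hb heq
    obtain ⟨k, hk⟩ := hb
    obtain ⟨q, hq, hqe⟩ := (C k).2.2.2.2 b hk
    have hpmem : q.1 ∈ Wg t + ({γ | ∃ k, γ ∈ (C k).1.1} \ {b}) := heq.symm ▸ Set.mem_univ q.1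
    obtain ⟨w', hw', g, hg, he⟩ := Set.mem_add.mp hpmem
    obtain ⟨⟨m, hm⟩, hgb⟩ := hg
    have hgb' : g ≠ b := by simpa using hgb
    have hqM : q ∈ (C (max k m)).1.2 := (mono k _ (le_max_left _ _)).2 hq
    have hgM : g ∈ (C (max k m)).1.1 := (mono m _ (le_max_right _ _)).1 hm
    by_cases hwq : w' = q.2
    · apply hgb'
      have : g = q.1 - q.2 := by rw [← he, hwq]; abel
      exact this.trans hqe
    · have hnot := (C (max k m)).2.2.2.1 q hqM w' hw' hwq
      apply hnot
      have hge : q.1 - w' = g := by rw [← he]; abel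
      rwa [hge]

end Hyps
end Stmt9Aux

theorem stmt9 {d : ℕ} (hd : 0 < d) (t : ℕ → Zd d) (hmono : StrictMono t)
    (hpos : 0 < t 0) (hgrow : ∀ n : ℕ, 6 • t n ≤ t (n + 1))
    (hcoord : ∃ n : ℕ, ∀ i : Fin d, 0 < ofLex (t n) i) :
    ∃ G : Set (Zd d), G ⊆ {x : Zd d | ¬ (0 : Zd d) ≤ x} ∧
      IsCoMinimalPair (Wset t) G := by
  classical
  letI instWF : WellFoundedLT (Fin d) := inferInstance
  haveI instL : IsOrderedAddMonoid (Zd d) := inferInstance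
  haveI hInf : Infinite (Zd d) :=
    Infinite.of_injective (fun z : ℤ => toLex (Function.const _ z))
      (fun a b h => by simpa using congrFun (congrArg ofLex h) ⟨0, hd⟩)
  haveI hCnt : Countable (Zd d) := Countable.of_equiv _ toLex
  have nsmul_mono : ∀ (m : ℕ) (x y : Zd d), x ≤ y → m • x ≤ m • y := by
    intro m
    induction m with
    | zero => intro x y _; simp
    | succ m ih =>
        intro x y h
        rw [succ_nsmul, succ_nsmul]
        exact add_le_add (ih x y h) h
  have hcof : ∀ c : Zd d, ∃ n, c < t n := by
    obtain ⟨n₀, hn₀⟩ := hcoord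
    have hsm : ∀ k : ℕ, (6^k : ℕ) • t n₀ ≤ t (n₀ + k) := by
      intro k
      induction k with
      | zero => simp
      | succ k ih =>
          have h1 : (6^(k+1) : ℕ) • t n₀ = 6 • ((6^k : ℕ) • t n₀) := by
            rw [← mul_smul]
            norm_num [pow_succ, mul_comm]
          rw [h1, show n₀ + (k+1) = (n₀ + k) + 1 by omega]
          exact le_trans (nsmul_mono 6 _ _ ih) (hgrow (n₀ + k))
    intro c
    set i₀ : Fin d := ⟨0, hd⟩ with hi₀
    set k := (ofLex c i₀).toNat + 1 with hk
    refine ⟨n₀ + k, lt_of_lt_of_le ?_ (hsm k)⟩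
    have hfst : ofLex c i₀ < ofLex ((6^k : ℕ) • t n₀) i₀ := by
      have hcoordeq : ofLex ((6^k : ℕ) • t n₀) i₀ = (6^k : ℕ) • ofLex (t n₀) i₀ := rfl
      rw [hcoordeq, nsmul_eq_mul]
      have h1 : (1:ℤ) ≤ ofLex (t n₀) i₀ := hn₀ i₀
      have h2 : ((6^k : ℕ) : ℤ) * 1 ≤ ((6^k : ℕ) : ℤ) * ofLex (t n₀) i₀ :=
        mul_le_mul_of_nonneg_left h1 (by positivity)
      have h3 : ofLex c i₀ < ((6^k : ℕ) : ℤ) := by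
        have ha := Int.self_le_toNat (ofLex c i₀)
        have hb : k ≤ 6^k := (Nat.lt_pow_self (n := k) (by norm_num : 1 < 6)).le
        have hc2 : ((k:ℕ) : ℤ) ≤ ((6^k : ℕ) : ℤ) := by exact_mod_cast hb
        have : ofLex c i₀ < (k : ℤ) := by rw [hk]; push_cast; omega
        exact lt_of_lt_of_le this hc2
      calc ofLex c i₀ < ((6^k : ℕ) : ℤ) := h3
        _ = ((6^k : ℕ) : ℤ) * 1 := by ring
        _ ≤ _ := h2
    exact ⟨i₀, fun j hj => absurd (show (j:ℕ) < 0 from hj) (by omega), hfst⟩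
  obtain ⟨G, h0, h1, h2, h3⟩ := Stmt9Aux.exists_G hpos hmono hgrow hcof
  exact ⟨G, h0, h1, h2, h3⟩
end

section
/- Let t_0 < t_1 < ⋯ in ℤ^d (lexicographic order) with t_0 > 0, t_n > 3t_{n-1} for all n ≥ 1, and some t_n with all coordinates positive. Let V = {±t_n : n ≥ 0}. Then there exists a symmetric subset Q of ℤ^d with 0 ∉ Q such that (V, Q) is a co-minimal pair in ℤ^d. -/
open Pointwise

namespace Stmt11Aux

variable {d : ℕ} {t : ℕ → Zd d}

lemma zd_le_or_lt (a b : Zd d) : a ≤ b ∨ b < a :=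
  le_or_gt a b

lemma zd_neg_or_pos {w : Zd d} (h : w ≠ 0) : w < 0 ∨ 0 < w := by
  rcases zd_le_or_lt w 0 with h1 | h1
  · exact Or.inl (h1.lt_of_ne h)
  · exact Or.inr h1

lemma zd_exists_ub {S : Set (Zd d)} (h : S.Finite) : ∃ η : Zd d, ∀ y ∈ S, y ≤ η := by
  classical
  obtain ⟨F, hF⟩ : ∃ F : Finset (Zd d), S ⊆ ↑F := ⟨h.toFinset, by simp⟩
  suffices hh : ∃ η : Zd d, ∀ y ∈ F, y ≤ η by
    obtain ⟨η, hη⟩ := hh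
    exact ⟨η, fun y hy => hη y (hF hy)⟩
  clear hF
  induction F using Finset.induction with
  | empty => exact ⟨0, by simp⟩
  | @insert a F _ ih =>
    obtain ⟨η, hη⟩ := ih
    rcases zd_le_or_lt a η with h1 | h1
    · exact ⟨η, by
        intro y hy
        rcases Finset.mem_insert.1 hy with rfl | hy
        exacts [h1, hη y hy]⟩
    · exact ⟨a, by
        intro y hy
        rcases Finset.mem_insert.1 hy with rfl | hy
        exacts [le_refl _, (hη y hy).trans h1.le]⟩

lemma t_mem_V (b : ℕ) : t b ∈ Vset t := Or.inl ⟨b, rfl⟩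

lemma neg_t_mem_V (b : ℕ) : -(t b) ∈ Vset t := Or.inr (by
  simp only [Set.mem_neg, neg_neg]; exact ⟨b, rfl⟩)

lemma mem_V_iff {v : Zd d} : v ∈ Vset t ↔ ∃ b, v = t b ∨ v = -(t b) := by
  constructor
  · rintro (⟨b, rfl⟩ | hv)
    · exact ⟨b, Or.inl rfl⟩
    · rw [Set.mem_neg] at hv
      obtain ⟨b, hb⟩ := hv
      exact ⟨b, Or.inr (by rw [hb, neg_neg])⟩
  · rintro ⟨b, rfl | rfl⟩
    · exact t_mem_V b
    · exact neg_t_mem_V b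

lemma neg_mem_V {v : Zd d} (h : v ∈ Vset t) : -v ∈ Vset t := by
  rw [mem_V_iff] at h ⊢
  obtain ⟨b, rfl | rfl⟩ := h
  · exact ⟨b, Or.inr rfl⟩
  · exact ⟨b, Or.inl (neg_neg _)⟩

section Hyps

variable (hmono : StrictMono t) (hpos : 0 < t 0)
variable (hgrow : ∀ n : ℕ, 3 • t n < t (n + 1))

include hmono hpos in
lemma t_pos (n : ℕ) : 0 < t n := lt_of_lt_of_le hpos (hmono.monotone (Nat.zero_le n))

include hgrow in
lemma t3 (n : ℕ) : t n + t n + t n < t (n + 1) := by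
  have h := hgrow n
  have h2 : (3 : ℕ) • t n = t n + t n + t n := by
    rw [show (3 : ℕ) = 2 + 1 from rfl, add_nsmul, two_nsmul, one_nsmul]
  rwa [h2] at h

include hmono in
lemma t_gap {j b : ℕ} {a : Zd d} (h1 : t j < a) (h2 : a < t (j + 1)) : t b ≠ a := by
  intro h
  rcases le_or_gt b j with hb | hb
  · have : t b ≤ t j := hmono.monotone hb
    exact absurd (h ▸ this) (not_le_of_gt h1)
  · have : t (j + 1) ≤ t b := hmono.monotone hb
    exact absurd (h ▸ this) (not_le_of_gt h2)

include hmono hpos hgrow in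
lemma t_near {η : Zd d} (h0 : (0 : Zd d) ≤ η) {N : ℕ} (hN : ∀ k, N ≤ k → η + η < t k)
    {n : ℕ} (hn : N ≤ n) {w : Zd d} (hw1 : w ≤ η + η) (hw2 : -w ≤ η + η)
    (hne : w ≠ 0) (b : ℕ) : t b ≠ t (n + 1) + w := by
  rcases zd_neg_or_pos hne with hw | hw
  · refine t_gap hmono (j := n) ?_ ?_
    · have h1 : η + η < t n := hN n hn
      have h2 : t n + t n + t n < t (n + 1) := t3 hgrow n
      have h3 : -(η + η) ≤ w := neg_le.2 hw2
      have key : t n + (η + η) < t (n + 1) := by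
        have hp := t_pos hmono hpos n
        calc t n + (η + η) < t n + (t n + t n) :=
              add_lt_add_right (lt_of_lt_of_le h1 (le_add_of_nonneg_right hp.le)) _
          _ = t n + t n + t n := by abel
          _ < t (n + 1) := h2
      calc t n = t n + (η + η) + -(η + η) := by abel
        _ ≤ t n + (η + η) + w := add_le_add_right h3 _
        _ < t (n + 1) + w := add_lt_add_left key w
    · exact add_lt_of_neg_right _ hw
  · refine t_gap hmono (j := n + 1) ?_ ?_
    · exact lt_add_of_pos_right _ hw
    · have h1 : η + η < t (n + 1) := hN (n + 1) (le_trans hn (Nat.le_succ n))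
      have h2 : t (n + 1) + t (n + 1) + t (n + 1) < t (n + 2) := t3 hgrow (n + 1)
      calc t (n + 1) + w ≤ t (n + 1) + (η + η) := add_le_add_right hw1 _
        _ < t (n + 1) + t (n + 1) := add_lt_add_right h1 _
        _ ≤ t (n + 1) + t (n + 1) + t (n + 1) :=
            le_add_of_nonneg_right (t_pos hmono hpos _).le
        _ < t (n + 2) := h2

end Hyps
section Cofinal

variable (hd : 0 < d) (hmono : StrictMono t) (hpos : 0 < t 0)
variable (hgrow : ∀ n : ℕ, 3 • t n < t (n + 1))
variable (hcoord : ∃ n : ℕ, ∀ i : Fin d, 0 < ofLex (t n) i)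

lemma coord0_le (hd : 0 < d) {x y : Zd d} (h : x ≤ y) :
    ofLex x ⟨0, hd⟩ ≤ ofLex y ⟨0, hd⟩ := by
  rcases h.lt_or_eq with h | rfl
  · obtain ⟨i, hi, hlt⟩ := h
    rcases Nat.eq_zero_or_pos i.val with h0 | h0
    · have : i = ⟨0, hd⟩ := by ext; exact h0
      exact le_of_lt (this ▸ hlt)
    · exact le_of_eq (hi ⟨0, hd⟩ (by simpa [Fin.lt_def] using h0))
  · exact le_refl _

lemma lt_of_coord0_lt (hd : 0 < d) {x y : Zd d}
    (h : ofLex x ⟨0, hd⟩ < ofLex y ⟨0, hd⟩) : x < y :=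
  ⟨⟨0, hd⟩, fun j hj => absurd hj (by simp [Fin.lt_def]), h⟩

include hmono hpos hgrow in
lemma t_chain (n₀ : ℕ) : ∀ k : ℕ, t n₀ + (2 * k) • t n₀ ≤ t (n₀ + k) := by
  intro k
  induction k with
  | zero => simp
  | succ k ih =>
    have h1 : t (n₀ + k) + t (n₀ + k) + t (n₀ + k) < t (n₀ + k + 1) := t3 hgrow _
    have h2 : t n₀ ≤ t (n₀ + k) := hmono.monotone (Nat.le_add_right _ _)
    have h3 : t n₀ + (2 * (k + 1)) • t n₀ = (t n₀ + (2 * k) • t n₀) + (t n₀ + t n₀) := by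
      rw [Nat.mul_succ, add_nsmul, two_nsmul]
      abel
    rw [h3, show n₀ + (k + 1) = n₀ + k + 1 from rfl]
    refine le_trans ?_ h1.le
    have h4 : t n₀ + (2 * k) • t n₀ ≤ t (n₀ + k) := ih
    have h5 : t n₀ + t n₀ ≤ t (n₀ + k) + t (n₀ + k) := add_le_add h2 h2
    calc t n₀ + (2 * k) • t n₀ + (t n₀ + t n₀) ≤ t (n₀ + k) + (t (n₀ + k) + t (n₀ + k)) :=
          add_le_add h4 h5
      _ = t (n₀ + k) + t (n₀ + k) + t (n₀ + k) := by abel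

include hd hmono hpos hgrow hcoord in
lemma t_cofinal (β : Zd d) : ∃ N : ℕ, ∀ k, N ≤ k → β < t k := by
  obtain ⟨n₀, hn₀⟩ := hcoord
  set i0 : Fin d := ⟨0, hd⟩
  set c : ℤ := ofLex (t n₀) i0 with hc
  have hc1 : 1 ≤ c := hn₀ i0
  set k : ℕ := (ofLex β i0).toNat + 1 with hk
  have hβ : ofLex β i0 < (k : ℤ) := by
    rw [hk]
    push_cast
    exact lt_of_le_of_lt (Int.self_le_toNat _) (by exact_mod_cast Nat.lt_succ_self _)
  refine ⟨n₀ + k, fun m hm => lt_of_lt_of_le ?_ (hmono.monotone hm)⟩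
  refine lt_of_coord0_lt hd ?_
  have h1 := coord0_le hd (t_chain hmono hpos hgrow n₀ k)
  have h2 : ofLex (t n₀ + (2 * k) • t n₀) i0 = c + (2 * k) * c := by
    have : ofLex (t n₀ + (2 * k) • t n₀) i0 = ofLex (t n₀) i0 + (2 * k) • ofLex (t n₀) i0 := rfl
    rw [this, nsmul_eq_mul]
    push_cast
    ring
  rw [h2] at h1
  refine lt_of_lt_of_le (lt_of_lt_of_le hβ ?_) h1
  have : (k : ℤ) ≤ (2 * k) * c := by
    have hk0 : (1 : ℤ) ≤ (k : ℤ) := by exact_mod_cast Nat.one_le_iff_ne_zero.2 (by omega)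
    nlinarith
  linarith [hc1]

end Cofinal

/-- A stage of the greedy construction: a finite symmetric set `Q` avoiding `0`,
together with a set of "witness pairs" `(g, q)` certifying that the only
representation of `g` as `v + q'` with `v ∈ V`, `q' ∈ Q` has `q' = q`. -/
structure GoodState {d : ℕ} (t : ℕ → Zd d) : Type where
  Q : Set (Zd d)
  Wit : Set (Zd d × Zd d)
  finQ : Q.Finite
  finW : Wit.Finite
  symQ : ∀ q ∈ Q, -q ∈ Q
  zeroQ : (0 : Zd d) ∉ Q
  witQ : ∀ p ∈ Wit, p.2 ∈ Q
  witV : ∀ p ∈ Wit, p.1 - p.2 ∈ Vset t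
  witU : ∀ p ∈ Wit, ∀ v ∈ Vset t, ∀ q ∈ Q, p.1 = v + q → q = p.2
  witNe : ∀ p ∈ Wit, p.1 ≠ (0 : Zd d)
  qWit : ∀ q ∈ Q, ∃ g, (g, q) ∈ Wit
  symW : ∀ p ∈ Wit, (-p.1, -p.2) ∈ Wit

namespace GoodState

variable {d : ℕ} {t : ℕ → Zd d}

/-- every `p.1` for `p ∈ Wit` is covered. -/
lemma wit_covered (s : GoodState t) {p : Zd d × Zd d} (hp : p ∈ s.Wit) :
    p.1 ∈ Vset t + s.Q :=
  Set.mem_add.2 ⟨p.1 - p.2, s.witV p hp, p.2, s.witQ p hp, by abel⟩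

lemma covered_neg (s : GoodState t) {x : Zd d} (hx : x ∈ Vset t + s.Q) :
    -x ∈ Vset t + s.Q := by
  obtain ⟨v, hv, q, hq, h⟩ := Set.mem_add.1 hx
  exact Set.mem_add.2 ⟨-v, neg_mem_V hv, -q, s.symQ q hq, by rw [← h]; abel⟩

/-- the initial (empty) state. -/
def init : GoodState t where
  Q := ∅
  Wit := ∅
  finQ := Set.finite_empty
  finW := Set.finite_empty
  symQ := by simp
  zeroQ := by simp
  witQ := by simp
  witV := by simp
  witU := by simp
  witNe := by simp
  qWit := by simp
  symW := by simp

/-- generic extension of a state by a fresh symmetric pair `±q` with designated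
witness `g` (and `-g` for `-q`). -/
lemma extend (s : GoodState t) (g q : Zd d)
    (hq0 : q ≠ 0)
    (hgv : g - q ∈ Vset t)
    (hg0 : g ≠ 0)
    (hfresh : ∀ v ∈ Vset t, ∀ c ∈ s.Q, g ≠ v + c)
    (hnq : ∀ v ∈ Vset t, g ≠ v + (-q))
    (hold : ∀ p ∈ s.Wit, ∀ v ∈ Vset t, p.1 ≠ v + q ∧ p.1 ≠ v + (-q)) :
    ∃ s' : GoodState t, s.Q ⊆ s'.Q ∧ s.Wit ⊆ s'.Wit ∧
      (g, q) ∈ s'.Wit ∧ q ∈ s'.Q ∧ -q ∈ s'.Q := by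
  classical
  refine ⟨⟨insert q (insert (-q) s.Q),
            insert (g, q) (insert (-g, -q) s.Wit), ?_, ?_, ?_, ?_, ?_, ?_, ?_, ?_, ?_, ?_⟩,
          ?_, ?_, ?_, ?_, ?_⟩
  · exact (s.finQ.insert _).insert _
  · exact (s.finW.insert _).insert _
  · -- symQ
    rintro x (rfl | rfl | hx)
    · exact Or.inr (Or.inl rfl)
    · exact Or.inl (by rw [neg_neg])
    · exact Or.inr (Or.inr (s.symQ x hx))
  · -- zeroQ
    rintro (h | h | h)
    · exact hq0 h.symm
    · exact hq0 (by rw [← neg_neg q, ← h]; simp)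
    · exact s.zeroQ h
  · -- witQ
    rintro p (rfl | rfl | hp)
    · exact Or.inl rfl
    · exact Or.inr (Or.inl rfl)
    · exact Or.inr (Or.inr (s.witQ p hp))
  · -- witV
    rintro p (rfl | rfl | hp)
    · exact hgv
    · show -g - -q ∈ Vset t
      rw [show -g - -q = -(g - q) by abel]
      exact neg_mem_V hgv
    · exact s.witV p hp
  · -- witU
    rintro p (rfl | rfl | hp) v hv c hcm heq
    · -- p = (g, q)
      replace heq : g = v + c := heq
      rcases hcm with rfl | rfl | hc
      · rfl
      · exact absurd heq (hnq v hv)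
      · exact absurd heq (hfresh v hv c hc)
    · -- p = (-g, -q)
      replace heq : -g = v + c := heq
      have heq2 : g = -v + -c := by rw [← neg_neg g, heq]; abel
      rcases hcm with rfl | rfl | hc
      · -- c = q : g = -v + -q
        exact absurd heq2 (hnq (-v) (neg_mem_V hv))
      · rfl
      · exact absurd heq2 (hfresh (-v) (neg_mem_V hv) (-c) (s.symQ c hc))
    · rcases hcm with rfl | rfl | hc
      · exact absurd heq (hold p hp v hv).1
      · exact absurd heq (hold p hp v hv).2
      · exact s.witU p hp v hv c hc heq
  · -- witNe
    rintro p (rfl | rfl | hp)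
    · exact hg0
    · simpa using hg0
    · exact s.witNe p hp
  · -- qWit
    rintro x (rfl | rfl | hx)
    · exact ⟨g, Or.inl rfl⟩
    · exact ⟨-g, Or.inr (Or.inl rfl)⟩
    · obtain ⟨g', hg'⟩ := s.qWit x hx
      exact ⟨g', Or.inr (Or.inr hg')⟩
  · -- symW
    rintro p (rfl | rfl | hp)
    · exact Or.inr (Or.inl rfl)
    · exact Or.inl (by simp)
    · exact Or.inr (Or.inr (s.symW p hp))
  · exact fun x hx => Or.inr (Or.inr hx)
  · exact fun p hp => Or.inr (Or.inr hp)
  · exact Or.inl rfl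
  · exact Or.inl rfl
  · exact Or.inr (Or.inl rfl)

end GoodState

section Steps

variable (hmono : StrictMono t) (hpos : 0 < t 0)
variable (hgrow : ∀ n : ℕ, 3 • t n < t (n + 1))

/-- rearrange an equation, with `abel` discharging the algebra. -/
lemma shift_eq {A B C D : Zd d} (h : A = B) (habel : C - D = B - A) : C = D :=
  eq_of_sub_eq_zero (by rw [habel, h, sub_self])

lemma shift_eq' {A B C D : Zd d} (h : A = B) (habel : C - D = A - B) : C = D :=
  shift_eq h.symm habel

include hmono hpos in
lemma t_ne_nonpos {a : Zd d} (ha : a ≤ 0) {b : ℕ} (h : t b = a) : False :=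
  lt_irrefl (0 : Zd d) (lt_of_lt_of_le (t_pos hmono hpos b) (h.le.trans ha))

lemma zd_add_self_ne_zero {x : Zd d} (hx : x ≠ 0) : x + x ≠ 0 := by
  rcases zd_neg_or_pos hx with h | h
  · exact (add_neg h h).ne
  · exact (add_pos h h).ne'

section Bounds

variable {η : Zd d} {N : ℕ} (h0η : (0 : Zd d) ≤ η) (hN : ∀ k, N ≤ k → η + η < t k)

include h0η in
lemma one_to_two {D : Zd d} (hD : D ≤ η) : D ≤ η + η :=
  hD.trans (le_add_of_nonneg_left h0η)

include hN in
lemma bnd_nonpos {n : ℕ} (hn : N ≤ n) {D : Zd d} (hD : D ≤ η + η) : D - t n ≤ 0 :=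
  sub_nonpos.2 (hD.trans (hN n hn).le)

lemma sub_extra {a e : Zd d} (ha : a ≤ 0) (he : 0 ≤ e) : a - e ≤ 0 :=
  sub_nonpos.2 (ha.trans he)

include hgrow hN in
lemma bnd_low {n : ℕ} (hn : N ≤ n) {D : Zd d} (hD : -(η + η) ≤ D) :
    t n < t (n + 1) + D - t n := by
  have h1 : η + η < t n := hN n hn
  have h2 := t3 hgrow n
  have h3 : t n + t n + (η + η) < t (n + 1) :=
    lt_trans (add_lt_add_right h1 (t n + t n)) h2
  calc t n = t n + t n + (η + η) - t n - (η + η) := by abel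
    _ < t (n + 1) - t n - (η + η) := sub_lt_sub_right (sub_lt_sub_right h3 _) _
    _ = t (n + 1) - t n + -(η + η) := by abel
    _ ≤ t (n + 1) - t n + D := add_le_add_right hD _
    _ = t (n + 1) + D - t n := by abel

include hN in
lemma bnd_high {n : ℕ} (hn : N ≤ n) {D : Zd d} (hD : D ≤ η + η) :
    t (n + 1) + D - t n < t (n + 1) := by
  have h1 : η + η < t n := hN n hn
  calc t (n + 1) + D - t n ≤ t (n + 1) + (η + η) - t n := sub_le_sub_right (add_le_add_right hD _) _
    _ < t (n + 1) + t n - t n := sub_lt_sub_right (add_lt_add_right h1 _) _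
    _ = t (n + 1) := by abel

include hmono hpos hgrow hN in
lemma bnd_low2 {n : ℕ} (hn : N ≤ n) {D : Zd d} (hD : -(η + η) ≤ D) :
    t (n + 1) < t (n + 1) + t (n + 1) + D - t n - t n := by
  have h1 : η + η < t n := hN n hn
  have h2 := t3 hgrow n
  have h3 : t n + t n + (η + η) < t (n + 1) :=
    lt_trans (add_lt_add_right h1 (t n + t n)) h2
  calc t (n + 1) = t (n + 1) + (t n + t n + (η + η)) - t n - t n - (η + η) := by abel
    _ < t (n + 1) + t (n + 1) - t n - t n - (η + η) :=
        sub_lt_sub_right (sub_lt_sub_right (sub_lt_sub_right (add_lt_add_right h3 _) _) _) _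
    _ = t (n + 1) + t (n + 1) - t n - t n + -(η + η) := by abel
    _ ≤ t (n + 1) + t (n + 1) - t n - t n + D := add_le_add_right hD _
    _ = t (n + 1) + t (n + 1) + D - t n - t n := by abel

include hmono hpos hgrow hN in
lemma bnd_high2 {n : ℕ} (hn : N ≤ n) {D : Zd d} (hD : D ≤ η + η) :
    t (n + 1) + t (n + 1) + D - t n - t n < t (n + 2) := by
  have h1 : η + η < t n := hN n hn
  have h2 := t3 hgrow (n + 1)
  have hp := t_pos hmono hpos n
  have key : t (n + 1) + t (n + 1) + (η + η) < t (n + 1) + t (n + 1) + t (n + 1) :=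
    add_lt_add_right (lt_of_lt_of_le h1 (hmono.monotone (Nat.le_succ n))) _
  calc t (n + 1) + t (n + 1) + D - t n - t n
      ≤ t (n + 1) + t (n + 1) + (η + η) - t n - t n :=
        sub_le_sub_right (sub_le_sub_right (add_le_add_right hD _) _) _
    _ ≤ t (n + 1) + t (n + 1) + (η + η) - t n - 0 := sub_le_sub_left hp.le _
    _ ≤ t (n + 1) + t (n + 1) + (η + η) - 0 - 0 := by
        refine sub_le_sub_right (sub_le_sub_left hp.le _) _
    _ = t (n + 1) + t (n + 1) + (η + η) := by abel
    _ < t (n + 1) + t (n + 1) + t (n + 1) := key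
    _ < t (n + 2) := h2

include hmono hpos hN in
lemma bnd_low3 {n : ℕ} (hn : N ≤ n) {D : Zd d} (hD : -(η + η) ≤ D) :
    t n < t n + t n + D := by
  have h1 : η + η < t n := hN n hn
  calc t n = t n + (η + η) + -(η + η) := by abel
    _ ≤ t n + (η + η) + D := add_le_add_right hD _
    _ < t n + t n + D := add_lt_add_left (add_lt_add_right h1 _) _

include hmono hpos hgrow hN in
lemma bnd_high3 {n : ℕ} (hn : N ≤ n) {D : Zd d} (hD : D ≤ η + η) :
    t n + t n + D < t (n + 1) := by
  have h1 : η + η < t n := hN n hn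
  calc t n + t n + D ≤ t n + t n + (η + η) := add_le_add_right hD _
    _ < t n + t n + t n := add_lt_add_right h1 _
    _ < t (n + 1) := t3 hgrow n

end Bounds

end Steps

section MainSteps

variable (hd : 0 < d) (hmono : StrictMono t) (hpos : 0 < t 0)
variable (hgrow : ∀ n : ℕ, 3 • t n < t (n + 1))
variable (hcoord : ∃ n : ℕ, ∀ i : Fin d, 0 < ofLex (t n) i)

include hmono hpos hgrow in
lemma bnd_nonpos2 {η : Zd d} {N : ℕ} (hN : ∀ k, N ≤ k → η + η < t k)
    {n : ℕ} (hn : N ≤ n) {D : Zd d} (hD : D ≤ η + η) : D + t n - t (n + 1) ≤ 0 := by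
  have h1 : η + η < t n := hN n hn
  have h2 := t3 hgrow n
  refine sub_nonpos.2 (le_of_lt ?_)
  calc D + t n ≤ (η + η) + t n := add_le_add_left hD _
    _ < t n + t n := add_lt_add_left h1 _
    _ ≤ t n + t n + t n := le_add_of_nonneg_right (t_pos hmono hpos n).le
    _ < t (n + 1) := h2

include hd hmono hpos hgrow hcoord in
lemma step_vmin (s : GoodState t) (m : ℕ) :
    ∃ s' : GoodState t, s.Q ⊆ s'.Q ∧ s.Wit ⊆ s'.Wit ∧
      ∃ p ∈ s'.Wit, p.1 - p.2 = t m := by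
  classical
  obtain ⟨η, hη⟩ := zd_exists_ub
    (S := insert (t m) ((s.Q ∪ Prod.fst '' s.Wit) ∪ {0}))
    (((s.finQ.union (s.finW.image _)).union (Set.finite_singleton _)).insert _)
  have htm : t m ≤ η := hη _ (Set.mem_insert _ _)
  have h0η : (0 : Zd d) ≤ η := hη 0 (Set.mem_insert_of_mem _ (Or.inr rfl))
  have hcη : ∀ c ∈ s.Q, c ≤ η := fun c hc =>
    hη c (Set.mem_insert_of_mem _ (Or.inl (Or.inl hc)))
  have hgη : ∀ p ∈ s.Wit, p.1 ≤ η := fun p hp =>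
    hη p.1 (Set.mem_insert_of_mem _ (Or.inl (Or.inr ⟨p, hp, rfl⟩)))
  have hcnη : ∀ c ∈ s.Q, -c ≤ η := fun c hc => hcη _ (s.symQ c hc)
  have hgnη : ∀ p ∈ s.Wit, -p.1 ≤ η := fun p hp => hgη _ (s.symW p hp)
  obtain ⟨N, hN⟩ := t_cofinal hd hmono hpos hgrow hcoord (η + η)
  set J := max N m with hJdef
  have hJN : N ≤ J := le_max_left _ _
  have hJm : m ≤ J := le_max_right _ _
  have hmpos := t_pos hmono hpos m
  have hJpos := t_pos hmono hpos J
  have hJ1pos := t_pos hmono hpos (J + 1)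
  have hJlt : t J < t (J + 1) := hmono (Nat.lt_succ_self J)
  set q : Zd d := t (J + 1) - t J with hqdef
  set g : Zd d := t m + q with hgdef
  have hqpos : 0 < q := sub_pos.2 hJlt
  obtain ⟨s', hQ, hW, hin, hq1, hq2⟩ := s.extend g q hqpos.ne'
    (by rw [show g - q = t m by rw [hgdef]; abel]; exact t_mem_V m)
    (add_pos hmpos hqpos).ne'
    (by -- hfresh : g is uncovered
      rintro v hv c hc h
      rcases mem_V_iff.1 hv with ⟨b, rfl | rfl⟩
      · have h2 : t b = t (J + 1) + (t m - c) - t J :=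
          shift_eq h (by rw [hgdef, hqdef]; abel)
        refine t_gap hmono (j := J) ?_ ?_ h2
        · refine bnd_low hgrow hN hJN (neg_le.1 ?_)
          rw [neg_sub]
          exact add_le_add (hcη c hc) (le_trans (neg_nonpos.2 hmpos.le) h0η)
        · refine bnd_high hN hJN ?_
          rw [sub_eq_add_neg]
          exact add_le_add htm (hcnη c hc)
      · have h2 : t b = (c - t m) + t J - t (J + 1) :=
          shift_eq' h (by rw [hgdef, hqdef]; abel)
        refine t_ne_nonpos hmono hpos ?_ h2
        refine bnd_nonpos2 hmono hpos hgrow hN hJN ?_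
        rw [sub_eq_add_neg]
        exact add_le_add (hcη c hc) (le_trans (neg_nonpos.2 hmpos.le) h0η))
    (by -- hnq : -q is not a needed shift for g
      rintro v hv h
      rcases mem_V_iff.1 hv with ⟨b, rfl | rfl⟩
      · have h2 : t b = t (J + 1) + t (J + 1) + t m - t J - t J :=
          shift_eq h (by rw [hgdef, hqdef]; abel)
        refine t_gap hmono (j := J + 1) ?_ ?_ h2
        · exact bnd_low2 hmono hpos hgrow hN hJN
            (le_trans (neg_nonpos.2 (add_nonneg h0η h0η)) hmpos.le)
        · exact bnd_high2 hmono hpos hgrow hN hJN (one_to_two h0η htm)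
      · have h2 : t b = (t J - t (J + 1)) + (t J - t (J + 1)) - t m :=
          shift_eq' h (by rw [hgdef, hqdef]; abel)
        refine t_ne_nonpos hmono hpos ?_ h2
        exact sub_extra (add_nonpos (sub_nonpos.2 hJlt.le) (sub_nonpos.2 hJlt.le)) hmpos.le)
    (by -- hold : old witnesses undisturbed
      intro p hp v hv
      have hGη := hgη p hp
      have hGnη := hgnη p hp
      constructor
      · intro h
        rcases mem_V_iff.1 hv with ⟨b, rfl | rfl⟩
        · have h2 : t b = p.1 + t J - t (J + 1) :=
            shift_eq h (by rw [hqdef]; abel)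
          exact t_ne_nonpos hmono hpos
            (bnd_nonpos2 hmono hpos hgrow hN hJN (one_to_two h0η hGη)) h2
        · have h2 : t b = t (J + 1) + -p.1 - t J :=
            shift_eq' h (by rw [hqdef]; abel)
          refine t_gap hmono (j := J) ?_ ?_ h2
          · exact bnd_low hgrow hN hJN (neg_le.1 (by rw [neg_neg]; exact one_to_two h0η hGη))
          · exact bnd_high hN hJN (one_to_two h0η hGnη)
      · intro h
        rcases mem_V_iff.1 hv with ⟨b, rfl | rfl⟩
        · have h2 : t b = t (J + 1) + p.1 - t J :=
            shift_eq h (by rw [hqdef]; abel)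
          refine t_gap hmono (j := J) ?_ ?_ h2
          · exact bnd_low hgrow hN hJN (neg_le.1 (one_to_two h0η hGnη))
          · exact bnd_high hN hJN (one_to_two h0η hGη)
        · have h2 : t b = -p.1 + t J - t (J + 1) :=
            shift_eq' h (by rw [hqdef]; abel)
          exact t_ne_nonpos hmono hpos
            (bnd_nonpos2 hmono hpos hgrow hN hJN (one_to_two h0η hGnη)) h2)
  exact ⟨s', hQ, hW, (g, q), hin, by show g - q = t m; rw [hgdef]; abel⟩

include hd hmono hpos hgrow hcoord in
lemma step_cover (s : GoodState t) (x : Zd d) :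
    ∃ s' : GoodState t, s.Q ⊆ s'.Q ∧ s.Wit ⊆ s'.Wit ∧ x ∈ Vset t + s'.Q := by
  classical
  rcases Classical.em (x ∈ Vset t + s.Q) with hcov | hcov
  · exact ⟨s, subset_rfl, subset_rfl, hcov⟩
  obtain ⟨η, hη⟩ := zd_exists_ub
    (S := insert x (insert (-x) ((s.Q ∪ Prod.fst '' s.Wit) ∪ {0})))
    ((((s.finQ.union (s.finW.image _)).union (Set.finite_singleton _)).insert _).insert _)
  have hxη : x ≤ η := hη _ (Set.mem_insert _ _)
  have hxnη : -x ≤ η := hη _ (Set.mem_insert_of_mem _ (Set.mem_insert _ _))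
  have h0η : (0 : Zd d) ≤ η :=
    hη 0 (Set.mem_insert_of_mem _ (Set.mem_insert_of_mem _ (Or.inr rfl)))
  have hcη : ∀ c ∈ s.Q, c ≤ η := fun c hc =>
    hη c (Set.mem_insert_of_mem _ (Set.mem_insert_of_mem _ (Or.inl (Or.inl hc))))
  have hgη : ∀ p ∈ s.Wit, p.1 ≤ η := fun p hp =>
    hη p.1 (Set.mem_insert_of_mem _ (Set.mem_insert_of_mem _ (Or.inl (Or.inr ⟨p, hp, rfl⟩))))
  have hcnη : ∀ c ∈ s.Q, -c ≤ η := fun c hc => hcη _ (s.symQ c hc)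
  have hgnη : ∀ p ∈ s.Wit, -p.1 ≤ η := fun p hp => hgη _ (s.symW p hp)
  obtain ⟨N, hN⟩ := t_cofinal hd hmono hpos hgrow hcoord (η + η)
  have hNle : N ≤ N + 1 := Nat.le_succ N
  have hNpos := t_pos hmono hpos (N + 1)
  have hunc : ∀ v ∈ Vset t, ∀ c ∈ s.Q, ¬(x = v + c) := by
    intro v hv c hc h
    exact hcov (Set.mem_add.2 ⟨v, hv, c, hc, h.symm⟩)
  rcases Classical.em (x = 0) with hx0 | hx0
  · -- covering 0 with the pair ±t (N+1); witness 2·t (N+1)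
    subst hx0
    set n := N + 1 with hndef
    obtain ⟨s', hQ, hW, hin, hq1, hq2⟩ := s.extend (t n + t n) (t n) hNpos.ne'
      (by rw [show t n + t n - t n = t n by abel]; exact t_mem_V n)
      (add_pos hNpos hNpos).ne'
      (by -- freshness of 2 t n
        rintro v hv c hc h
        rcases mem_V_iff.1 hv with ⟨b, rfl | rfl⟩
        · have h2 : t b = t n + t n + -c := shift_eq h (by abel)
          refine t_gap hmono (j := n) ?_ ?_ h2
          · exact bnd_low3 hmono hpos hN hNle (neg_le.1 (by rw [neg_neg]; exact one_to_two h0η (hcη c hc)))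
          · exact bnd_high3 hmono hpos hgrow hN hNle (one_to_two h0η (hcnη c hc))
        · have h2 : t b = (c - t n) - t n := shift_eq' h (by abel)
          exact t_ne_nonpos hmono hpos
            (sub_extra (bnd_nonpos hN hNle (one_to_two h0η (hcη c hc))) hNpos.le) h2)
      (by -- -q is not a shift for 2 t n
        rintro v hv h
        rcases mem_V_iff.1 hv with ⟨b, rfl | rfl⟩
        · have h2 : t b = t n + t n + t n := shift_eq h (by abel)
          refine t_gap hmono (j := n) ?_ ?_ h2
          · exact bnd_low3 hmono hpos hN hNle
              (le_trans (neg_nonpos.2 (add_nonneg h0η h0η)) (t_pos hmono hpos n).le)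
          · exact t3 hgrow n
        · have h2 : t b = ((0:Zd d) - t n - t n) - t n := shift_eq' h (by abel)
          exact t_ne_nonpos hmono hpos
            (sub_extra (sub_extra (sub_extra le_rfl hNpos.le) hNpos.le) hNpos.le) h2)
      (by -- old witnesses undisturbed
        intro p hp v hv
        have hGη := hgη p hp
        have hGnη := hgnη p hp
        have hGne := s.witNe p hp
        constructor
        · intro h
          rcases mem_V_iff.1 hv with ⟨b, rfl | rfl⟩
          · have h2 : t b = p.1 - t n := shift_eq h (by abel)
            exact t_ne_nonpos hmono hpos (bnd_nonpos hN hNle (one_to_two h0η hGη)) h2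
          · have h2 : t b = t n + -p.1 := shift_eq' h (by abel)
            have h3 : t b = t ((n - 1) + 1) + -p.1 := by rwa [show n - 1 + 1 = n from rfl]
            exact t_near hmono hpos hgrow h0η hN (le_refl N)
              (one_to_two h0η hGnη) (by rw [neg_neg]; exact one_to_two h0η hGη)
              (neg_ne_zero.2 hGne) b h3
        · intro h
          rcases mem_V_iff.1 hv with ⟨b, rfl | rfl⟩
          · have h2 : t b = t n + p.1 := shift_eq h (by abel)
            exact t_near hmono hpos hgrow h0η hN (le_refl N)
              (one_to_two h0η hGη) (one_to_two h0η hGnη) hGne b h2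
          · have h2 : t b = -p.1 - t n := shift_eq' h (by abel)
            exact t_ne_nonpos hmono hpos (bnd_nonpos hN hNle (one_to_two h0η hGnη)) h2)
    exact ⟨s', hQ, hW, Set.mem_add.2 ⟨t n, t_mem_V n, -t n, hq2, by abel⟩⟩
  · -- covering x ≠ 0 with q = x - t (N+1); witness x itself
    set n := N + 1 with hndef
    have hxlt : x < t n := lt_of_le_of_lt (one_to_two h0η hxη) (hN n hNle)
    obtain ⟨s', hQ, hW, hin, hq1, hq2⟩ := s.extend x (x - t n) (sub_ne_zero.2 hxlt.ne)
      (by rw [show x - (x - t n) = t n by abel]; exact t_mem_V n)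
      hx0
      (fun v hv c hc h => hunc v hv c hc h)
      (by -- -q not a shift for x
        rintro v hv h
        rcases mem_V_iff.1 hv with ⟨b, rfl | rfl⟩
        · have h2 : t b = (x + x) - t n := shift_eq h (by abel)
          exact t_ne_nonpos hmono hpos
            (bnd_nonpos hN hNle (add_le_add hxη hxη)) h2
        · have h2 : t b = t n + -(x + x) := shift_eq' h (by abel)
          exact t_near hmono hpos hgrow h0η hN (le_refl N)
            (by rw [neg_add]; exact add_le_add hxnη hxnη)
            (by rw [neg_neg]; exact add_le_add hxη hxη)
            (neg_ne_zero.2 (zd_add_self_ne_zero hx0)) b h2)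
      (by -- old witnesses undisturbed
        intro p hp v hv
        have hGη := hgη p hp
        have hGnη := hgnη p hp
        have hGx : p.1 ≠ x := fun e => hcov (e ▸ s.wit_covered hp)
        have hGnx : p.1 ≠ -x := by
          intro e
          refine hcov ?_
          have h4 := s.covered_neg (s.wit_covered hp)
          rwa [e, neg_neg] at h4
        constructor
        · intro h
          rcases mem_V_iff.1 hv with ⟨b, rfl | rfl⟩
          · have h2 : t b = t n + (p.1 - x) := shift_eq h (by abel)
            exact t_near hmono hpos hgrow h0η hN (le_refl N)
              (by rw [sub_eq_add_neg]; exact add_le_add hGη hxnη)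
              (by rw [neg_sub, sub_eq_add_neg]; exact add_le_add hxη hGnη)
              (sub_ne_zero.2 hGx) b h2
          · have h2 : t b = (x - p.1) - t n := shift_eq' h (by abel)
            exact t_ne_nonpos hmono hpos
              (bnd_nonpos hN hNle (by rw [sub_eq_add_neg]; exact add_le_add hxη hGnη)) h2
        · intro h
          rcases mem_V_iff.1 hv with ⟨b, rfl | rfl⟩
          · have h2 : t b = (p.1 + x) - t n := shift_eq h (by abel)
            exact t_ne_nonpos hmono hpos
              (bnd_nonpos hN hNle (add_le_add hGη hxη)) h2
          · have h2 : t b = t n + -(x + p.1) := shift_eq' h (by abel)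
            refine t_near hmono hpos hgrow h0η hN (le_refl N)
              (by rw [neg_add]; exact add_le_add hxnη hGnη)
              (by rw [neg_neg]; exact add_le_add hxη hGη)
              (neg_ne_zero.2 ?_) b h2
            intro e
            exact hGnx (by rw [← neg_neg p.1, ← add_eq_zero_iff_neg_eq.1 e]; abel))
    exact ⟨s', hQ, hW, Set.mem_add.2 ⟨t n, t_mem_V n, x - t n, hq1, by abel⟩⟩

include hd hmono hpos hgrow hcoord in
lemma step_both (s : GoodState t) (m : ℕ) (x : Zd d) :
    ∃ s' : GoodState t, s.Q ⊆ s'.Q ∧ s.Wit ⊆ s'.Wit ∧ x ∈ Vset t + s'.Q ∧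
      ∃ p ∈ s'.Wit, p.1 - p.2 = t m := by
  obtain ⟨s1, hQ1, hW1, p, hp, hpm⟩ := step_vmin hd hmono hpos hgrow hcoord s m
  obtain ⟨s2, hQ2, hW2, hx⟩ := step_cover hd hmono hpos hgrow hcoord s1 x
  exact ⟨s2, hQ1.trans hQ2, hW1.trans hW2, hx, p, hW2 hp, hpm⟩

end MainSteps
end Stmt11Aux

open Stmt11Aux in
theorem stmt11 {d : ℕ} (hd : 0 < d) (t : ℕ → Zd d) (hmono : StrictMono t)
    (hpos : 0 < t 0) (hgrow : ∀ n : ℕ, 3 • t n < t (n + 1))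
    (hcoord : ∃ n : ℕ, ∀ i : Fin d, 0 < ofLex (t n) i) :
    ∃ Q : Set (Zd d), Q = -Q ∧ (0 : Zd d) ∉ Q ∧ IsCoMinimalPair (Vset t) Q := by
  classical
  haveI : Countable (Zd d) := Countable.of_equiv (Fin d → ℤ) toLex
  haveI : Nonempty (Zd d) := ⟨0⟩
  obtain ⟨e, he⟩ := exists_surjective_nat (Zd d)
  choose F hF1 hF2 hF3 hF4 using
    fun (s : GoodState t) (m : ℕ) (x : Zd d) => step_both hd hmono hpos hgrow hcoord s m x
  set c : ℕ → GoodState t :=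
    fun k => Nat.rec GoodState.init (fun k s => F s k (e k)) k with hc
  have hsucc : ∀ k, c (k + 1) = F (c k) k (e k) := fun k => rfl
  have mono : ∀ k l, k ≤ l → (c k).Q ⊆ (c l).Q ∧ (c k).Wit ⊆ (c l).Wit := by
    intro k l h
    induction h with
    | refl => exact ⟨subset_rfl, subset_rfl⟩
    | @step l _ ih =>
      rw [hsucc l]
      exact ⟨ih.1.trans (hF1 _ _ _), ih.2.trans (hF2 _ _ _)⟩
  set Qf : Set (Zd d) := ⋃ k, (c k).Q with hQf
  have memQf : ∀ {z}, z ∈ Qf ↔ ∃ k, z ∈ (c k).Q := by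
    intro z; exact Set.mem_iUnion
  -- the limit uniqueness-of-representation property
  have witUf : ∀ k, ∀ p ∈ (c k).Wit, ∀ v ∈ Vset t, ∀ q ∈ Qf, p.1 = v + q → q = p.2 := by
    intro k p hp v hv q hq heq
    obtain ⟨l, hl⟩ := memQf.1 hq
    refine (c (max k l)).witU p ((mono k _ (le_max_left k l)).2 hp) v hv q
      ((mono l _ (le_max_right k l)).1 hl) heq
  refine ⟨Qf, ?_, ?_, ?_, ?_, ?_⟩
  · -- symmetry
    ext z
    constructor
    · intro hz
      obtain ⟨k, hk⟩ := memQf.1 hz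
      rw [Set.mem_neg]
      exact memQf.2 ⟨k, (c k).symQ z hk⟩
    · intro hz
      rw [Set.mem_neg] at hz
      obtain ⟨k, hk⟩ := memQf.1 hz
      have := (c k).symQ _ hk
      rw [neg_neg] at this
      exact memQf.2 ⟨k, this⟩
  · -- 0 ∉ Qf
    intro h
    obtain ⟨k, hk⟩ := memQf.1 h
    exact (c k).zeroQ hk
  · -- covering
    rw [Set.eq_univ_iff_forall]
    intro x
    obtain ⟨k, rfl⟩ := he x
    have hx := hF3 (c k) k (e k)
    rw [← hsucc k] at hx
    obtain ⟨v, hv, q, hq, hvq⟩ := Set.mem_add.1 hx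
    exact Set.mem_add.2 ⟨v, hv, q, memQf.2 ⟨k + 1, hq⟩, hvq⟩
  · -- minimality in V
    intro a ha h
    obtain ⟨m, rfl | rfl⟩ := mem_V_iff.1 ha
    · obtain ⟨p, hp, hptm⟩ := hF4 (c m) m (e m)
      rw [← hsucc m] at hp
      have : p.1 ∈ (Vset t \ {t m}) + Qf := h ▸ Set.mem_univ _
      obtain ⟨v, ⟨hv, hvne⟩, q, hq, hvq⟩ := Set.mem_add.1 this
      have hqp : q = p.2 := witUf (m + 1) p hp v hv q hq hvq.symm
      refine hvne ?_
      rw [Set.mem_singleton_iff, ← hptm, hvq.symm, hqp]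
      abel
    · obtain ⟨p, hp, hptm⟩ := hF4 (c m) m (e m)
      rw [← hsucc m] at hp
      have hp' : (-p.1, -p.2) ∈ (c (m + 1)).Wit := (c (m + 1)).symW p hp
      have : -p.1 ∈ (Vset t \ {-t m}) + Qf := h ▸ Set.mem_univ _
      obtain ⟨v, ⟨hv, hvne⟩, q, hq, hvq⟩ := Set.mem_add.1 this
      have hqp : q = -p.2 := witUf (m + 1) (-p.1, -p.2) hp' v hv q hq hvq.symm
      refine hvne ?_
      rw [Set.mem_singleton_iff]
      have : v = -p.1 - q := by rw [← hvq]; abel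
      rw [this, hqp, show -p.1 - -p.2 = -(p.1 - p.2) by abel, hptm]
  · -- minimality in Qf
    intro b hb h
    obtain ⟨k, hk⟩ := memQf.1 hb
    obtain ⟨g, hg⟩ := (c k).qWit b hk
    have : g ∈ Vset t + (Qf \ {b}) := h ▸ Set.mem_univ _
    obtain ⟨v, hv, q, ⟨hq, hqne⟩, hvq⟩ := Set.mem_add.1 this
    exact hqne (witUf k (g, b) hg v hv q hq hvq.symm)
end

section
/- Let t_0 < t_1 < ⋯ in ℤ^d (lexicographic order) with t_0 > 0, t_n ≥ 2t_{n-1} for all n ≥ 1, and some t_n with all coordinates positive. Then the set T = {t_n : n ≥ 0} is a minimal complement to some subset of ℤ^d \ ℤ^d_{≥0}. -/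
open Pointwise

/- ### Auxiliary construction, done in an abstract linearly ordered abelian group. -/

section MinCompAux

variable {G : Type*} [AddCommGroup G] [LinearOrder G] [IsOrderedAddMonoid G]

/-- The set of "forbidden" elements removed from the negatives. -/
def Sbad (t : ℕ → G) : Set G :=
  {y | (∃ a k : ℕ, a + 1 < k ∧ y + t k + t a = t (a + 1)) ∨
       (∃ k : ℕ, 0 < k ∧ y + t k + t 0 = 0)}

/-- The witness elements, with unique representation `gwit m = t m + b`. -/
def gwit (t : ℕ → G) : ℕ → G
  | 0 => -(t 0)
  | (m + 1) => t (m + 1) - t m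

/-- The complement set. -/
def BsetMC (t : ℕ → G) : Set G := {x | x < 0} \ Sbad t

variable {t : ℕ → G}

theorem tpos (hmono : StrictMono t) (hpos : 0 < t 0) (n : ℕ) : 0 < t n :=
  hpos.trans_le (hmono.monotone (Nat.zero_le n))

theorem gap (hmono : StrictMono t) (hgrow : ∀ n : ℕ, t n + t n ≤ t (n + 1))
    {a c : ℕ} (h : a ≤ c) : t c + t a ≤ t (c + 1) :=
  le_trans (add_le_add_right (hmono.monotone h) _) (hgrow c)

theorem sandwich (hmono : StrictMono t) {j c : ℕ} (h1 : t c < t j) (h2 : t j < t (c + 1)) :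
    False := by
  rcases le_or_gt j c with h | h
  · exact absurd (hmono.monotone h) (not_le.2 h1)
  · exact absurd (hmono.monotone h) (not_le.2 h2)

theorem notS_negt (hmono : StrictMono t) (hpos : 0 < t 0)
    (hgrow : ∀ n : ℕ, t n + t n ≤ t (n + 1)) (m : ℕ) : -(t m) ∉ Sbad t := by
  rintro (⟨a, k, hak, heq⟩ | ⟨k, hk, heq⟩)
  · obtain ⟨c, rfl⟩ : ∃ c, k = c + 1 := ⟨k - 1, by omega⟩
    have hac : a + 1 ≤ c := by omega
    have hm : t (c + 1) + t a = t (a + 1) + t m := by rw [← heq]; abel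
    -- lower bound : t c < t m
    have hlow : t c < t m := by
      have h1 : (t (a + 1) + (t c + t a)) ≤ t (a + 1) + t m := by
        calc t (a + 1) + (t c + t a) = (t c + t (a + 1)) + t a := by abel
          _ ≤ t (c + 1) + t a := add_le_add_left (gap hmono hgrow hac) _
          _ = t (a + 1) + t m := hm
      have h2 : t c + t a ≤ t m := le_of_add_le_add_left h1
      exact lt_of_lt_of_le (lt_add_of_pos_right _ (tpos hmono hpos a)) h2
    -- upper bound : t m < t (c+1)
    have hupp : t m < t (c + 1) := by
      have h1 : t (a + 1) + t m < t (a + 1) + t (c + 1) := by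
        calc t (a + 1) + t m = t (c + 1) + t a := hm.symm
          _ < t (c + 1) + t (a + 1) := add_lt_add_right (hmono (Nat.lt_succ_self a)) _
          _ = t (a + 1) + t (c + 1) := by abel
      exact lt_of_add_lt_add_left h1
    exact sandwich hmono hlow hupp
  · have hm : t m = t k + t 0 := by
      calc t m = -(-(t m) + t k + t 0) + t k + t 0 := by abel
        _ = -(0 : G) + t k + t 0 := by rw [heq]
        _ = t k + t 0 := by abel
    have hlow : t k < t m := hm ▸ lt_add_of_pos_right _ hpos
    have hupp : t m < t (k + 1) := by
      have h0k : t 0 < t k := hmono hk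
      calc t m = t k + t 0 := hm
        _ < t k + t k := add_lt_add_right h0k _
        _ ≤ t (k + 1) := hgrow k
    exact sandwich hmono hlow hupp

theorem notS_2t0 (hmono : StrictMono t) (hpos : 0 < t 0)
    (hgrow : ∀ n : ℕ, t n + t n ≤ t (n + 1)) : -(t 0 + t 0) ∉ Sbad t := by
  rintro (⟨a, k, hak, heq⟩ | ⟨k, hk, heq⟩)
  · obtain ⟨c, rfl⟩ : ∃ c, k = c + 1 := ⟨k - 1, by omega⟩
    have hac : a + 1 ≤ c := by omega
    have hm : t (c + 1) + t a = t (a + 1) + (t 0 + t 0) := by rw [← heq]; abel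
    have h1 : t (a + 1) + (t c + t a) ≤ t (a + 1) + (t 0 + t 0) := by
      calc t (a + 1) + (t c + t a) = (t c + t (a + 1)) + t a := by abel
        _ ≤ t (c + 1) + t a := add_le_add_left (gap hmono hgrow hac) _
        _ = t (a + 1) + (t 0 + t 0) := hm
    have h2 : t c + t a ≤ t 0 + t 0 := le_of_add_le_add_left h1
    have h3 : t 0 + t 0 < t c + t a := by
      calc t 0 + t 0 ≤ t 1 := hgrow 0
        _ ≤ t c := hmono.monotone (by omega)
        _ < t c + t a := lt_add_of_pos_right _ (tpos hmono hpos a)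
    exact absurd h2 (not_le.2 h3)
  · have hm : t k + t 0 = t 0 + t 0 := by
      calc t k + t 0 = (-(t 0 + t 0) + t k + t 0) + (t 0 + t 0) := by abel
        _ = 0 + (t 0 + t 0) := by rw [heq]
        _ = t 0 + t 0 := by abel
    have : t k = t 0 := le_of_add_le_add_right hm.le |>.antisymm (le_of_add_le_add_right hm.ge)
    exact absurd (hmono.injective this) (by omega)

theorem memS1 {a k : ℕ} (h : a + 1 < k) : t (a + 1) - t a - t k ∈ Sbad t :=
  Or.inl ⟨a, k, h, by abel⟩

theorem memS2 {k : ℕ} (h : 0 < k) : -(t 0) - t k ∈ Sbad t :=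
  Or.inr ⟨k, h, by abel⟩

theorem winB (hmono : StrictMono t) (hpos : 0 < t 0)
    (hgrow : ∀ n : ℕ, t n + t n ≤ t (n + 1)) (m : ℕ) : gwit t m - t m ∈ BsetMC t := by
  cases m with
  | zero =>
      have he : gwit t 0 - t 0 = -(t 0 + t 0) := by show -(t 0) - t 0 = _; abel
      rw [he]
      exact ⟨neg_lt_zero.2 (add_pos hpos hpos), notS_2t0 hmono hpos hgrow⟩
  | succ m =>
      have he : gwit t (m + 1) - t (m + 1) = -(t m) := by
        show t (m + 1) - t m - t (m + 1) = _; abel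
      rw [he]
      exact ⟨neg_lt_zero.2 (tpos hmono hpos m), notS_negt hmono hpos hgrow m⟩

theorem notB (hmono : StrictMono t) (hpos : 0 < t 0)
    (hgrow : ∀ n : ℕ, t n + t n ≤ t (n + 1)) {m n : ℕ} (h : n ≠ m) :
    gwit t m - t n ∉ BsetMC t := by
  cases m with
  | zero =>
      intro hB
      exact hB.2 (memS2 (Nat.pos_of_ne_zero h))
  | succ m =>
      rcases lt_trichotomy n (m + 1) with hn | hn | hn
      · -- n ≤ m : the element is nonnegative
        intro hB
        have h1 : t m + t n ≤ t (m + 1) := by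
          calc t m + t n ≤ t m + t m := add_le_add_right (hmono.monotone (by omega)) _
            _ ≤ t (m + 1) := hgrow m
        have h2 : (0 : G) ≤ gwit t (m + 1) - t n := by
          show (0 : G) ≤ t (m + 1) - t m - t n
          rw [sub_sub, sub_nonneg]
          exact h1
        exact absurd hB.1 (not_lt.2 h2)
      · exact absurd hn h
      · intro hB
        exact hB.2 (show gwit t (m + 1) - t n ∈ Sbad t from memS1 hn)

theorem coverB (hmono : StrictMono t) (hpos : 0 < t 0)
    (hgrow : ∀ n : ℕ, t n + t n ≤ t (n + 1)) (unbdd : ∀ x : G, ∃ n, x < t n) (gg : G) :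
    ∃ n, gg - t n ∈ BsetMC t := by
  by_cases hw : ∃ m, gg = gwit t m
  · obtain ⟨m, rfl⟩ := hw
    exact ⟨m, winB hmono hpos hgrow m⟩
  · push_neg at hw
    obtain ⟨n1, h1⟩ := unbdd gg
    obtain ⟨n2, h2⟩ := unbdd (-gg)
    set N := max n1 n2 + 1 with hNdef
    have hgN : gg < t N := h1.trans_le (hmono.monotone (by omega))
    have hgN' : -gg < t N := h2.trans_le (hmono.monotone (by omega))
    have hN1 : 1 ≤ N := by omega
    refine ⟨N + 2, ?_, ?_⟩
    · show gg - t (N + 2) < 0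
      rw [sub_neg]
      exact hgN.trans_le (hmono.monotone (by omega))
    · rintro (⟨a, k, hak, heq⟩ | ⟨k, hk, heq⟩)
      · -- first kind of bad element
        have hgg : gg + t k + t a = t (a + 1) + t (N + 2) := by rw [← heq]; abel
        rcases lt_trichotomy k (N + 2) with hkn | hkn | hkn
        · -- k ≤ N + 1
          have g1 : t (N + 1) + t k ≤ t (N + 2) := gap hmono hgrow (by omega)
          have step1 : (t (a + 1) + t (N + 1)) + t k ≤ (gg + t a) + t k := by
            calc (t (a + 1) + t (N + 1)) + t k = t (a + 1) + (t (N + 1) + t k) := by abel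
              _ ≤ t (a + 1) + t (N + 2) := add_le_add_right g1 _
              _ = (gg + t a) + t k := by rw [← hgg]; abel
          have step2 : t (a + 1) + t (N + 1) ≤ gg + t a := le_of_add_le_add_right step1
          have step3 : t a + t (N + 1) < t a + gg := by
            calc t a + t (N + 1) < t (a + 1) + t (N + 1) :=
                  add_lt_add_left (hmono (Nat.lt_succ_self a)) _
              _ ≤ gg + t a := step2
              _ = t a + gg := by abel
          have step4 : t (N + 1) < gg := lt_of_add_lt_add_left step3
          exact lt_irrefl gg ((hgN.trans_le (hmono.monotone (Nat.le_succ N))).trans step4)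
        · -- k = N + 2 : then gg is a witness, contradiction
          subst hkn
          have : gg = gwit t (a + 1) := by
            show gg = t (a + 1) - t a
            rw [← heq]; abel
          exact hw (a + 1) this
        · -- k ≥ N + 3
          obtain ⟨c, rfl⟩ : ∃ c, k = c + 1 := ⟨k - 1, by omega⟩
          have hca : a + 1 ≤ c := by omega
          have hcN : N + 2 ≤ c := by omega
          by_cases hc : a + 2 ≤ c
          · obtain ⟨b, rfl⟩ : ∃ b, c = b + 1 := ⟨c - 1, by omega⟩
            have hb1 : a + 1 ≤ b := by omega
            have hb2 : N + 1 ≤ b := by omega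
            have s1 : (gg + t (b + 1) + t a) + t (b + 1) ≤ t b + t (b + 1) := by
              calc (gg + t (b + 1) + t a) + t (b + 1)
                  = gg + (t (b + 1) + t (b + 1)) + t a := by abel
                _ ≤ gg + t (b + 1 + 1) + t a :=
                    add_le_add_left (add_le_add_right (hgrow (b + 1)) gg) (t a)
                _ = t (a + 1) + t (N + 2) := hgg
                _ ≤ t b + t (b + 1) :=
                    add_le_add (hmono.monotone hb1) (hmono.monotone (by omega))
            have s2 : gg + t (b + 1) + t a ≤ t b := le_of_add_le_add_right s1
            have s3 : (gg + t b + t a) + t b ≤ 0 + t b := by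
              calc (gg + t b + t a) + t b = gg + (t b + t b) + t a := by abel
                _ ≤ gg + t (b + 1) + t a :=
                    add_le_add_left (add_le_add_right (hgrow b) gg) (t a)
                _ ≤ t b := s2
                _ = 0 + t b := by abel
            have s4 : gg + t b + t a ≤ 0 := le_of_add_le_add_right s3
            have s5 : t b + t a ≤ -gg := by
              calc t b + t a = (gg + t b + t a) + (-gg) := by abel
                _ ≤ 0 + (-gg) := add_le_add_left s4 _
                _ = -gg := by abel
            have s6 : t N < -gg := by
              calc t N ≤ t b := hmono.monotone (by omega)
                _ < t b + t a := lt_add_of_pos_right _ (tpos hmono hpos a)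
                _ ≤ -gg := s5
            exact lt_irrefl _ (hgN'.trans s6)
          · obtain rfl : c = a + 1 := by omega
            -- hgg : gg + t (a+2) + t a = t (a+1) + t (N+2)
            have s1 : (gg + t (a + 1) + t a) + t (a + 1) ≤ t (N + 2) + t (a + 1) := by
              calc (gg + t (a + 1) + t a) + t (a + 1)
                  = gg + (t (a + 1) + t (a + 1)) + t a := by abel
                _ ≤ gg + t (a + 1 + 1) + t a :=
                    add_le_add_left (add_le_add_right (hgrow (a + 1)) gg) (t a)
                _ = t (a + 1) + t (N + 2) := hgg
                _ = t (N + 2) + t (a + 1) := by abel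
            have s2 : gg + t (a + 1) + t a ≤ t (N + 2) := le_of_add_le_add_right s1
            have s3 : (gg + t a) + t (a + 1) ≤ 0 + t (a + 1) := by
              calc (gg + t a) + t (a + 1) = gg + t (a + 1) + t a := by abel
                _ ≤ t (N + 2) := s2
                _ ≤ t (a + 1) := hmono.monotone (by omega)
                _ = 0 + t (a + 1) := by abel
            have s4 : gg + t a ≤ 0 := le_of_add_le_add_right s3
            have s5 : t a ≤ -gg := by
              calc t a = (gg + t a) + (-gg) := by abel
                _ ≤ 0 + (-gg) := add_le_add_left s4 _
                _ = -gg := by abel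
            have s6 : t N < -gg := by
              calc t N < t (N + 1) := hmono (Nat.lt_succ_self N)
                _ ≤ t a := hmono.monotone (by omega)
                _ ≤ -gg := s5
            exact lt_irrefl _ (hgN'.trans s6)
      · -- second kind of bad element
        have hgg : gg + t k + t 0 = t (N + 2) := by
          calc gg + t k + t 0 = (gg - t (N + 2) + t k + t 0) + t (N + 2) := by abel
            _ = 0 + t (N + 2) := by rw [heq]
            _ = t (N + 2) := by abel
        rcases lt_trichotomy k (N + 2) with hkn | hkn | hkn
        · -- k ≤ N + 1
          have g1 : t (N + 1) + t k ≤ t (N + 2) := gap hmono hgrow (by omega)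
          have step1 : t (N + 1) + t k ≤ (gg + t 0) + t k := by
            calc t (N + 1) + t k ≤ t (N + 2) := g1
              _ = (gg + t 0) + t k := by rw [← hgg]; abel
          have step2 : t (N + 1) ≤ gg + t 0 := le_of_add_le_add_right step1
          have h0N : t 0 < t N := lt_of_lt_of_le (hmono (by omega : 0 < 1)) (hmono.monotone hN1)
          have step3 : t N + t 0 < t 0 + gg := by
            calc t N + t 0 < t N + t N := add_lt_add_right h0N _
              _ ≤ t (N + 1) := hgrow N
              _ ≤ gg + t 0 := step2
              _ = t 0 + gg := by abel
          have step4 : t N < gg := by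
            have h' : t N + t 0 < gg + t 0 := by
              calc t N + t 0 < t 0 + gg := step3
                _ = gg + t 0 := by abel
            exact lt_of_add_lt_add_right h'
          exact lt_irrefl _ (hgN.trans step4)
        · subst hkn
          have : gg = gwit t 0 := by
            show gg = -(t 0)
            calc gg = (gg + t (N + 2) + t 0) - t (N + 2) - t 0 := by abel
              _ = t (N + 2) - t (N + 2) - t 0 := by rw [hgg]
              _ = -(t 0) := by abel
          exact hw 0 this
        · obtain ⟨c, rfl⟩ : ∃ c, k = c + 1 := ⟨k - 1, by omega⟩
          have hcN : N + 2 ≤ c := by omega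
          have s1 : (gg + t c + t 0) + t (N + 2) ≤ 0 + t (N + 2) := by
            calc (gg + t c + t 0) + t (N + 2)
                = gg + (t (N + 2) + t c) + t 0 := by abel
              _ ≤ gg + (t c + t c) + t 0 :=
                  add_le_add_left (add_le_add_right (add_le_add_left (hmono.monotone hcN) _) gg) _
              _ ≤ gg + t (c + 1) + t 0 :=
                  add_le_add_left (add_le_add_right (hgrow c) gg) _
              _ = t (N + 2) := hgg
              _ = 0 + t (N + 2) := by abel
          have s2 : gg + t c + t 0 ≤ 0 := le_of_add_le_add_right s1
          have s3 : t c + t 0 ≤ -gg := by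
            calc t c + t 0 = (gg + t c + t 0) + (-gg) := by abel
              _ ≤ 0 + (-gg) := add_le_add_left s2 _
              _ = -gg := by abel
          have s4 : t N < -gg := by
            calc t N ≤ t c := hmono.monotone (by omega)
              _ < t c + t 0 := lt_add_of_pos_right _ hpos
              _ ≤ -gg := s3
          exact lt_irrefl _ (hgN'.trans s4)

end MinCompAux

/-- In `ℤ^d` with the lex order, the sequence `t` is unbounded above. -/
theorem t_unbounded {d : ℕ} (hd : 0 < d) (t : ℕ → Zd d) (hmono : StrictMono t)
    (hgrow : ∀ n : ℕ, t n + t n ≤ t (n + 1))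
    (hcoord : ∃ n : ℕ, ∀ i : Fin d, 0 < ofLex (t n) i) :
    ∀ x : Zd d, ∃ n, x < t n := by
  obtain ⟨N, hN⟩ := hcoord
  intro x
  set K := Finset.univ.sup (fun i : Fin d => (ofLex x i).toNat) with hK
  have hcoords : ∀ i : Fin d, ofLex x i < 2 ^ K * ofLex (t N) i := by
    intro i
    have h1 : ofLex x i ≤ ((ofLex x i).toNat : ℤ) := Int.self_le_toNat _
    have h2 : (ofLex x i).toNat < 2 ^ K :=
      lt_of_lt_of_le Nat.lt_two_pow_self
        (Nat.pow_le_pow_right (by norm_num)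
          (Finset.le_sup (f := fun i : Fin d => (ofLex x i).toNat) (Finset.mem_univ i)))
    have h3 : (1 : ℤ) ≤ ofLex (t N) i := hN i
    calc ofLex x i ≤ ((ofLex x i).toNat : ℤ) := h1
      _ < 2 ^ K := by exact_mod_cast h2
      _ ≤ 2 ^ K * ofLex (t N) i := le_mul_of_one_le_right (by positivity) h3
  have hsm : ∀ k : ℕ, (2 ^ k) • t N ≤ t (N + k) := by
    intro k
    induction k with
    | zero => simp
    | succ k ih =>
        have he : (2 ^ (k + 1)) • t N = (2 ^ k) • t N + (2 ^ k) • t N := by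
          rw [pow_succ, mul_two, add_nsmul]
        calc (2 ^ (k + 1)) • t N = (2 ^ k) • t N + (2 ^ k) • t N := he
          _ ≤ t (N + k) + t (N + k) := add_le_add ih ih
          _ ≤ t (N + k + 1) := hgrow (N + k)
  refine ⟨N + K, lt_of_lt_of_le ?_ (hsm K)⟩
  refine ⟨⟨0, hd⟩, fun j hj => absurd hj (by simp [Fin.lt_def]), ?_⟩
  have := hcoords ⟨0, hd⟩
  simp [nsmul_eq_mul] at this ⊢; exact this

theorem stmt13 {d : ℕ} (hd : 0 < d) (t : ℕ → Zd d) (hmono : StrictMono t)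
    (hpos : 0 < t 0) (hgrow : ∀ n : ℕ, 2 • t n ≤ t (n + 1))
    (hcoord : ∃ n : ℕ, ∀ i : Fin d, 0 < ofLex (t n) i) :
    ∃ B : Set (Zd d), B ⊆ {x : Zd d | ¬ (0 : Zd d) ≤ x} ∧ B.Nonempty ∧
      Set.range t + B = Set.univ ∧
      ∀ a ∈ Set.range t, (Set.range t \ {a}) + B ≠ Set.univ := by
  letI : IsOrderedAddMonoid (Zd d) := inferInstance
  have hgrow' : ∀ n : ℕ, t n + t n ≤ t (n + 1) := fun n => by
    have := hgrow n; rwa [two_nsmul] at this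
  have unbdd : ∀ x : Zd d, ∃ n, x < t n := t_unbounded hd t hmono hgrow' hcoord
  refine ⟨BsetMC t, ?_, ?_, ?_, ?_⟩
  · intro b hb
    have hblt : b < (0 : Zd d) := hb.1
    exact fun hle => lt_irrefl b (lt_of_lt_of_le hblt hle)
  · exact ⟨gwit t 0 - t 0, winB hmono hpos hgrow' 0⟩
  · apply Set.eq_univ_iff_forall.2
    intro g
    obtain ⟨n, hn⟩ := coverB hmono hpos hgrow' unbdd g
    rw [Set.mem_add]
    exact ⟨t n, Set.mem_range_self n, g - t n, hn, by abel⟩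
  · rintro a ⟨m, rfl⟩ hEq
    have hx : gwit t m ∈ Set.range t \ {t m} + BsetMC t := hEq.symm ▸ Set.mem_univ _
    rw [Set.mem_add] at hx
    obtain ⟨x, hx1, b, hb, hxb⟩ := hx
    obtain ⟨⟨n, rfl⟩, hne⟩ := hx1
    have hnm : n ≠ m := fun h => hne (by rw [h]; rfl)
    have hbeq : b = gwit t m - t n := by rw [← hxb]; abel
    exact notB hmono hpos hgrow' hnm (hbeq ▸ hb)
end

section
/- Let t_0 < t_1 < ⋯ in ℤ^d (lexicographic order) with t_0 > 0, t_n ≥ 2t_{n-1} for all n ≥ 1, some t_n with all coordinates positive, and suppose at least one coordinate of the sequence t_n − 2t_{n-1} tends to infinity. Then T = {t_n : n ≥ 0} forms a co-minimal pair with some subset S of ℤ^d \ ℤ^d_{≥0}. -/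
open Pointwise

namespace Stmt14Aux

lemma rearr {G : Type*} [AddCommGroup G] {a b c e : G} (h : a = b)
    (habel : c - e = a - b) : c = e :=
  sub_eq_zero.mp (by rw [habel]; exact sub_eq_zero_of_eq h)

variable {d : ℕ} {t : ℕ → Zd d}

lemma tpos' (hmono : StrictMono t) (hpos : 0 < t 0) (n : ℕ) : 0 < t n :=
  hpos.trans_le (hmono.monotone (Nat.zero_le n))

lemma gap' (hgrow : ∀ n : ℕ, 2 • t n ≤ t (n + 1)) (n : ℕ) : t n + t n ≤ t (n + 1) := by
  have := hgrow n; rwa [two_nsmul] at this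

lemma cof' (hd : 0 < d) (hmono : StrictMono t)
    (hgrow : ∀ n : ℕ, 2 • t n ≤ t (n + 1))
    (hcoord : ∃ n : ℕ, ∀ i : Fin d, 0 < ofLex (t n) i)
    (x : Zd d) : ∃ N, ∀ n, N ≤ n → x < t n := by
  obtain ⟨n₀, h₀⟩ := hcoord
  have hsm : ∀ k : ℕ, (2 ^ k) • t n₀ ≤ t (n₀ + k) := by
    intro k
    induction k with
    | zero => simp
    | succ k ih =>
      have h1 : (2 ^ (k + 1)) • t n₀ = (2 ^ k) • t n₀ + (2 ^ k) • t n₀ := by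
        rw [pow_succ, mul_comm, mul_nsmul, two_nsmul, nsmul_add]
      calc (2 ^ (k + 1)) • t n₀ = (2 ^ k) • t n₀ + (2 ^ k) • t n₀ := h1
        _ ≤ t (n₀ + k) + t (n₀ + k) := add_le_add ih ih
        _ ≤ t (n₀ + k + 1) := gap' hgrow _
  set i0 : Fin d := ⟨0, hd⟩ with hi0
  set k : ℕ := (ofLex x i0).toNat + 1 with hk
  have hx : x < ((2 ^ k : ℕ) • t n₀ : Zd d) := by
    refine ⟨i0, fun j hj => absurd hj (by simp [hi0, Fin.lt_iff_val_lt_val]), ?_⟩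
    have hc : ofLex ((2 ^ k : ℕ) • t n₀ : Zd d) i0 = (2 ^ k : ℤ) * ofLex (t n₀) i0 := by
      have h5 : ofLex ((2 ^ k : ℕ) • t n₀ : Zd d) i0 = (2 ^ k : ℕ) • (ofLex (t n₀) i0) := rfl
      rw [h5, nsmul_eq_mul]; push_cast; ring
    show ofLex x i0 < ofLex ((2 ^ k : ℕ) • t n₀ : Zd d) i0
    rw [hc]
    have h6 : ofLex x i0 < (k : ℤ) := by
      have := Int.self_le_toNat (ofLex x i0)
      omega
    have h7 : (k : ℤ) ≤ (2 ^ k : ℤ) := by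
      exact_mod_cast (Nat.lt_two_pow_self (n := k)).le
    have h8 : (2 ^ k : ℤ) ≤ (2 ^ k : ℤ) * ofLex (t n₀) i0 :=
      le_mul_of_one_le_right (by positivity) (by have := h₀ i0; omega)
    exact h6.trans_le (h7.trans h8)
  exact ⟨n₀ + k, fun n hn => hx.trans_le ((hsm k).trans (hmono.monotone hn))⟩

lemma key' (hd : 0 < d) (hmono : StrictMono t) (hpos : 0 < t 0)
    (hgrow : ∀ n : ℕ, 2 • t n ≤ t (n + 1))
    (hcoord : ∃ n : ℕ, ∀ i : Fin d, 0 < ofLex (t n) i)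
    (i : Fin d)
    (hti : ∀ z : ℤ, ∃ N, ∀ n, N ≤ n → z < (ofLex (t (n + 1) - 2 • t n) : Fin d → ℤ) i)
    (c : Zd d) (hc : ∀ m', c ≠ -(t m')) :
    ∃ N, ∀ n, N ≤ n → ∀ m m' : ℕ, t m - t m' ≠ t n + c := by
  obtain ⟨N₁, hN₁⟩ := cof' hd hmono hgrow hcoord c
  obtain ⟨N₁', hN₁'⟩ := cof' hd hmono hgrow hcoord (-c)
  obtain ⟨N₂, hN₂⟩ := hti (ofLex c i)
  refine ⟨max (max N₁ N₁' + 1) N₂, fun n hn m m' heq => ?_⟩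
  obtain ⟨p, rfl⟩ : ∃ p, n = p + 1 := ⟨n - 1, by omega⟩
  have hcp : c < t p := hN₁ p (by omega)
  have hcp1 : c < t (p + 1) := hN₁ (p + 1) (by omega)
  have hncp : -c < t p := hN₁' p (by omega)
  have hncp1 : -c < t (p + 1) := hN₁' (p + 1) (by omega)
  have h01 : 0 < t (p + 1) + c := by
    have := add_lt_add_left hncp1 c; simpa using this
  have h0p : 0 < t p + c := by
    have := add_lt_add_left hncp c; simpa using this
  have hmm' : t m' < t m := by
    have h9 : 0 < t m - t m' := by rw [heq]; exact h01
    exact sub_pos.mp h9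
  have hm'm : m' < m := hmono.lt_iff_lt.mp hmm'
  obtain ⟨q, rfl⟩ : ∃ q, m = q + 1 := ⟨m - 1, by omega⟩
  have hup : t (p + 1) + c < t (q + 1) := by
    rw [← heq]; exact sub_lt_self _ (tpos' hmono hpos m')
  have hlow : t q ≤ t (p + 1) + c := by
    rw [← heq]
    calc t q ≤ t (q + 1) - t q := le_sub_iff_add_le.mpr (gap' hgrow q)
      _ ≤ t (q + 1) - t m' := sub_le_sub_left (hmono.monotone (by omega)) _
  have hq1 : q < p + 2 := by
    by_contra h
    push_neg at h
    have hg1 : t (p + 1) + t (p + 1) ≤ t (p + 2) := gap' hgrow (p + 1)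
    have h2 : t (p + 2) ≤ t q := hmono.monotone (by omega)
    have h3 : t (p + 1) + c < t (p + 1) + t (p + 1) := add_lt_add_right hcp1 _
    exact (hlow.trans_lt ((h3.trans_le hg1).trans_le h2)).false
  have hq2 : p ≤ q := by
    by_contra h
    push_neg at h
    have h2 : t (q + 1) ≤ t p := hmono.monotone (by omega)
    have h3 : t p < t (p + 1) + c := by
      have h4 : t p + t p ≤ t (p + 1) := gap' hgrow p
      have h5 : t p + 0 < t p + (t p + c) := add_lt_add_right h0p _
      have h6 : t p + (t p + c) = t p + t p + c := by abel
      have h7 : t p + t p + c ≤ t (p + 1) + c := add_le_add_left h4 c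
      have h9 := h5.trans_le (h6 ▸ h7); rw [add_zero] at h9; exact h9
    exact ((hup.trans_le h2).trans h3).false
  rcases (by omega : q = p ∨ q = p + 1) with rfl | rfl
  · -- m = n : forces c = -(t m')
    have h8 : t (q + 1) + -(t m') = t (q + 1) + c := by
      rw [← sub_eq_add_neg]; exact heq
    exact hc m' ((add_left_cancel h8).symm)
  · -- m = n + 1
    have hm'v : t m' = t (p + 2) - (t (p + 1) + c) := by
      rw [← heq]; abel
    have hm'lt : m' < p + 2 := by
      by_contra h
      push_neg at h
      have h2 : t (p + 2) ≤ t m' := hmono.monotone h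
      have h3 : t m' < t (p + 2) := by rw [hm'v]; exact sub_lt_self _ h01
      exact (h2.trans_lt h3).false
    have hm'gt : p < m' := by
      have h3 : t p < t m' := by
        rw [hm'v]
        have h4 : t (p + 1) + t (p + 1) ≤ t (p + 2) := gap' hgrow (p + 1)
        have h5 : t (p + 1) - c ≤ t (p + 2) - (t (p + 1) + c) := by
          have h5a := sub_le_sub_right h4 (t (p + 1) + c)
          have h5b : t (p + 1) + t (p + 1) - (t (p + 1) + c) = t (p + 1) - c := by abel
          rwa [h5b] at h5a
        have h6 : t p < t (p + 1) - c := by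
          have h7 : t p + c < t (p + 1) := (add_lt_add_right hcp (t p)).trans_le (gap' hgrow p)
          exact lt_sub_iff_add_lt.mpr h7
        exact h6.trans_le h5
      exact hmono.lt_iff_lt.mp h3
    have hm' : m' = p + 1 := by omega
    subst hm'
    have hfin : ofLex c i < (ofLex (t (p + 1 + 1) - 2 • t (p + 1)) : Fin d → ℤ) i := hN₂ (p + 1) (by omega)
    have hceq : c = t (p + 1 + 1) - (2 • t (p + 1) : Zd d) := by
      rw [two_nsmul]
      have h8 : t (p + 1) + c = t (p + 1) + (t (p + 2) - (t (p + 1) + t (p + 1))) := by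
        rw [← heq]; abel
      exact add_left_cancel h8
    rw [← hceq] at hfin
    exact hfin.false
lemma keyList' (hd : 0 < d) (hmono : StrictMono t) (hpos : 0 < t 0)
    (hgrow : ∀ n : ℕ, 2 • t n ≤ t (n + 1))
    (hcoord : ∃ n : ℕ, ∀ i : Fin d, 0 < ofLex (t n) i)
    (i : Fin d)
    (hti : ∀ z : ℤ, ∃ N, ∀ n, N ≤ n → z < (ofLex (t (n + 1) - 2 • t n) : Fin d → ℤ) i) :
    ∀ (L : List (Zd d)) (x : Zd d), (∀ s' ∈ L, ∀ m, x ≠ t m + s') →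
      ∃ N, ∀ n, N ≤ n → ∀ s' ∈ L, ∀ m m' : ℕ, t m - t m' ≠ t n + (s' - x) := by
  intro L
  induction L with
  | nil => exact fun x _ => ⟨0, by simp⟩
  | cons a L ih =>
    intro x hx
    obtain ⟨N₁, hN₁⟩ := ih x (fun s' hs' => hx s' (List.mem_cons_of_mem a hs'))
    have hca : ∀ m', a - x ≠ -(t m') := by
      intro m' h
      exact hx a (List.mem_cons_self) m' (rearr h.symm (by abel))
    obtain ⟨N₂, hN₂⟩ := key' hd hmono hpos hgrow hcoord i hti (a - x) hca
    refine ⟨max N₁ N₂, fun n hn s' hs' m m' => ?_⟩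
    rcases List.mem_cons.mp hs' with rfl | hmem
    · exact hN₂ n (le_trans (le_max_right _ _) hn) m m'
    · exact hN₁ n (le_trans (le_max_left _ _) hn) s' hmem m m'

lemma stepEx (hd : 0 < d) (hmono : StrictMono t) (hpos : 0 < t 0)
    (hgrow : ∀ n : ℕ, 2 • t n ≤ t (n + 1))
    (hcoord : ∃ n : ℕ, ∀ i : Fin d, 0 < ofLex (t n) i)
    (i : Fin d)
    (hti : ∀ z : ℤ, ∃ N, ∀ n, N ≤ n → z < (ofLex (t (n + 1) - 2 • t n) : Fin d → ℤ) i) :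
    ∀ (L : List (Zd d)) (x : Zd d), (∀ s' ∈ L, ∀ m, x ≠ t m + s') →
      ∃ s : Zd d, s < 0 ∧ (∃ n, x = t n + s) ∧
        ∀ s' ∈ L, ∀ m m' : ℕ, t m + s ≠ t m' + s' := by
  intro L x hx
  obtain ⟨N₁, hN₁⟩ := keyList' hd hmono hpos hgrow hcoord i hti L x hx
  obtain ⟨N₂, hN₂⟩ := cof' hd hmono hgrow hcoord x
  refine ⟨x - t (max N₁ N₂), sub_neg.mpr (hN₂ _ (le_max_right _ _)),
    ⟨max N₁ N₂, by abel⟩, ?_⟩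
  intro s' hs' m m' heq
  exact hN₁ (max N₁ N₂) (le_max_left _ _) s' hs' m m' (rearr heq (by abel))
/-- iterate a list-building function -/
def buildF {α : Type*} (g : List α → ℕ → List α) : ℕ → List α :=
  fun k => Nat.rec [] (fun k ih => g ih k) k

end Stmt14Aux

open Stmt14Aux in
theorem stmt14 {d : ℕ} (hd : 0 < d) (t : ℕ → Zd d) (hmono : StrictMono t)
    (hpos : 0 < t 0) (hgrow : ∀ n : ℕ, 2 • t n ≤ t (n + 1))
    (hcoord : ∃ n : ℕ, ∀ i : Fin d, 0 < ofLex (t n) i)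
    (htend : ∃ i : Fin d,
      Filter.Tendsto (fun n : ℕ => (ofLex (t (n + 1) - 2 • t n) : Fin d → ℤ) i)
        Filter.atTop Filter.atTop) :
    ∃ S : Set (Zd d), S ⊆ {x : Zd d | ¬ (0 : Zd d) ≤ x} ∧
      IsCoMinimalPair (Set.range t) S := by
  classical
  obtain ⟨i, hi⟩ := htend
  have hti : ∀ z : ℤ, ∃ N, ∀ n, N ≤ n →
      z < (ofLex (t (n + 1) - 2 • t n) : Fin d → ℤ) i := by
    intro z
    obtain ⟨N, hN⟩ := Filter.eventually_atTop.mp (hi.eventually_gt_atTop z)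
    exact ⟨N, fun n hn => hN n hn⟩
  have hstep := stepEx hd hmono hpos hgrow hcoord i hti
  choose stepF hQ1 hQ2 hQ3 using hstep
  obtain ⟨e, he⟩ : ∃ e : ℕ → Zd d, Function.Surjective e := by
    have : Countable (Zd d) := Countable.of_equiv _ toLex
    exact exists_surjective_nat _
  set g : List (Zd d) → ℕ → List (Zd d) := fun L k =>
    @dite _ (∀ s' ∈ L, ∀ m, e k ≠ t m + s') (Classical.propDecidable _)
      (fun h => stepF L (e k) h :: L) (fun _ => L) with hg
  set F : ℕ → List (Zd d) := buildF g with hF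
  have hFs : ∀ k, F (k + 1) = g (F k) k := fun k => rfl
  have hsub1 : ∀ k, ∀ s ∈ F k, s ∈ F (k + 1) := by
    intro k s hs
    rw [hFs k, hg]
    dsimp only
    split
    · exact List.mem_cons_of_mem _ hs
    · exact hs
  have hsub : ∀ j k, j ≤ k → ∀ s ∈ F j, s ∈ F k := by
    intro j k hjk
    induction k, hjk using Nat.le_induction with
    | base => exact fun s hs => hs
    | succ k hk ih => exact fun s hs => hsub1 k s (ih s hs)
  have hinv : ∀ k, (∀ s ∈ F k, s < 0) ∧
      (∀ s ∈ F k, ∀ s' ∈ F k, ∀ m m' : ℕ, t m + s = t m' + s' → s = s') := by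
    intro k
    induction k with
    | zero =>
      have h0 : F 0 = [] := rfl
      rw [h0]
      exact ⟨fun s hs => absurd hs List.not_mem_nil,
        fun s hs => absurd hs List.not_mem_nil⟩
    | succ k ih =>
      rw [hFs k, hg]
      dsimp only
      rcases Classical.em (∀ s' ∈ F k, ∀ m, e k ≠ t m + s') with h | h
      · rw [dif_pos h]
        constructor
        · intro s hs
          rcases List.mem_cons.mp hs with rfl | hs
          · exact hQ1 _ _ h
          · exact ih.1 s hs
        · intro s hs s' hs' m m' heq
          rcases List.mem_cons.mp hs with rfl | hs <;>
            rcases List.mem_cons.mp hs' with rfl | hs'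
          · rfl
          · exact absurd heq (hQ3 _ _ h s' hs' m m')
          · exact absurd heq.symm (hQ3 _ _ h s hs m' m)
          · exact ih.2 s hs s' hs' m m' heq
      · rw [dif_neg h]
        exact ih
  have hcover : ∀ k, ∃ s ∈ F (k + 1), ∃ m, e k = t m + s := by
    intro k
    rw [hFs k, hg]
    dsimp only
    rcases Classical.em (∀ s' ∈ F k, ∀ m, e k ≠ t m + s') with h | h
    · rw [dif_pos h]
      obtain ⟨n, hn⟩ := hQ2 (F k) (e k) h
      exact ⟨stepF (F k) (e k) h, List.mem_cons_self, n, hn⟩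
    · rw [dif_neg h]
      push_neg at h
      obtain ⟨s', hs', m, hm⟩ := h
      exact ⟨s', hs', m, hm⟩
  set S : Set (Zd d) := {s : Zd d | ∃ k, s ∈ F k} with hS
  have hSneg : ∀ s ∈ S, s < 0 := by
    rintro s ⟨k, hk⟩
    exact (hinv k).1 s hk
  have hScov : ∀ x : Zd d, ∃ s ∈ S, ∃ m, x = t m + s := by
    intro x
    obtain ⟨k, rfl⟩ := he x
    obtain ⟨s, hs, m, hm⟩ := hcover k
    exact ⟨s, ⟨k + 1, hs⟩, m, hm⟩
  have hSuniq : ∀ s ∈ S, ∀ s' ∈ S, ∀ m m' : ℕ,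
      t m + s = t m' + s' → s = s' ∧ m = m' := by
    rintro s ⟨k, hk⟩ s' ⟨k', hk'⟩ m m' heq
    have hk1 : s ∈ F (max k k') := hsub k _ (le_max_left _ _) s hk
    have hk2 : s' ∈ F (max k k') := hsub k' _ (le_max_right _ _) s' hk'
    have hss : s = s' := (hinv (max k k')).2 s hk1 s' hk2 m m' heq
    subst hss
    exact ⟨rfl, hmono.injective (add_right_cancel heq)⟩
  refine ⟨S, ?_, ?_, ?_, ?_⟩
  · intro s hs
    simp only [Set.mem_setOf_eq]
    intro hle
    exact (hle.trans_lt (hSneg s hs)).false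
  · apply Set.eq_univ_of_forall
    intro x
    obtain ⟨s, hsS, m, hm⟩ := hScov x
    rw [Set.mem_add]
    exact ⟨t m, ⟨m, rfl⟩, s, hsS, hm.symm⟩
  · rintro a ⟨j, rfl⟩ hcontra
    obtain ⟨s₀, hs₀, m₀, hm₀⟩ := hScov 0
    have hx : (t j + s₀) ∈ (Set.range t \ {t j}) + S := by
      rw [hcontra]; exact Set.mem_univ _
    rw [Set.mem_add] at hx
    obtain ⟨b, hb, s', hs', hsum⟩ := hx
    obtain ⟨m, rfl⟩ := hb.1
    obtain ⟨hss, hmm⟩ := hSuniq s' hs' s₀ hs₀ m j hsum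
    exact hb.2 (Set.mem_singleton_iff.mpr (by rw [hmm]))
  · rintro b hbS hcontra
    have hx : (t 0 + b) ∈ Set.range t + (S \ {b}) := by
      rw [hcontra]; exact Set.mem_univ _
    rw [Set.mem_add] at hx
    obtain ⟨a, ⟨m, rfl⟩, s', hs', hsum⟩ := hx
    obtain ⟨hss, -⟩ := hSuniq s' hs'.1 b hbS m 0 hsum
    exact hs'.2 (Set.mem_singleton_iff.mpr hss)
end

section
/- Every infinite subset of ℤ^d contains uncountably many subsets each of which is part of a co-minimal pair in ℤ^d; in particular, every infinite subset of ℤ^d has uncountably many subsets admitting a minimal complement. -/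
open Pointwise

/- ### Auxiliary machinery -/

section Greedy

variable {G : Type*} [AddCommGroup G]

/-- uniqueness of representation invariant -/
def MyUniq (s : ℕ → G) (C : Set G) : Prop :=
  ∀ k c k' c', c ∈ C → c' ∈ C → s k + c = s k' + c' → k = k' ∧ c = c'

/-- the set of elements represented as `s k + c`, `c ∈ C`. -/
def MyReps (s : ℕ → G) (C : Set G) : Set G := {y | ∃ k, ∃ c ∈ C, y = s k + c}

lemma myReps_mono (s : ℕ → G) {C C' : Set G} (h : C ⊆ C') : MyReps s C ⊆ MyReps s C' := by
  rintro x ⟨k, c, hc, rfl⟩; exact ⟨k, c, h hc, rfl⟩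

lemma step_lemma (s : ℕ → G) (hinj : Function.Injective s)
    (hBad : ∀ y : G, {k | ∃ j b, j ≠ k ∧ s k - s j + s b = y}.Finite)
    (C : Set G) (hC : C.Finite) (hU : MyUniq s C) (x : G) :
    ∃ C' : Set G, C ⊆ C' ∧ C'.Finite ∧ MyUniq s C' ∧ x ∈ MyReps s C' := by
  by_cases hx : x ∈ MyReps s C
  · exact ⟨C, subset_rfl, hC, hU, hx⟩
  · have hfin : (⋃ c' ∈ C, {k | ∃ j b, j ≠ k ∧ s k - s j + s b = x - c'}).Finite :=
      hC.biUnion fun c' _ => hBad (x - c')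
    obtain ⟨K, hK⟩ := hfin.infinite_compl.nonempty
    have hKnot : K ∉ ⋃ c' ∈ C, {k | ∃ j b, j ≠ k ∧ s k - s j + s b = x - c'} := hK
    -- key mixed-case impossibility
    have hmix : ∀ k k' (c' : G), c' ∈ C → s k + (x - s K) = s k' + c' → False := by
      intro k k' c' hc' heq
      by_cases hkK : k = K
      · subst hkK
        apply hx
        refine ⟨k', c', hc', ?_⟩
        have : s k + (x - s k) = x := by abel
        rw [this] at heq
        exact heq
      · apply hKnot
        refine Set.mem_biUnion hc' ?_
        refine ⟨k, k', hkK, ?_⟩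
        have : s k + (x - s K) = s k' + c' := heq
        calc s K - s k + s k' = (s k' + c') + (s K - s k - c') := by abel
          _ = (s k + (x - s K)) + (s K - s k - c') := by rw [this]
          _ = x - c' := by abel
    refine ⟨insert (x - s K) C, Set.subset_insert _ _, hC.insert _, ?_,
      ⟨K, x - s K, Set.mem_insert _ _, by abel⟩⟩
    rintro k c k' c' hc hc' heq
    rcases Set.mem_insert_iff.mp hc with rfl | hcC
    · rcases Set.mem_insert_iff.mp hc' with rfl | hc'C
      · have : s k = s k' := by
          have := heq
          exact add_right_cancel this
        exact ⟨hinj this, rfl⟩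
      · exact absurd heq fun h => hmix k k' c' hc'C h
    · rcases Set.mem_insert_iff.mp hc' with rfl | hc'C
      · exact absurd heq.symm fun h => hmix k' k c hcC h
      · exact hU k c k' c' hcC hc'C heq

/-- the recursive chain of finite partial complements -/
noncomputable def chainF (s : ℕ → G) (g : ℕ → G)
    (next : ∀ C : Set G, C.Finite → MyUniq s C → G → Set G)
    (hfin : ∀ C hC hU x, (next C hC hU x).Finite)
    (hun : ∀ C hC hU x, MyUniq s (next C hC hU x)) :
    ℕ → {C : Set G // C.Finite ∧ MyUniq s C}
  | 0 => ⟨∅, Set.finite_empty, fun k c k' c' hc _ _ => absurd hc (Set.notMem_empty c)⟩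
  | (n+1) =>
      let p := chainF s g next hfin hun n
      ⟨next p.1 p.2.1 p.2.2 (g n), hfin _ _ _ _, hun _ _ _ _⟩

lemma exists_tiling [Countable G] (s : ℕ → G) (hinj : Function.Injective s)
    (hBad : ∀ y : G, {k | ∃ j b, j ≠ k ∧ s k - s j + s b = y}.Finite) :
    ∃ C : Set G, (∀ x, x ∈ MyReps s C) ∧ MyUniq s C := by
  have : Nonempty G := ⟨0⟩
  obtain ⟨g, hg⟩ := exists_surjective_nat G
  choose next h1 h2 h3 h4 using step_lemma s hinj hBad
  set F := chainF s g next h2 h3 with hF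
  have hsucc : ∀ n, (F (n+1)).1 = next (F n).1 (F n).2.1 (F n).2.2 (g n) := fun n => rfl
  have hmono : ∀ n, (F n).1 ⊆ (F (n+1)).1 := by
    intro n; rw [hsucc n]; exact h1 _ _ _ _
  have hmono' : ∀ m n, m ≤ n → (F m).1 ⊆ (F n).1 := by
    intro m n hmn
    induction n with
    | zero => simpa [Nat.le_zero.mp hmn] using subset_rfl
    | succ n ih =>
      rcases Nat.lt_or_ge m (n+1) with h | h
      · exact (ih (Nat.lt_succ_iff.mp h)).trans (hmono n)
      · have : m = n + 1 := le_antisymm hmn h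
        subst this; exact subset_rfl
  have hcov : ∀ n, g n ∈ MyReps s (F (n+1)).1 := by
    intro n; rw [hsucc n]; exact h4 _ _ _ _
  refine ⟨⋃ n, (F n).1, ?_, ?_⟩
  · intro x
    obtain ⟨n, rfl⟩ := hg x
    exact myReps_mono s (Set.subset_iUnion (fun n => (F n).1) (n+1)) (hcov n)
  · rintro k c k' c' hc hc' heq
    obtain ⟨n, hn⟩ := Set.mem_iUnion.mp hc
    obtain ⟨n', hn'⟩ := Set.mem_iUnion.mp hc'
    exact (F (max n n')).2.2 k c k' c'
      (hmono' n _ (le_max_left n n') hn) (hmono' n' _ (le_max_right n n') hn') heq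

lemma cominimal_of_tiling (s : ℕ → G) (C : Set G)
    (hcov : ∀ x, x ∈ MyReps s C) (hU : MyUniq s C) :
    IsCoMinimalPair (Set.range s) C := by
  refine ⟨?_, ?_, ?_⟩
  · apply Set.eq_univ_iff_forall.mpr
    intro x
    obtain ⟨k, c, hc, hx⟩ := hcov x
    exact Set.mem_add.mpr ⟨s k, ⟨k, rfl⟩, c, hc, hx.symm⟩
  · rintro a ⟨n, rfl⟩ heq
    obtain ⟨k0, c0, hc0, _⟩ := hcov 0
    have hx : s n + c0 ∈ (Set.range s \ {s n}) + C := heq ▸ Set.mem_univ _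
    obtain ⟨a', ha', c', hc', hsum⟩ := Set.mem_add.mp hx
    obtain ⟨⟨m, rfl⟩, hne⟩ := ha'
    obtain ⟨hmn, -⟩ := hU m c' n c0 hc' hc0 hsum
    exact hne (by simp [hmn])
  · rintro c hc heq
    have hx : s 0 + c ∈ Set.range s + (C \ {c}) := heq ▸ Set.mem_univ _
    obtain ⟨a', ⟨m, rfl⟩, c', ⟨hc', hcne⟩, hsum⟩ := Set.mem_add.mp hx
    obtain ⟨-, hcc⟩ := hU m c' 0 c hc' hc hsum
    exact hcne (by simp [hcc])

end Greedy

lemma bad_finite_int (m : ℕ → ℤ) (h0 : 1 ≤ m 0) (hstep : ∀ k, 3 * m k + 1 ≤ m (k+1)) (y : ℤ) :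
    {k | ∃ j b, j ≠ k ∧ m k - m j + m b = y}.Finite := by
  have h1 : ∀ k, 1 ≤ m k := by
    intro k
    induction k with
    | zero => exact h0
    | succ n ih => have := hstep n; linarith
  have hmono : Monotone m := by
    apply monotone_nat_of_le_succ
    intro n; have := hstep n; have := h1 n; linarith
  have hsm : StrictMono m := by
    apply strictMono_nat_of_lt_succ
    intro n; have := hstep n; have := h1 n; linarith
  have hk1 : ∀ k : ℕ, (k : ℤ) + 1 ≤ m k := by
    intro k
    induction k with
    | zero => simpa using h0
    | succ n ih =>
      have := hstep n; have := h1 n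
      push_cast
      linarith
  apply Set.Finite.subset (Set.finite_Iic (4 * y.natAbs + 4))
  rintro k ⟨j, b, hjk, he⟩
  simp only [Set.mem_Iic]
  by_contra hk
  push_neg at hk
  have hky : (4 : ℤ) * |y| + 6 ≤ m k := by
    have h := hk1 k
    have : (4 * y.natAbs + 4 : ℕ) < k := hk
    have h2 : (4 : ℤ) * |y| + 5 ≤ (k : ℤ) := by
      rw [Int.abs_eq_natAbs]
      exact_mod_cast this
    linarith
  have hyabs1 : y ≤ |y| := le_abs_self y
  have hyabs2 : -|y| ≤ y := neg_abs_le y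
  have hyabs3 : 0 ≤ |y| := abs_nonneg y
  rcases Nat.lt_or_ge j k with hjlt | hjge
  · -- j < k
    have hj1 : 3 * m j + 1 ≤ m k := (hstep j).trans (hmono hjlt)
    have hb := h1 b
    -- m b = y - m k + m j
    have : m b = y - m k + m j := by linarith
    linarith
  · have hjgt : k < j := lt_of_le_of_ne hjge (fun h => hjk h.symm)
    obtain ⟨j', rfl⟩ : ∃ j', j = j' + 1 := ⟨j - 1, by omega⟩
    have hbj : m b < m (j' + 1) := by
      -- m b = y + m (j'+1) - m k
      have : m b = y + m (j' + 1) - m k := by linarith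
      linarith
    have hblt : b < j' + 1 := by
      by_contra hb
      push_neg at hb
      exact absurd (hmono hb) (not_le.mpr hbj)
    have hbj' : m b ≤ m j' := hmono (Nat.lt_succ_iff.mp hblt)
    have hj'step : 3 * m j' + 1 ≤ m (j' + 1) := hstep j'
    have hkj' : m k ≤ m j' := hmono (Nat.lt_succ_iff.mp hjgt)
    have h1j' := h1 j'
    linarith

/-- the recursively selected fast-growing sequence -/
noncomputable def seqRec {G : Type*} (sel : ℤ → G) (Φ : G → ℤ) : ℕ → G
  | 0 => sel 0
  | (n+1) => sel (3 * Φ (seqRec sel Φ n))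

lemma exists_cominimal_of_growth {G : Type*} [AddCommGroup G] [Countable G]
    (Φ : G →+ ℤ) (s : ℕ → G)
    (h0 : 1 ≤ Φ (s 0)) (hstep : ∀ k, 3 * Φ (s k) + 1 ≤ Φ (s (k+1))) :
    ∃ C, IsCoMinimalPair (Set.range s) C := by
  have h1 : ∀ k, 1 ≤ Φ (s k) := by
    intro k
    induction k with
    | zero => exact h0
    | succ n ih => have := hstep n; linarith
  have hsm : StrictMono (fun k => Φ (s k)) := by
    apply strictMono_nat_of_lt_succ
    intro n; have := hstep n; have := h1 n; show Φ (s n) < Φ (s (n+1)); linarith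
  have hinj : Function.Injective s := by
    intro a b hab
    exact hsm.injective (by simp [hab])
  have hBad : ∀ y : G, {k | ∃ j b, j ≠ k ∧ s k - s j + s b = y}.Finite := by
    intro y
    apply (bad_finite_int (fun k => Φ (s k)) h0 hstep (Φ y)).subset
    rintro k ⟨j, b, hjk, he⟩
    exact ⟨j, b, hjk, by rw [← he]; simp [map_sub, map_add]⟩
  obtain ⟨C, hcov, hU⟩ := exists_tiling s hinj hBad
  exact ⟨C, cominimal_of_tiling s C hcov hU⟩

/-- the bit-encoded strictly monotone sequences -/
def bitSeq (b : ℕ → Bool) : ℕ → ℕ := fun n => 2 * n + (Finset.range n).sum (fun i => cond (b i) 1 0)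

lemma bitSeq_succ (b : ℕ → Bool) (n : ℕ) :
    bitSeq b (n + 1) = bitSeq b n + 2 + cond (b n) 1 0 := by
  unfold bitSeq
  rw [Finset.sum_range_succ]
  ring

lemma bitSeq_strictMono (b : ℕ → Bool) : StrictMono (bitSeq b) := by
  apply strictMono_nat_of_lt_succ
  intro n
  rw [bitSeq_succ]
  cases b n <;> simp <;> omega

lemma bitSeq_injective : Function.Injective bitSeq := by
  intro b b' h
  funext n
  have h1 : bitSeq b (n + 1) = bitSeq b' (n + 1) := by rw [h]
  have h2 : bitSeq b n = bitSeq b' n := by rw [h]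
  rw [bitSeq_succ, bitSeq_succ, h2] at h1
  cases hb : b n <;> cases hb' : b' n <;> rw [hb, hb'] at h1 <;> simp at h1 <;> rfl

lemma not_countable_bool : ¬ Countable (ℕ → Bool) := by
  intro h
  have hinj : Function.Injective (fun (S : Set ℕ) (n : ℕ) => @decide (n ∈ S) (Classical.dec _)) := by
    intro S T hST
    ext n
    have := congrFun hST n
    simp only [decide_eq_decide] at this
    exact this
  have : Countable (Set ℕ) := hinj.countable
  obtain ⟨f, hf⟩ := exists_surjective_nat (Set ℕ)
  exact Function.cantor_surjective f hf

lemma not_countable_of_boolInj {β : Type*} (T : Set β) (f : (ℕ → Bool) → β)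
    (hinj : Function.Injective f) (hr : ∀ b, f b ∈ T) : ¬ T.Countable := by
  intro hT
  have h1 : Countable T := hT.to_subtype
  have h2 : Function.Injective (fun b => (⟨f b, hr b⟩ : T)) := by
    intro a b h
    exact hinj (congrArg Subtype.val h)
  exact not_countable_bool h2.countable

theorem stmt15 {d : ℕ} (hd : 0 < d) (A : Set (Zd d)) (hA : A.Infinite) :
    ¬ {B : Set (Zd d) | B ⊆ A ∧ ∃ C : Set (Zd d), IsCoMinimalPair B C}.Countable ∧
    ¬ {B : Set (Zd d) | B ⊆ A ∧ ∃ C : Set (Zd d), B + C = Set.univ ∧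
        ∀ b ∈ B, (B \ {b}) + C ≠ Set.univ}.Countable := by
  haveI : Countable (Zd d) := inferInstanceAs (Countable (Fin d → ℤ))
  -- find a coordinate with infinite image
  have hcoord : ∃ i : Fin d, ((fun v : Zd d => ofLex v i) '' A).Infinite := by
    by_contra h
    push_neg at h
    have h : ∀ i : Fin d, ((fun v : Zd d => ofLex v i) '' A).Finite := h
    have hS : (Set.pi Set.univ (fun i : Fin d => (fun v : Zd d => ofLex v i) '' A)).Finite :=
      Set.Finite.pi (fun i => h i)
    have hsub : A ⊆ (fun w : Fin d → ℤ => toLex w) '' (Set.pi Set.univ (fun i : Fin d => (fun v : Zd d => ofLex v i) '' A)) := by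
      intro a ha
      exact ⟨ofLex a, fun i _ => ⟨a, ha, rfl⟩, rfl⟩
    exact hA ((hS.image _).subset hsub)
  obtain ⟨i, hI⟩ := hcoord
  -- get a functional unbounded above on A
  have hΦ : ∃ Φ : Zd d →+ ℤ, ∀ z : ℤ, ∃ a ∈ A, z < Φ a := by
    have hdir : (∀ z : ℤ, ∃ x ∈ ((fun v : Zd d => ofLex v i) '' A), z < x) ∨
        (∀ z : ℤ, ∃ x ∈ ((fun v : Zd d => ofLex v i) '' A), x < z) := by
      by_contra h
      push_neg at h
      obtain ⟨⟨z1, hz1⟩, ⟨z2, hz2⟩⟩ := h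
      apply hI
      apply (Set.finite_Icc z2 z1).subset
      intro x hx
      exact ⟨hz2 x hx, hz1 x hx⟩
    rcases hdir with h | h
    · refine ⟨AddMonoidHom.mk' (fun v => ofLex v i) (fun a b => rfl), ?_⟩
      intro z
      obtain ⟨x, ⟨a, ha, rfl⟩, hz⟩ := h z
      exact ⟨a, ha, hz⟩
    · refine ⟨AddMonoidHom.mk' (fun v => -(ofLex v i)) (fun a b => (congrArg Neg.neg (rfl : ofLex (a + b) i = ofLex a i + ofLex b i)).trans (neg_add (ofLex a i) (ofLex b i))), ?_⟩
      intro z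
      obtain ⟨x, ⟨a, ha, rfl⟩, hz⟩ := h (-z)
      exact ⟨a, ha, by simp only [AddMonoidHom.mk'_apply]; linarith⟩
  obtain ⟨Φ, hΦub⟩ := hΦ
  have hsel' : ∀ z : ℤ, ∃ a, a ∈ A ∧ z < Φ a := fun z => by
    obtain ⟨a, ha, hz⟩ := hΦub z; exact ⟨a, ha, hz⟩
  choose sel hselA hselgt using hsel'
  set s : ℕ → Zd d := seqRec sel (fun v => Φ v) with hs
  have hs0 : s 0 = sel 0 := rfl
  have hssucc : ∀ n, s (n + 1) = sel (3 * Φ (s n)) := fun n => rfl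
  have hsA : ∀ n, s n ∈ A := by
    intro n
    cases n with
    | zero => rw [hs0]; exact hselA 0
    | succ n => rw [hssucc n]; exact hselA _
  have hg0 : 1 ≤ Φ (s 0) := by rw [hs0]; have := hselgt 0; linarith
  have hgs : ∀ k, 3 * Φ (s k) + 1 ≤ Φ (s (k + 1)) := by
    intro k
    rw [hssucc k]
    have := hselgt (3 * Φ (s k))
    linarith
  have h1 : ∀ k, 1 ≤ Φ (s k) := by
    intro k
    induction k with
    | zero => exact hg0
    | succ n ih => have := hgs n; linarith
  have hmono : Monotone (fun k => Φ (s k)) := by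
    apply monotone_nat_of_le_succ
    intro n; have := hgs n; have := h1 n; show Φ (s n) ≤ Φ (s (n+1)); linarith
  have hinj : Function.Injective s := by
    have hsm : StrictMono (fun k => Φ (s k)) := by
      apply strictMono_nat_of_lt_succ
      intro n; have := hgs n; have := h1 n; show Φ (s n) < Φ (s (n+1)); linarith
    intro a b hab
    exact hsm.injective (by simp [hab])
  -- the injection from boolean sequences
  set Ψ : (ℕ → Bool) → Set (Zd d) := fun b => Set.range (s ∘ bitSeq b) with hΨ
  have hΨmem : ∀ b, Ψ b ⊆ A ∧ ∃ C, IsCoMinimalPair (Ψ b) C := by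
    intro b
    constructor
    · rintro x ⟨n, rfl⟩; exact hsA _
    · have hf := bitSeq_strictMono b
      apply exists_cominimal_of_growth Φ (s ∘ bitSeq b)
      · exact le_trans hg0 (hmono (Nat.zero_le _))
      · intro k
        have h2 : bitSeq b k + 1 ≤ bitSeq b (k + 1) := hf (Nat.lt_succ_self k)
        calc 3 * Φ ((s ∘ bitSeq b) k) + 1 ≤ Φ (s (bitSeq b k + 1)) := hgs (bitSeq b k)
          _ ≤ Φ (s (bitSeq b (k + 1))) := hmono h2
  have hΨinj : Function.Injective Ψ := by
    intro b b' h
    apply bitSeq_injective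
    apply ((bitSeq_strictMono b).range_inj (bitSeq_strictMono b')).mp
    have himg : s '' Set.range (bitSeq b) = s '' Set.range (bitSeq b') := by
      rw [← Set.range_comp, ← Set.range_comp]
      exact h
    exact hinj.image_injective himg
  have hT1 : ¬ {B : Set (Zd d) | B ⊆ A ∧ ∃ C : Set (Zd d), IsCoMinimalPair B C}.Countable := by
    apply not_countable_of_boolInj _ Ψ hΨinj
    intro b
    exact hΨmem b
  refine ⟨hT1, ?_⟩
  intro h2
  apply hT1
  apply h2.mono
  rintro B ⟨hBA, C, hC1, hC2, hC3⟩
  exact ⟨hBA, C, hC1, hC2⟩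
end

section
/- Every infinite subset of any finitely generated abelian group G has uncountably many subsets each of which is part of a co-minimal pair in G. -/
open Pointwise

namespace Stmt16Aux

lemma a_nonneg (a : ℕ → ℤ) (h0 : 0 ≤ a 0) (hg : ∀ n, 2 * a n + n < a (n+1)) :
    ∀ n, 0 ≤ a n := by
  intro n; induction n with
  | zero => exact h0
  | succ n ih => have h := hg n; have : (0:ℤ) ≤ (n:ℤ) := Int.natCast_nonneg n; linarith

lemma a_mono (a : ℕ → ℤ) (h0 : 0 ≤ a 0) (hg : ∀ n, 2 * a n + n < a (n+1)) :
    StrictMono a := by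
  apply strictMono_nat_of_lt_succ
  intro n
  have h := hg n
  have h1 := a_nonneg a h0 hg n
  have : (0:ℤ) ≤ (n:ℤ) := Int.natCast_nonneg n
  linarith

lemma a_low (a : ℕ → ℤ) (h0 : 0 ≤ a 0) (hg : ∀ n, 2 * a n + n < a (n+1)) :
    ∀ n : ℕ, (n : ℤ) ≤ a n := by
  intro n; induction n with
  | zero => exact h0
  | succ n ih =>
    have h := hg n
    have h1 := a_nonneg a h0 hg n
    push_cast
    linarith

lemma key_bound (a : ℕ → ℤ) (h0 : 0 ≤ a 0) (hg : ∀ n, 2 * a n + n < a (n+1))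
    (k i j : ℕ) (hkj : k ≠ j) (v : ℤ) (hv : a k + a i - a j = v) :
    (k:ℤ) ≤ (v.natAbs : ℤ) + 1 := by
  have hnn := a_nonneg a h0 hg
  have hmono := (a_mono a h0 hg).monotone
  have hlow := a_low a h0 hg
  rcases eq_or_ne i j with rfl | hij
  · -- v = a k
    have hk := hlow k
    have : a k = v := by linarith
    omega
  by_cases h1 : k < j ∧ i < j
  · -- j is max
    have hj1 : j - 1 + 1 = j := by omega
    have hgj := hg (j-1); rw [hj1] at hgj
    have hc : ((j-1:ℕ):ℤ) = (j:ℤ) - 1 := by omega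
    rw [hc] at hgj
    have hak : a k ≤ a (j-1) := hmono (by omega)
    have hai : a i ≤ a (j-1) := hmono (by omega)
    have hjv : (j:ℤ) - 1 < -v := by linarith
    have hkj' : (k:ℤ) < (j:ℤ) := by exact_mod_cast Nat.cast_lt.mpr h1.1
    omega
  · push_neg at h1
    by_cases h2 : i ≤ k
    · -- k is max
      have hjk : j < k := by
        rcases Nat.lt_or_ge k j with h | h
        · exact absurd (h1 h) (by omega)
        · omega
      have hk1 : k - 1 + 1 = k := by omega
      have hgk := hg (k-1); rw [hk1] at hgk
      have hc : ((k-1:ℕ):ℤ) = (k:ℤ) - 1 := by omega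
      rw [hc] at hgk
      have haj : a j ≤ a (k-1) := hmono (by omega)
      have hai : 0 ≤ a i := hnn i
      have h1k : 0 ≤ a (k-1) := hnn (k-1)
      have : (k:ℤ) - 1 < v := by linarith
      omega
    · -- i is max
      push_neg at h2
      have hji : j < i := by
        rcases Nat.lt_or_ge k j with h | h
        · have := h1 h; omega
        · omega
      have hi1 : i - 1 + 1 = i := by omega
      have hgi := hg (i-1); rw [hi1] at hgi
      have hc : ((i-1:ℕ):ℤ) = (i:ℤ) - 1 := by omega
      rw [hc] at hgi
      have haj : a j ≤ a (i-1) := hmono (by omega)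
      have hak : 0 ≤ a k := hnn k
      have h1i : 0 ≤ a (i-1) := hnn (i-1)
      have hiv : (i:ℤ) - 1 < v := by linarith
      have : (k:ℤ) < (i:ℤ) := by exact_mod_cast Nat.cast_lt.mpr h2
      omega

end Stmt16Aux

namespace Stmt16Aux

variable {G : Type*} [AddCommGroup G]

theorem exists_partner (φ : G →+ ℤ) (t : ℕ → G)
    (h0 : 0 ≤ φ (t 0)) (hg : ∀ n : ℕ, 2 * φ (t n) + n < φ (t (n+1)))
    (x : ℕ → G) (hx : Function.Surjective x)
    (S : Set ℕ) (hS : S.Infinite) :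
    ∃ C : Set G, C.Nonempty ∧
      (∀ z : G, ∃ n ∈ S, ∃ c ∈ C, z = t n + c) ∧
      (∀ c ∈ C, ∀ c' ∈ C, ∀ n ∈ S, ∀ n' ∈ S, c + t n = c' + t n' → c = c' ∧ n = n') := by
  classical
  set a : ℕ → ℤ := fun n => φ (t n) with ha
  have hg' : ∀ n : ℕ, 2 * a n + n < a (n+1) := hg
  have hmono := a_mono a h0 hg'
  have htinj : Function.Injective t := by
    intro m n h
    exact hmono.injective (show a m = a n by simp only [ha, h])
  have step : ∀ (C : Finset G) (z : G), (¬ ∃ n ∈ S, ∃ c ∈ C, z = t n + c) →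
      ∃ k, k ∈ S ∧ ∀ c ∈ C, ∀ n ∈ S, ∀ n' ∈ S, (z - t k) + t n ≠ c + t n' := by
    intro C z hz
    set N : ℕ := (C.sup fun c => (φ z - φ c).natAbs) + 2 with hN
    obtain ⟨k, hkS, hkN⟩ : ∃ k ∈ S, N ≤ k := by
      by_contra hcon
      push_neg at hcon
      exact hS ((Set.finite_Iio N).subset (fun m hm => hcon m hm))
    refine ⟨k, hkS, ?_⟩
    intro c hc n hn n' hn' heq
    rcases eq_or_ne n k with rfl | hnk
    · apply hz
      refine ⟨n', hn', c, hc, ?_⟩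
      have h2 : z - t n + t n = z := sub_add_cancel z (t n)
      rw [h2] at heq
      rw [heq]; abel
    · have hv : a k + a n' - a n = φ z - φ c := by
        have h1 := congrArg φ heq
        simp only [map_add, map_sub] at h1
        simp only [ha]
        linarith
      have hb := key_bound a h0 hg' k n' n (Ne.symm hnk) _ hv
      have hle : (φ z - φ c).natAbs ≤ C.sup fun c => (φ z - φ c).natAbs :=
        Finset.le_sup (f := fun c => (φ z - φ c).natAbs) hc
      omega
  let g : ℕ → Finset G := fun m =>
    Nat.rec ∅ (fun m C =>
      if hcov : ∃ n ∈ S, ∃ c ∈ C, x m = t n + c then C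
      else insert (x m - t (step C (x m) hcov).choose) C) m
  have hg0 : g 0 = ∅ := rfl
  have hgsucc : ∀ m, g (m+1) =
      (if hcov : ∃ n ∈ S, ∃ c ∈ g m, x m = t n + c then g m
       else insert (x m - t (step (g m) (x m) hcov).choose) (g m)) := fun _ => rfl
  have hgsub : ∀ m, g m ⊆ g (m+1) := by
    intro m
    rw [hgsucc]
    by_cases hcov : ∃ n ∈ S, ∃ c ∈ g m, x m = t n + c
    · rw [dif_pos hcov]
    · rw [dif_neg hcov]; exact Finset.subset_insert _ _
  have hgmono : ∀ {m m' : ℕ}, m ≤ m' → g m ⊆ g m' := by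
    intro m m' h
    induction h with
    | refl => exact Finset.Subset.refl _
    | step h ih => exact ih.trans (hgsub _)
  have hPart : ∀ m, ∀ c ∈ g m, ∀ c' ∈ g m, ∀ n ∈ S, ∀ n' ∈ S,
      c + t n = c' + t n' → c = c' ∧ n = n' := by
    intro m
    induction m with
    | zero => intro c hc; rw [hg0] at hc; exact absurd hc (Finset.notMem_empty c)
    | succ m ih =>
      rw [hgsucc]
      by_cases hcov : ∃ n ∈ S, ∃ c ∈ g m, x m = t n + c
      · rw [dif_pos hcov]; exact ih
      · rw [dif_neg hcov]
        obtain ⟨hkS, hgood⟩ := (step (g m) (x m) hcov).choose_spec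
        intro c hc c' hc' n hn n' hn' heq
        rcases Finset.mem_insert.mp hc with rfl | hc
        · rcases Finset.mem_insert.mp hc' with rfl | hc'
          · have h2 : t n = t n' := by exact add_left_cancel heq
            exact ⟨rfl, htinj h2⟩
          · exact absurd heq (hgood c' hc' n hn n' hn')
        · rcases Finset.mem_insert.mp hc' with rfl | hc'
          · exact absurd heq.symm (hgood c hc n' hn' n hn)
          · exact ih c hc c' hc' n hn n' hn' heq
  have hcover : ∀ m, ∃ n ∈ S, ∃ c ∈ g (m+1), x m = t n + c := by
    intro m
    rw [hgsucc]
    by_cases hcov : ∃ n ∈ S, ∃ c ∈ g m, x m = t n + c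
    · rw [dif_pos hcov]; exact hcov
    · rw [dif_neg hcov]
      obtain ⟨hkS, _⟩ := (step (g m) (x m) hcov).choose_spec
      exact ⟨_, hkS, _, Finset.mem_insert_self _ _, by abel⟩
  refine ⟨⋃ m, {y : G | y ∈ g m}, ?_, ?_, ?_⟩
  · obtain ⟨m, hm⟩ := hx 0
    obtain ⟨n, hn, c, hc, h⟩ := hcover m
    exact ⟨c, Set.mem_iUnion.mpr ⟨m+1, hc⟩⟩
  · intro z
    obtain ⟨m, rfl⟩ := hx z
    obtain ⟨n, hn, c, hc, h⟩ := hcover m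
    exact ⟨n, hn, c, Set.mem_iUnion.mpr ⟨m+1, hc⟩, h⟩
  · intro c hc c' hc' n hn n' hn' heq
    obtain ⟨m₁, hm₁⟩ := Set.mem_iUnion.mp hc
    obtain ⟨m₂, hm₂⟩ := Set.mem_iUnion.mp hc'
    exact hPart (max m₁ m₂) c (hgmono (le_max_left _ _) hm₁)
      c' (hgmono (le_max_right _ _) hm₂) n hn n' hn' heq

end Stmt16Aux

namespace Stmt16Aux

theorem exists_phi {G : Type*} [AddCommGroup G] [AddGroup.FG G] {A : Set G} (hA : A.Infinite) :
    ∃ φ : G →+ ℤ, ∀ M : ℤ, ∃ g ∈ A, M < φ g := by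
  obtain ⟨n, ι, hι, p, hp, e, ⟨eqv⟩⟩ := AddCommGroup.equiv_free_prod_directSum_zmod G
  haveI := hι
  by_contra hcon
  push_neg at hcon
  choose M hM using hcon
  haveI : ∀ i, NeZero (p i ^ e i) := fun i => ⟨pow_ne_zero _ (hp i).ne_zero⟩
  haveI : Finite (DirectSum ι (fun i => ZMod (p i ^ e i))) :=
    Finite.of_injective (fun f (i : ι) => f i) (DFunLike.coe_injective)
  set ψ : Fin n → (G →+ ℤ) := fun i =>
    (Finsupp.applyAddHom i).comp ((AddMonoidHom.fst _ _).comp eqv.toAddMonoidHom) with hψ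
  have hψval : ∀ (i : Fin n) (g : G), ψ i g = (eqv g).1 i := fun _ _ => rfl
  have hbox : ∀ g ∈ A, ∀ i, (eqv g).1 i ∈ Set.Icc (-(M (-ψ i))) (M (ψ i)) := by
    intro g hg i
    constructor
    · have h1 := hM (-(ψ i)) g hg
      have h2 : (-(ψ i)) g = -((eqv g).1 i) := by rw [← hψval]; rfl
      rw [h2] at h1; linarith
    · have h1 := hM (ψ i) g hg
      rwa [hψval] at h1
  have hfin : {f : Fin n →₀ ℤ | ∀ i, f i ∈ Set.Icc (-(M (-ψ i))) (M (ψ i))}.Finite := by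
    have hfin2 : (Set.pi Set.univ
        (fun i : Fin n => Set.Icc (-(M (-ψ i))) (M (ψ i)))).Finite :=
      Set.Finite.pi (fun i => Set.finite_Icc _ _)
    have heq : {f : Fin n →₀ ℤ | ∀ i, f i ∈ Set.Icc (-(M (-ψ i))) (M (ψ i))}
        = Finsupp.equivFunOnFinite ⁻¹'
          (Set.pi Set.univ (fun i : Fin n => Set.Icc (-(M (-ψ i))) (M (ψ i)))) := by
      ext f
      simp only [Set.mem_setOf_eq, Set.mem_preimage, Set.mem_pi, Set.mem_univ, true_implies]
      exact Iff.rfl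
    rw [heq]
    exact hfin2.preimage (Equiv.injective _).injOn
  have hAfin : A.Finite := by
    have hsub : A ⊆ eqv ⁻¹'
        ({f : Fin n →₀ ℤ | ∀ i, f i ∈ Set.Icc (-(M (-ψ i))) (M (ψ i))} ×ˢ Set.univ) := by
      intro g hg
      exact ⟨fun i => hbox g hg i, Set.mem_univ _⟩
    exact ((hfin.prod Set.finite_univ).preimage eqv.injective.injOn).subset hsub
  exact hA hAfin

end Stmt16Aux


open Stmt16Aux in
theorem stmt16 {G : Type*} [AddCommGroup G] [AddGroup.FG G]
    (A : Set G) (hA : A.Infinite) :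
    ¬ {B : Set G | B ⊆ A ∧ ∃ C : Set G, IsCoMinimalPair B C}.Countable := by
  intro hcount
  haveI : Countable G := by
    obtain ⟨n, ι, hι, p, hp, e, ⟨eqv⟩⟩ := AddCommGroup.equiv_free_prod_directSum_zmod G
    haveI := hι
    haveI : ∀ i, NeZero (p i ^ e i) := fun i => ⟨pow_ne_zero _ (hp i).ne_zero⟩
    haveI : Finite (DirectSum ι fun i => ZMod (p i ^ e i)) :=
      Finite.of_injective (fun f (i : ι) => f i) DFunLike.coe_injective
    exact Countable.of_equiv _ eqv.symm.toEquiv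
  haveI : Nonempty G := ⟨0⟩
  obtain ⟨x, hx⟩ := exists_surjective_nat G
  obtain ⟨φ, hφ⟩ := exists_phi hA
  let t : ℕ → G := fun n => Nat.rec (Classical.choose (hφ 0))
      (fun n prev => Classical.choose (hφ (2 * φ prev + n))) n
  have htA : ∀ n, t n ∈ A := by
    intro n
    cases n with
    | zero => exact (Classical.choose_spec (hφ 0)).1
    | succ n => exact (Classical.choose_spec (hφ (2 * φ (t n) + n))).1
  have h0 : 0 ≤ φ (t 0) := le_of_lt (Classical.choose_spec (hφ 0)).2
  have hg : ∀ n : ℕ, 2 * φ (t n) + n < φ (t (n+1)) := fun n =>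
    (Classical.choose_spec (hφ (2 * φ (t n) + n))).2
  have htinj : Function.Injective t := by
    intro m n h
    exact (a_mono (fun n => φ (t n)) h0 hg).injective (congrArg φ h)
  have hmem : ∀ S : Set ℕ, S.Infinite →
      (t '' S) ∈ {B : Set G | B ⊆ A ∧ ∃ C, IsCoMinimalPair B C} := by
    intro S hS
    obtain ⟨C, hCne, hCcov, hCuniq⟩ := exists_partner φ t h0 hg x hx S hS
    refine ⟨by rintro b ⟨n, hn, rfl⟩; exact htA n, C, ?_, ?_, ?_⟩
    · ext z
      simp only [Set.mem_univ, iff_true]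
      obtain ⟨n, hn, c, hc, h⟩ := hCcov z
      exact Set.mem_add.mpr ⟨t n, ⟨n, hn, rfl⟩, c, hc, h.symm⟩
    · rintro b ⟨m, hm, rfl⟩ heq
      obtain ⟨c₀, hc₀⟩ := hCne
      have hz : t m + c₀ ∈ ((t '' S) \ {t m}) + C := heq ▸ Set.mem_univ _
      obtain ⟨b', hb', c', hc', hsum⟩ := Set.mem_add.mp hz
      obtain ⟨⟨m', hm', rfl⟩, hbne⟩ := hb'
      have h2 : c' + t m' = c₀ + t m := by
        rw [add_comm c', add_comm c₀]; exact hsum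
      obtain ⟨hc, hm2⟩ := hCuniq c' hc' c₀ hc₀ m' hm' m hm h2
      exact hbne (by rw [hm2]; exact Set.mem_singleton _)
    · rintro c hc heq
      obtain ⟨m, hm⟩ := hS.nonempty
      have hz : t m + c ∈ (t '' S) + (C \ {c}) := heq ▸ Set.mem_univ _
      obtain ⟨b', hb', c', hc', hsum⟩ := Set.mem_add.mp hz
      obtain ⟨m', hm', rfl⟩ := hb'
      obtain ⟨hc'2, hcne⟩ := hc'
      have h2 : c' + t m' = c + t m := by
        rw [add_comm c', add_comm c]; exact hsum
      obtain ⟨hceq, hmeq⟩ := hCuniq c' hc'2 c hc m' hm' m hm h2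
      exact hcne (by rw [hceq]; exact Set.mem_singleton _)
  have h1 : {S : Set ℕ | S.Infinite}.Countable := by
    have hinj2 : Function.Injective (fun S : Set ℕ => t '' S) :=
      Set.image_injective.mpr htinj
    exact (hcount.preimage hinj2).mono (fun S hS => hmem S hS)
  have h2 : (Set.univ : Set (Set ℕ)).Countable := by
    have h3 := Set.Countable.setOf_finite (α := ℕ)
    have huniv : (Set.univ : Set (Set ℕ)) = {S | S.Infinite} ∪ {S | S.Finite} := by
      ext S
      simp only [Set.mem_univ, true_iff, Set.mem_union, Set.mem_setOf_eq]
      exact (em S.Finite).symm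
    rw [huniv]; exact h1.union h3
  haveI : Countable (Set ℕ) := Set.countable_univ_iff.mp h2
  obtain ⟨f, hf⟩ := Countable.exists_injective_nat (Set ℕ)
  exact Function.cantor_injective f hf
end

section
/- There exist uncountably many subsets of ℤ^d contained in ℤ^d_{≥0} (lexicographic order), each of which forms a co-minimal pair together with some subset of ℤ^d avoiding ℤ^d_{≥0}. -/
open Pointwise

noncomputable section CoMin

open Classical in
/-- digit for `A` at scale `n` -/
noncomputable def cdig (s : Set ℕ) (n : ℕ) : ℤ := if n ∈ s then 1 else 2

/-- digit for `B` at scale `n` -/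
noncomputable def edig (s : Set ℕ) (n : ℕ) : ℤ := 3 - cdig s n

lemma cdig_cases (s : Set ℕ) (n : ℕ) :
    (cdig s n = 1 ∧ edig s n = 2) ∨ (cdig s n = 2 ∧ edig s n = 1) := by
  unfold cdig edig
  by_cases h : n ∈ s <;> simp [cdig, h]

/-- finite-level `A` sets -/
noncomputable def AF (s : Set ℕ) : ℕ → Set ℤ
  | 0 => {0}
  | n + 1 => AF s n ∪ (fun a => a + cdig s n * 4 ^ n) '' AF s n

/-- finite-level `B` sets -/
noncomputable def BF (s : Set ℕ) : ℕ → Set ℤ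
  | 0 => {0}
  | n + 1 => BF s n ∪ (fun b => b - edig s n * 4 ^ n) '' BF s n

noncomputable def Cb (s : Set ℕ) (n : ℕ) : ℤ := ∑ i ∈ Finset.range n, cdig s i * 4 ^ i
noncomputable def Eb (s : Set ℕ) (n : ℕ) : ℤ := ∑ i ∈ Finset.range n, edig s i * 4 ^ i

lemma CE_sum (s : Set ℕ) (n : ℕ) : Cb s n + Eb s n = 4 ^ n - 1 := by
  induction n with
  | zero => simp [Cb, Eb]
  | succ n ih =>
      have := cdig_cases s n
      simp only [Cb, Eb, Finset.sum_range_succ] at *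
      rcases this with ⟨h1, h2⟩ | ⟨h1, h2⟩ <;> rw [h1, h2, pow_succ] <;> linarith

lemma mem_AF_succ (s : Set ℕ) (n : ℕ) (a : ℤ) :
    a ∈ AF s (n + 1) ↔ ∃ a₀ ∈ AF s n, ∃ k, (k = 0 ∨ k = cdig s n) ∧ a = a₀ + k * 4 ^ n := by
  constructor
  · rintro (ha | ⟨a₀, ha₀, rfl⟩)
    · exact ⟨a, ha, 0, Or.inl rfl, by ring⟩
    · exact ⟨a₀, ha₀, _, Or.inr rfl, rfl⟩
  · rintro ⟨a₀, ha₀, k, (rfl | rfl), rfl⟩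
    · exact Or.inl (by simpa using ha₀)
    · exact Or.inr ⟨a₀, ha₀, rfl⟩

lemma mem_BF_succ (s : Set ℕ) (n : ℕ) (b : ℤ) :
    b ∈ BF s (n + 1) ↔ ∃ b₀ ∈ BF s n, ∃ k, (k = 0 ∨ k = edig s n) ∧ b = b₀ - k * 4 ^ n := by
  constructor
  · rintro (hb | ⟨b₀, hb₀, rfl⟩)
    · exact ⟨b, hb, 0, Or.inl rfl, by ring⟩
    · exact ⟨b₀, hb₀, _, Or.inr rfl, rfl⟩
  · rintro ⟨b₀, hb₀, k, (rfl | rfl), rfl⟩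
    · exact Or.inl (by simpa using hb₀)
    · exact Or.inr ⟨b₀, hb₀, rfl⟩

lemma AF_bounds (s : Set ℕ) (n : ℕ) : ∀ a ∈ AF s n, 0 ≤ a ∧ a ≤ Cb s n := by
  induction n with
  | zero => rintro a ha; simp only [AF, Set.mem_singleton_iff] at ha; simp [ha, Cb]
  | succ n ih =>
      intro a ha
      rw [mem_AF_succ] at ha
      obtain ⟨a₀, ha₀, k, hk, rfl⟩ := ha
      obtain ⟨h1, h2⟩ := ih a₀ ha₀
      have hP : (0 : ℤ) < 4 ^ n := by positivity
      have hC1 : Cb s (n + 1) = Cb s n + cdig s n * 4 ^ n := by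
        simp [Cb, Finset.sum_range_succ]
      rcases cdig_cases s n with ⟨hc, _⟩ | ⟨hc, _⟩ <;> rcases hk with rfl | rfl <;>
        rw [hC1] <;> constructor <;> rw [hc] at * <;> nlinarith

lemma BF_bounds (s : Set ℕ) (n : ℕ) : ∀ b ∈ BF s n, -Eb s n ≤ b ∧ b ≤ 0 := by
  induction n with
  | zero => rintro b hb; simp only [BF, Set.mem_singleton_iff] at hb; simp [hb, Eb]
  | succ n ih =>
      intro b hb
      rw [mem_BF_succ] at hb
      obtain ⟨b₀, hb₀, k, hk, rfl⟩ := hb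
      obtain ⟨h1, h2⟩ := ih b₀ hb₀
      have hP : (0 : ℤ) < 4 ^ n := by positivity
      have hE1 : Eb s (n + 1) = Eb s n + edig s n * 4 ^ n := by
        simp [Eb, Finset.sum_range_succ]
      rcases cdig_cases s n with ⟨_, he⟩ | ⟨_, he⟩ <;> rcases hk with rfl | rfl <;>
        rw [hE1] <;> constructor <;> rw [he] at * <;> nlinarith

lemma AF_mono (s : Set ℕ) : Monotone (AF s) :=
  monotone_nat_of_le_succ fun _ => Set.subset_union_left

lemma BF_mono (s : Set ℕ) : Monotone (BF s) :=
  monotone_nat_of_le_succ fun _ => Set.subset_union_left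

/-- existence at level `n` -/
lemma cover (s : Set ℕ) (n : ℕ) : ∀ z : ℤ, -Eb s n ≤ z → z ≤ Cb s n →
    ∃ a ∈ AF s n, ∃ b ∈ BF s n, a + b = z := by
  induction n with
  | zero =>
      intro z h1 h2
      simp only [Cb, Eb, Finset.range_zero, Finset.sum_empty, neg_zero] at h1 h2
      have : z = 0 := le_antisymm h2 h1
      exact ⟨0, rfl, 0, rfl, by simp [this]⟩
  | succ n ih =>
      intro z h1 h2
      have hP : (0 : ℤ) < 4 ^ n := by positivity
      have hE1 : Eb s (n + 1) = Eb s n + edig s n * 4 ^ n := by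
        simp [Eb, Finset.sum_range_succ]
      have hC1 : Cb s (n + 1) = Cb s n + cdig s n * 4 ^ n := by
        simp [Cb, Finset.sum_range_succ]
      have hCE := CE_sum s n
      have hCE1 := CE_sum s (n + 1)
      have h4 : (4 : ℤ) ^ (n + 1) = 4 * 4 ^ n := by ring
      obtain ⟨q, r, hr0, hr1, hwqr, hq0, hq3⟩ :
          ∃ q r : ℤ, 0 ≤ r ∧ r < 4 ^ n ∧ z + Eb s (n + 1) = q * 4 ^ n + r ∧ 0 ≤ q ∧ q ≤ 3 := by
        refine ⟨(z + Eb s (n + 1)) / 4 ^ n, (z + Eb s (n + 1)) % 4 ^ n,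
          Int.emod_nonneg _ (by positivity), Int.emod_lt_of_pos _ hP, by
            rw [mul_comm]; exact (Int.mul_ediv_add_emod _ _).symm, ?_, ?_⟩
        · exact Int.ediv_nonneg (by omega) (le_of_lt hP)
        · have h5 : z + Eb s (n + 1) < 4 * 4 ^ n := by omega
          have := (Int.ediv_lt_iff_lt_mul (a := z + Eb s (n + 1)) (b := 4) hP).2
            (by linarith)
          omega
      have hzr : z - (q - edig s n) * 4 ^ n + Eb s n = r := by
        linear_combination hwqr - hE1
      obtain ⟨a₀, ha₀, b₀, hb₀, hab⟩ := ih (z - (q - edig s n) * 4 ^ n) (by omega) (by omega)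
      have memA1 : a₀ + cdig s n * 4 ^ n ∈ AF s (n + 1) :=
        (mem_AF_succ s n _).2 ⟨a₀, ha₀, _, Or.inr rfl, rfl⟩
      have memA0 : a₀ ∈ AF s (n + 1) := AF_mono s (Nat.le_succ n) ha₀
      have memB1 : b₀ - edig s n * 4 ^ n ∈ BF s (n + 1) :=
        (mem_BF_succ s n _).2 ⟨b₀, hb₀, _, Or.inr rfl, rfl⟩
      have memB0 : b₀ ∈ BF s (n + 1) := BF_mono s (Nat.le_succ n) hb₀
      rcases cdig_cases s n with ⟨hc, he⟩ | ⟨hc, he⟩ <;>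
        rw [hc] at memA1 <;> rw [he] at memB1 <;> rw [he] at hab
      · -- c = 1, e = 2
        have hq4 : q = 0 ∨ q = 1 ∨ q = 2 ∨ q = 3 := by omega
        rcases hq4 with hq | hq | hq | hq <;> rw [hq] at hab
        · exact ⟨a₀, memA0, _, memB1, by linear_combination hab⟩
        · exact ⟨_, memA1, _, memB1, by linear_combination hab⟩
        · exact ⟨a₀, memA0, b₀, memB0, by linear_combination hab⟩
        · exact ⟨_, memA1, b₀, memB0, by linear_combination hab⟩
      · -- c = 2, e = 1
        have hq4 : q = 0 ∨ q = 1 ∨ q = 2 ∨ q = 3 := by omega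
        rcases hq4 with hq | hq | hq | hq <;> rw [hq] at hab
        · exact ⟨a₀, memA0, _, memB1, by linear_combination hab⟩
        · exact ⟨a₀, memA0, b₀, memB0, by linear_combination hab⟩
        · exact ⟨_, memA1, _, memB1, by linear_combination hab⟩
        · exact ⟨_, memA1, b₀, memB0, by linear_combination hab⟩

/-- uniqueness at level `n` -/
lemma uniq (s : Set ℕ) (n : ℕ) : ∀ a ∈ AF s n, ∀ b ∈ BF s n, ∀ a' ∈ AF s n, ∀ b' ∈ BF s n,
    a + b = a' + b' → a = a' ∧ b = b' := by
  induction n with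
  | zero =>
      intro a ha b hb a' ha' b' hb' _
      simp only [AF, BF, Set.mem_singleton_iff] at ha hb ha' hb'
      subst ha hb ha' hb'
      exact ⟨rfl, rfl⟩
  | succ n ih =>
      intro a ha b hb a' ha' b' hb' heq
      rw [mem_AF_succ] at ha ha'
      rw [mem_BF_succ] at hb hb'
      obtain ⟨a₀, ha₀, ka, hka, rfl⟩ := ha
      obtain ⟨b₀, hb₀, kb, hkb, rfl⟩ := hb
      obtain ⟨a₀', ha₀', ka', hka', rfl⟩ := ha'
      obtain ⟨b₀', hb₀', kb', hkb', rfl⟩ := hb'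
      have hP : (1 : ℤ) ≤ 4 ^ n := one_le_pow₀ (by norm_num)
      have hCE := CE_sum s n
      obtain ⟨hA1, hA2⟩ := AF_bounds s n a₀ ha₀
      obtain ⟨hB1, hB2⟩ := BF_bounds s n b₀ hb₀
      obtain ⟨hA1', hA2'⟩ := AF_bounds s n a₀' ha₀'
      obtain ⟨hB1', hB2'⟩ := BF_bounds s n b₀' hb₀'
      rcases cdig_cases s n with ⟨hc, he⟩ | ⟨hc, he⟩ <;>
        rw [hc] at hka hka' <;> rw [he] at hkb hkb' <;>
        rcases hka with rfl | rfl <;> rcases hkb with rfl | rfl <;>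
        rcases hka' with rfl | rfl <;> rcases hkb' with rfl | rfl <;>
        · have hu : a₀ + b₀ = a₀' + b₀' := by linarith
          obtain ⟨hA, hB⟩ := ih a₀ ha₀ b₀ hb₀ a₀' ha₀' b₀' hb₀' hu
          constructor <;> linarith

/-- `A` as a subset of `ℤ` -/
noncomputable def Aset (s : Set ℕ) : Set ℤ := ⋃ n, AF s n
/-- `B` as a subset of `ℤ` -/
noncomputable def Bset (s : Set ℕ) : Set ℤ := ⋃ n, BF s n

lemma mem_Aset (s : Set ℕ) (a : ℤ) : a ∈ Aset s ↔ ∃ n, a ∈ AF s n := Set.mem_iUnion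
lemma mem_Bset (s : Set ℕ) (b : ℤ) : b ∈ Bset s ↔ ∃ n, b ∈ BF s n := Set.mem_iUnion

lemma zero_mem_AF (s : Set ℕ) (n : ℕ) : (0 : ℤ) ∈ AF s n := AF_mono s (Nat.zero_le n) rfl
lemma zero_mem_BF (s : Set ℕ) (n : ℕ) : (0 : ℤ) ∈ BF s n := BF_mono s (Nat.zero_le n) rfl

lemma zero_mem_Aset (s : Set ℕ) : (0 : ℤ) ∈ Aset s := (mem_Aset s 0).2 ⟨0, rfl⟩
lemma zero_mem_Bset (s : Set ℕ) : (0 : ℤ) ∈ Bset s := (mem_Bset s 0).2 ⟨0, rfl⟩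

lemma Aset_nonneg (s : Set ℕ) {a : ℤ} (ha : a ∈ Aset s) : 0 ≤ a := by
  obtain ⟨n, hn⟩ := (mem_Aset s a).1 ha
  exact (AF_bounds s n a hn).1

lemma Bset_nonpos (s : Set ℕ) {b : ℤ} (hb : b ∈ Bset s) : b ≤ 0 := by
  obtain ⟨n, hn⟩ := (mem_Bset s b).1 hb
  exact (BF_bounds s n b hn).2

lemma Cb_ge (s : Set ℕ) (n : ℕ) : (n : ℤ) ≤ Cb s n := by
  induction n with
  | zero => simp [Cb]
  | succ n ih =>
      have hP : (1 : ℤ) ≤ 4 ^ n := one_le_pow₀ (by norm_num)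
      have hC1 : Cb s (n + 1) = Cb s n + cdig s n * 4 ^ n := by
        simp [Cb, Finset.sum_range_succ]
      rcases cdig_cases s n with ⟨hc, _⟩ | ⟨hc, _⟩ <;> rw [hC1, hc] <;> push_cast <;> nlinarith

lemma Eb_ge (s : Set ℕ) (n : ℕ) : (n : ℤ) ≤ Eb s n := by
  induction n with
  | zero => simp [Eb]
  | succ n ih =>
      have hP : (1 : ℤ) ≤ 4 ^ n := one_le_pow₀ (by norm_num)
      have hE1 : Eb s (n + 1) = Eb s n + edig s n * 4 ^ n := by
        simp [Eb, Finset.sum_range_succ]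
      rcases cdig_cases s n with ⟨_, he⟩ | ⟨_, he⟩ <;> rw [hE1, he] <;> push_cast <;> nlinarith

lemma rep_exists (s : Set ℕ) (z : ℤ) : ∃ a ∈ Aset s, ∃ b ∈ Bset s, a + b = z := by
  set n := z.natAbs with hn
  have h1 : (n : ℤ) = |z| := Int.abs_eq_natAbs z ▸ rfl
  have h2 : -Eb s n ≤ z := by
    have := Eb_ge s n
    have := neg_abs_le z
    omega
  have h3 : z ≤ Cb s n := by
    have := Cb_ge s n
    have := le_abs_self z
    omega
  obtain ⟨a, ha, b, hb, hab⟩ := cover s n z h2 h3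
  exact ⟨a, (mem_Aset s a).2 ⟨n, ha⟩, b, (mem_Bset s b).2 ⟨n, hb⟩, hab⟩

lemma rep_unique (s : Set ℕ) {a b a' b' : ℤ} (ha : a ∈ Aset s) (hb : b ∈ Bset s)
    (ha' : a' ∈ Aset s) (hb' : b' ∈ Bset s) (h : a + b = a' + b') : a = a' ∧ b = b' := by
  obtain ⟨n1, h1⟩ := (mem_Aset s a).1 ha
  obtain ⟨n2, h2⟩ := (mem_Bset s b).1 hb
  obtain ⟨n3, h3⟩ := (mem_Aset s a').1 ha'
  obtain ⟨n4, h4⟩ := (mem_Bset s b').1 hb'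
  set N := max (max n1 n2) (max n3 n4)
  exact uniq s N a (AF_mono s (by omega) h1) b (BF_mono s (by omega) h2)
    a' (AF_mono s (by omega) h3) b' (BF_mono s (by omega) h4) h

lemma four_pow_mem (s : Set ℕ) {n : ℕ} (hn : n ∈ s) : (4 : ℤ) ^ n ∈ Aset s := by
  refine (mem_Aset s _).2 ⟨n + 1, (mem_AF_succ s n _).2 ⟨0, zero_mem_AF s n, cdig s n,
    Or.inr rfl, ?_⟩⟩
  simp [cdig, hn]

lemma two_four_pow_mem (s : Set ℕ) {n : ℕ} (hn : n ∉ s) : 2 * (4 : ℤ) ^ n ∈ Aset s := by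
  refine (mem_Aset s _).2 ⟨n + 1, (mem_AF_succ s n _).2 ⟨0, zero_mem_AF s n, cdig s n,
    Or.inr rfl, ?_⟩⟩
  simp [cdig, hn]

lemma neg_four_pow_mem (s : Set ℕ) {n : ℕ} (hn : n ∉ s) : -(4 : ℤ) ^ n ∈ Bset s := by
  refine (mem_Bset s _).2 ⟨n + 1, (mem_BF_succ s n _).2 ⟨0, zero_mem_BF s n, edig s n,
    Or.inr rfl, ?_⟩⟩
  simp [edig, cdig, hn]

lemma four_pow_notMem (s : Set ℕ) {n : ℕ} (hn : n ∉ s) : (4 : ℤ) ^ n ∉ Aset s := by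
  intro h
  have h1 := rep_unique s h (zero_mem_Bset s) (two_four_pow_mem s hn) (neg_four_pow_mem s hn)
    (by ring)
  have hP : (1 : ℤ) ≤ 4 ^ n := one_le_pow₀ (by norm_num)
  linarith [h1.1]
section ZdLevel

variable {d : ℕ}

/-- lift of `Aset` to `ℤ^d`: first coordinate in `Aset + 1`, others arbitrary. -/
noncomputable def AZ (hd : 0 < d) (s : Set ℕ) : Set (Zd d) :=
  { x | ∃ a ∈ Aset s, ofLex x ⟨0, hd⟩ = a + 1 }

/-- lift of `Bset` to `ℤ^d`: first coordinate in `Bset - 1`, others zero. -/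
noncomputable def BZ (hd : 0 < d) (s : Set ℕ) : Set (Zd d) :=
  { x | (∃ b ∈ Bset s, ofLex x ⟨0, hd⟩ = b - 1) ∧ ∀ i, i ≠ ⟨0, hd⟩ → ofLex x i = 0 }

/-- the vector with value `v` at the first coordinate and `0` elsewhere -/
noncomputable def unitvec (hd : 0 < d) (v : ℤ) : Zd d :=
  toLex (fun i => if i = ⟨0, hd⟩ then v else 0)

lemma unitvec_self (hd : 0 < d) (v : ℤ) : ofLex (unitvec hd v) ⟨0, hd⟩ = v := by
  simp [unitvec]

lemma unitvec_ne (hd : 0 < d) (v : ℤ) {i : Fin d} (hi : i ≠ ⟨0, hd⟩) :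
    ofLex (unitvec hd v) i = 0 := by
  simp [unitvec, hi]

lemma AZ_pos (hd : 0 < d) (s : Set ℕ) {x : Zd d} (hx : x ∈ AZ hd s) : (0 : Zd d) ≤ x := by
  obtain ⟨a, ha, hxa⟩ := hx
  have h0 : 0 < ofLex x ⟨0, hd⟩ := by
    have := Aset_nonneg s ha; omega
  have hlt : (0 : Zd d) < x := ⟨⟨0, hd⟩, fun j hj => absurd hj (by simp [Fin.lt_def]), h0⟩
  exact le_of_lt hlt

lemma BZ_neg (hd : 0 < d) (s : Set ℕ) {x : Zd d} (hx : x ∈ BZ hd s) : ¬ (0 : Zd d) ≤ x := by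
  obtain ⟨⟨b, hb, hxb⟩, _⟩ := hx
  have h0 : ofLex x ⟨0, hd⟩ < 0 := by
    have := Bset_nonpos s hb; omega
  have hlt : x < (0 : Zd d) := ⟨⟨0, hd⟩, fun j hj => absurd hj (by simp [Fin.lt_def]), h0⟩
  intro hge
  have hx0 : x = 0 := le_antisymm (le_of_lt hlt) hge
  rw [hx0] at h0
  exact absurd h0 (lt_irrefl 0)

lemma coord_add (x y : Zd d) (i : Fin d) : ofLex (x + y) i = ofLex x i + ofLex y i := rfl

lemma AZ_add_BZ (hd : 0 < d) (s : Set ℕ) : AZ hd s + BZ hd s = Set.univ := by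
  rw [Set.eq_univ_iff_forall]
  intro z
  obtain ⟨a, ha, b, hb, hab⟩ := rep_exists s (ofLex z ⟨0, hd⟩)
  rw [Set.mem_add]
  refine ⟨toLex (Function.update (ofLex z) ⟨0, hd⟩ (a + 1)), ⟨a, ha, by simp⟩,
    unitvec hd (b - 1), ⟨⟨b, hb, unitvec_self hd _⟩, fun i hi => unitvec_ne hd _ hi⟩, ?_⟩
  apply ofLex.injective
  funext i
  show Function.update (ofLex z) ⟨0, hd⟩ (a + 1) i + (if i = ⟨0, hd⟩ then b - 1 else 0)
      = ofLex z i
  by_cases hi : i = ⟨0, hd⟩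
  · subst hi
    rw [Function.update_self, if_pos rfl]
    omega
  · rw [Function.update_of_ne hi, if_neg hi, add_zero]

lemma AZ_min (hd : 0 < d) (s : Set ℕ) :
    ∀ a ∈ AZ hd s, (AZ hd s \ {a}) + BZ hd s ≠ Set.univ := by
  intro a ha h
  obtain ⟨α, hα, haα⟩ := ha
  have hv : a + unitvec hd (0 - 1) ∈ (AZ hd s \ {a}) + BZ hd s := by
    rw [h]; trivial
  rw [Set.mem_add] at hv
  obtain ⟨a', ⟨ha', hane⟩, b', ⟨⟨β', hβ', hb'β⟩, hb'0⟩, hsum⟩ := hv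
  obtain ⟨α', hα', ha'α⟩ := ha'
  have hcoord : ∀ i, ofLex a' i + ofLex b' i = ofLex a i + ofLex (unitvec hd (0 - 1)) i :=
    fun i => congrFun (congrArg ofLex hsum) i
  have h0 := hcoord ⟨0, hd⟩
  rw [ha'α, hb'β, haα, unitvec_self hd _] at h0
  have huniq := rep_unique s hα' hβ' hα (zero_mem_Bset s) (by omega)
  have haa : a' = a := by
    apply ofLex.injective
    funext i
    by_cases hi : i = ⟨0, hd⟩
    · subst hi
      rw [ha'α, haα, huniq.1]
    · have := hcoord i
      rw [hb'0 i hi, unitvec_ne hd _ hi] at this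
      omega
  exact hane (by simp [haa])

lemma BZ_min (hd : 0 < d) (s : Set ℕ) :
    ∀ b ∈ BZ hd s, AZ hd s + (BZ hd s \ {b}) ≠ Set.univ := by
  intro b hb h
  obtain ⟨⟨β, hβ, hbβ⟩, hb0⟩ := hb
  have hv : unitvec hd 1 + b ∈ AZ hd s + (BZ hd s \ {b}) := by
    rw [h]; trivial
  rw [Set.mem_add] at hv
  obtain ⟨a', ha', b', ⟨⟨⟨β', hβ', hb'β⟩, hb'0⟩, hbne⟩, hsum⟩ := hv
  obtain ⟨α', hα', ha'α⟩ := ha'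
  have hcoord : ∀ i, ofLex a' i + ofLex b' i = ofLex (unitvec hd 1) i + ofLex b i :=
    fun i => congrFun (congrArg ofLex hsum) i
  have h0 := hcoord ⟨0, hd⟩
  rw [ha'α, hb'β, hbβ, unitvec_self hd _] at h0
  have huniq := rep_unique s hα' hβ' (zero_mem_Aset s) hβ (by omega)
  have hbb : b' = b := by
    apply ofLex.injective
    funext i
    by_cases hi : i = ⟨0, hd⟩
    · subst hi
      rw [hb'β, hbβ, huniq.2]
    · rw [hb'0 i hi, hb0 i hi]
  exact hbne (by simp [hbb])

lemma AZ_sub (hd : 0 < d) {s s' : Set ℕ} (h : AZ hd s = AZ hd s') : s ⊆ s' := by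
  intro n hn
  by_contra hn'
  have hx : unitvec hd ((4 : ℤ) ^ n + 1) ∈ AZ hd s :=
    ⟨(4 : ℤ) ^ n, four_pow_mem s hn, unitvec_self hd _⟩
  rw [h] at hx
  obtain ⟨α', hα', hxα⟩ := hx
  rw [unitvec_self hd _] at hxα
  have : α' = (4 : ℤ) ^ n := by omega
  exact four_pow_notMem s' hn' (this ▸ hα')

lemma AZ_inj (hd : 0 < d) : Function.Injective (AZ (d := d) hd) := fun s s' h =>
  Set.Subset.antisymm (AZ_sub hd h) (AZ_sub hd h.symm)

end ZdLevel

end CoMin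

theorem stmt17 {d : ℕ} (hd : 0 < d) :
    ¬ {A : Set (Zd d) | A ⊆ {x : Zd d | (0 : Zd d) ≤ x} ∧
        ∃ B : Set (Zd d), B ⊆ {x : Zd d | ¬ (0 : Zd d) ≤ x} ∧
          IsCoMinimalPair A B}.Countable := by
  intro hcount
  set S := {A : Set (Zd d) | A ⊆ {x : Zd d | (0 : Zd d) ≤ x} ∧
        ∃ B : Set (Zd d), B ⊆ {x : Zd d | ¬ (0 : Zd d) ≤ x} ∧
          IsCoMinimalPair A B} with hS
  have hmem : ∀ s : Set ℕ, AZ hd s ∈ S := by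
    intro s
    refine ⟨fun x hx => AZ_pos hd s hx, BZ hd s, fun x hx => BZ_neg hd s hx,
      AZ_add_BZ hd s, AZ_min hd s, BZ_min hd s⟩
  haveI := hcount.to_subtype
  have hg : Function.Injective (fun s : Set ℕ => (⟨AZ hd s, hmem s⟩ : ↥S)) := by
    intro s s' h
    exact AZ_inj hd (congrArg Subtype.val h)
  have hcnt : Countable (Set ℕ) := hg.countable
  obtain ⟨f, hf⟩ := Countable.exists_injective_nat (Set ℕ)
  exact Function.cantor_injective f hf
end
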